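/- arXiv:1912.00259 — 11 statements merged into one kernel-verified Lean document; each statement's English description precedes it below -/
import Mathlib

section
/- Let n ≥ 1, let u : ℝⁿ → ℝ be a C² function, and let x ∈ ℝⁿ. Then the AMV Laplacian of u at x with respect to the Euclidean distance and the Lebesgue measure exists and equals Δu(x)/(2(n+2)), i.e. lim_{r→0⁺} (1/r²) ⨍_{B_r(x)} (u(y) − u(x)) dy = (1/(2(n+2))) Σ_{k=1}^n ∂_{kk} u(x). -/
open MeasureTheory Metric Filter Topology Real
open scoped ENNReal RealInnerProductSpace

variable {n : ℕ}

local notation "E" => EuclideanSpace ℝ (Fin n)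

lemma setIntegral_ball_comp_isometry (e : E ≃ₗᵢ[ℝ] E) (r : ℝ) (g : E → ℝ) :
    ∫ h in ball (0:E) r, g (e h) = ∫ h in ball (0:E) r, g h := by
  have h1 : (⇑e) ⁻¹' (ball (0:E) r) = ball 0 r := by
    ext h; simp [mem_ball_zero_iff, e.norm_map]
  have := e.measurePreserving.setIntegral_preimage_emb
    e.toHomeomorph.measurableEmbedding g (ball (0:E) r)
  rwa [h1] at this

/-- sign-flip isometry -/
noncomputable def signIso (s : Fin n → ℝ) (hs : ∀ k, s k * s k = 1) : E ≃ₗᵢ[ℝ] E where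
  toFun h := WithLp.toLp 2 (fun k => s k * h k)
  invFun h := WithLp.toLp 2 (fun k => s k * h k)
  map_add' h g := by ext k; exact mul_add _ _ _
  map_smul' c h := by ext k; exact mul_left_comm _ _ _
  left_inv h := by ext k; show s k * (s k * h k) = h k; rw [← mul_assoc, hs, one_mul]
  right_inv h := by ext k; show s k * (s k * h k) = h k; rw [← mul_assoc, hs, one_mul]
  norm_map' h := by
    rw [EuclideanSpace.norm_eq, EuclideanSpace.norm_eq]
    congr 1
    refine Finset.sum_congr rfl fun k _ => ?_
    show ‖s k * h k‖ ^ 2 = _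
    rw [norm_mul, mul_pow]
    have : ‖s k‖ ^ 2 = 1 := by rw [sq, ← norm_mul, hs]; simp
    rw [this, one_mul]

lemma signIso_apply (s : Fin n → ℝ) (hs : ∀ k, s k * s k = 1) (h : E) (k : Fin n) :
    signIso s hs h k = s k * h k := rfl

lemma integral_linear_ball (f : E →L[ℝ] ℝ) (r : ℝ) :
    ∫ h in ball (0:E) r, f h = 0 := by
  have h1 := setIntegral_ball_comp_isometry (LinearIsometryEquiv.neg ℝ : E ≃ₗᵢ[ℝ] E) r (fun h => f h)
  simp only [LinearIsometryEquiv.coe_neg, map_neg] at h1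
  rw [integral_neg] at h1
  linarith

lemma integral_coord_sq_eq (r : ℝ) (i j : Fin n) :
    ∫ h in ball (0:E) r, (h i)^2 = ∫ h in ball (0:E) r, (h j)^2 := by
  have h1 := setIntegral_ball_comp_isometry
    (LinearIsometryEquiv.piLpCongrLeft 2 ℝ ℝ (Equiv.swap i j)) r (fun h => (h i)^2)
  rw [← h1]
  refine setIntegral_congr_fun measurableSet_ball fun h _ => ?_
  simp only [LinearIsometryEquiv.piLpCongrLeft_apply, Equiv.piCongrLeft'_apply, Equiv.symm_swap]
  rw [Equiv.swap_apply_left]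

lemma integral_coord_mul_eq_zero (r : ℝ) {i j : Fin n} (hij : i ≠ j) :
    ∫ h in ball (0:E) r, (h i) * (h j) = 0 := by
  classical
  set s : Fin n → ℝ := fun k => if k = j then -1 else 1 with hsdef
  have hs : ∀ k, s k * s k = 1 := by intro k; by_cases h : k = j <;> simp [hsdef, h]
  have h1 := setIntegral_ball_comp_isometry (signIso s hs) r (fun h => (h i) * (h j))
  have h2 : ∀ h : E, ((signIso s hs h) i) * ((signIso s hs h) j) = -((h i) * (h j)) := by
    intro h
    rw [signIso_apply, signIso_apply]
    have hsi : s i = 1 := if_neg hij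
    have hsj : s j = -1 := if_pos rfl
    rw [hsi, hsj]; ring
  rw [setIntegral_congr_fun measurableSet_ball (fun h _ => h2 h)] at h1
  rw [integral_neg] at h1
  linarith

lemma integral_normsq_ball (hn : 0 < n) {r : ℝ} (hr : 0 < r) :
    ∫ h in ball (0:E) r, ‖h‖^2
      = (n : ℝ) * (volume (ball (0:E) 1)).toReal * (r^(n+2)/(n+2)) := by
  haveI : Nonempty (Fin n) := ⟨⟨0, hn⟩⟩
  haveI : Nontrivial E := by
    refine nontrivial_of_ne (EuclideanSpace.single ⟨0, hn⟩ (1:ℝ)) 0 fun h => ?_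
    have := congrArg norm h
    rw [EuclideanSpace.norm_single] at this
    simp at this
  have h1 : ∫ h in ball (0:E) r, ‖h‖^2
      = ∫ h : E, (Set.Iio r).indicator (fun t => t^2) ‖h‖ := by
    rw [← integral_indicator measurableSet_ball]
    congr 1; funext h
    by_cases hh : h ∈ ball (0:E) r
    · rw [Set.indicator_of_mem hh, Set.indicator_of_mem (by simpa [mem_ball_zero_iff] using hh)]
    · rw [Set.indicator_of_notMem hh,
        Set.indicator_of_notMem (by simpa [mem_ball_zero_iff] using hh)]
  rw [h1, integral_fun_norm_addHaar volume ((Set.Iio r).indicator (fun t => t^2))]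
  have h2 : ∫ y in Set.Ioi (0:ℝ), y ^ (Module.finrank ℝ E - 1) •
      (Set.Iio r).indicator (fun t => t^2) y = r^(n+2)/(n+2) := by
    rw [finrank_euclideanSpace_fin]
    have h3 : (fun y : ℝ => y ^ (n - 1) • (Set.Iio r).indicator (fun t => t^2) y)
        = (Set.Iio r).indicator (fun y => y ^ (n+1)) := by
      funext y
      by_cases hy : y ∈ Set.Iio r
      · rw [Set.indicator_of_mem hy, Set.indicator_of_mem hy, smul_eq_mul, ← pow_add]
        congr 1; omega
      · rw [Set.indicator_of_notMem hy, Set.indicator_of_notMem hy, smul_zero]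
    rw [h3, integral_indicator measurableSet_Iio,
      Measure.restrict_restrict measurableSet_Iio, Set.Iio_inter_Ioi,
      ← integral_Ioc_eq_integral_Ioo, ← intervalIntegral.integral_of_le hr.le,
      integral_pow]
    push_cast
    ring
  rw [h2, finrank_euclideanSpace_fin, nsmul_eq_mul, smul_eq_mul, measureReal_def]
  ring

lemma cont_coord (i : Fin n) : Continuous fun h : E => h i := by
  exact (EuclideanSpace.proj i).continuous

lemma cont_integrableOn_ball {g : E → ℝ} (hg : Continuous g) (c : E) (r : ℝ) :
    IntegrableOn g (ball c r) volume :=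
  (hg.continuousOn.integrableOn_compact (isCompact_closedBall c r)).mono_set
    ball_subset_closedBall

lemma normsq_eq_sum (h : E) : ‖h‖^2 = ∑ i, (h i)^2 := by
  rw [EuclideanSpace.norm_eq, Real.sq_sqrt (by positivity)]
  simp [sq_abs]


lemma euclidean_rep' (h : E) : h = ∑ i, h i • EuclideanSpace.single i (1:ℝ) := by
  classical
  have h1 := (EuclideanSpace.basisFun (Fin n) ℝ).sum_repr h
  simp only [EuclideanSpace.basisFun_apply, EuclideanSpace.basisFun_repr] at h1
  exact h1.symm

lemma integral_coord_sq (hn : 0 < n) {r : ℝ} (hr : 0 < r) (i : Fin n) :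
    ∫ h in ball (0:E) r, (h i)^2
      = (volume (ball (0:E) 1)).toReal * (r^(n+2)/(n+2)) := by
  have hint : ∀ j : Fin n, IntegrableOn (fun h : E => (h j)^2) (ball (0:E) r) volume :=
    fun j => cont_integrableOn_ball ((cont_coord j).pow 2) _ _
  have hsum : ∑ j : Fin n, ∫ h in ball (0:E) r, (h j)^2
      = ∫ h in ball (0:E) r, ‖h‖^2 := by
    rw [← integral_finset_sum _ fun j _ => hint j]
    exact setIntegral_congr_fun measurableSet_ball fun h _ => (normsq_eq_sum h).symm
  have hconst : ∀ j : Fin n, ∫ h in ball (0:E) r, (h j)^2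
      = ∫ h in ball (0:E) r, (h i)^2 := fun j => integral_coord_sq_eq r j i
  rw [Finset.sum_congr rfl (fun j _ => hconst j), Finset.sum_const, Finset.card_univ,
    Fintype.card_fin, integral_normsq_ball hn hr, nsmul_eq_mul] at hsum
  have hn' : (n : ℝ) ≠ 0 := Nat.cast_ne_zero.2 hn.ne'
  exact mul_left_cancel₀ hn' (hsum.trans (by ring))

lemma integral_bilinear_ball (hn : 0 < n) {r : ℝ} (hr : 0 < r)
    (B : E →L[ℝ] E →L[ℝ] ℝ) :
    ∫ h in ball (0:E) r, B h h
      = (∑ i, B (EuclideanSpace.single i 1) (EuclideanSpace.single i 1))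
          * ((volume (ball (0:E) 1)).toReal * (r^(n+2)/(n+2))) := by
  classical
  have hdecomp : ∀ h : E, B h h
      = ∑ i, ∑ j, (h i * h j) * B (EuclideanSpace.single i 1) (EuclideanSpace.single j 1) := by
    intro h
    conv_lhs => rw [euclidean_rep' h]
    simp only [map_sum, ContinuousLinearMap.sum_apply]
    rw [Finset.sum_comm]
    refine Finset.sum_congr rfl fun i _ => Finset.sum_congr rfl fun j _ => ?_
    simp only [ContinuousLinearMap.map_smul, ContinuousLinearMap.smul_apply, smul_eq_mul]
    ring
  rw [setIntegral_congr_fun measurableSet_ball (fun h _ => hdecomp h)]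
  have hint : ∀ (i j : Fin n), IntegrableOn
      (fun h : E => (h i * h j) * B (EuclideanSpace.single i 1) (EuclideanSpace.single j 1))
      (ball (0:E) r) volume :=
    fun i j => cont_integrableOn_ball (((cont_coord i).mul (cont_coord j)).mul
      continuous_const) _ _
  rw [integral_finset_sum _ fun i _ => (integrable_finset_sum _ fun j _ => hint i j)]
  have key : ∀ i : Fin n, ∫ h in ball (0:E) r,
      (∑ j, (h i * h j) * B (EuclideanSpace.single i 1) (EuclideanSpace.single j 1))
      = B (EuclideanSpace.single i 1) (EuclideanSpace.single i 1)
          * ((volume (ball (0:E) 1)).toReal * (r^(n+2)/(n+2))) := by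
    intro i
    rw [integral_finset_sum _ fun j _ => hint i j]
    rw [Finset.sum_eq_single i]
    · rw [integral_mul_const]
      have : ∫ h in ball (0:E) r, h i * h i = ∫ h in ball (0:E) r, (h i)^2 :=
        setIntegral_congr_fun measurableSet_ball fun h _ => (sq (h i)).symm
      rw [this, integral_coord_sq hn hr i]; ring
    · intro j _ hji
      rw [integral_mul_const, integral_coord_mul_eq_zero r (Ne.symm hji), zero_mul]
    · intro hi; exact absurd (Finset.mem_univ i) hi
  rw [Finset.sum_congr rfl fun i _ => key i, ← Finset.sum_mul]

lemma taylor_quadratic {V : Type*} [NormedAddCommGroup V] [NormedSpace ℝ V]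
    {u : V → ℝ} (hu : ContDiff ℝ 2 u) (x : V) :
    (fun h => u (x + h) - u x - fderiv ℝ u x h
        - (1/2) * fderiv ℝ (fderiv ℝ u) x h h) =o[𝓝 0] (fun h => ‖h‖^2) := by
  set f' := fderiv ℝ u with hf'
  set B := fderiv ℝ f' x with hB
  have hud : ∀ y, HasFDerivAt u (f' y) y :=
    fun y => (hu.differentiable (by norm_num) y).hasFDerivAt
  have hf'c : ContDiff ℝ 1 f' := hu.fderiv_right (by norm_num)
  have hf'd : HasFDerivAt f' B x := (hf'c.differentiable (by norm_num) x).hasFDerivAt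
  have hsymm : ∀ v w, B v w = B w v := second_derivative_symmetric hud hf'd
  set g := fun h => u (x + h) - u x - f' x h - (1/2) * B h h with hg
  have hg0 : g 0 = 0 := by simp [hg]
  have hgd : ∀ h, HasFDerivAt g (f' (x + h) - f' x - B h) h := by
    intro h
    have h1 : HasFDerivAt (fun h => u (x + h)) (f' (x + h)) h := by
      have := (hud (x + h)).comp h ((hasFDerivAt_id h).const_add x)
      simpa [Function.comp_def] using this
    have h2 : HasFDerivAt (fun h : V => (1/2 : ℝ) * B h h) (B h) h := by
      have hb := (ContinuousLinearMap.isBoundedBilinearMap B).hasFDerivAt (h, h)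
      have hdiag : HasFDerivAt (fun z : V => ((z, z) : V × V))
          ((ContinuousLinearMap.id ℝ V).prod (ContinuousLinearMap.id ℝ V)) h :=
        HasFDerivAt.prodMk (hasFDerivAt_id h) (hasFDerivAt_id h)
      have h3 := (hb.comp (f := fun z : V => ((z, z) : V × V)) h hdiag).const_mul (1/2 : ℝ)
      refine h3.congr_fderiv ?_
      ext k
      simp only [ContinuousLinearMap.smul_apply, ContinuousLinearMap.comp_apply,
        ContinuousLinearMap.prod_apply, ContinuousLinearMap.coe_id', id_eq,
        IsBoundedBilinearMap.deriv_apply, smul_eq_mul]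
      rw [hsymm k h]
      ring
    exact ((h1.sub_const (u x)).sub ((f' x).hasFDerivAt)).sub h2
  have hψ : (fun h => f' (x + h) - f' x - B h) =o[𝓝 0] (fun h : V => h) :=
    hasFDerivAt_iff_isLittleO_nhds_zero.1 hf'd
  rw [Asymptotics.isLittleO_iff]
  intro c hc
  have hev := (Asymptotics.isLittleO_iff.1 hψ) hc
  rw [Metric.eventually_nhds_iff] at hev ⊢
  obtain ⟨δ, hδ, hbound⟩ := hev
  refine ⟨δ, hδ, fun h hh => ?_⟩
  rw [dist_zero_right] at hh
  have hmv := Convex.norm_image_sub_le_of_norm_hasFDerivWithin_le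
    (f := g) (f' := fun z => f' (x + z) - f' x - B z) (s := closedBall (0:V) ‖h‖)
    (C := c * ‖h‖)
    (fun z _ => (hgd z).hasFDerivWithinAt)
    (fun z hz => by
      have hz' : ‖z‖ ≤ ‖h‖ := by simpa using hz
      have := hbound (y := z) (by rw [dist_zero_right]; exact lt_of_le_of_lt hz' hh)
      calc ‖f' (x + z) - f' x - B z‖ ≤ c * ‖z‖ := by simpa using this
        _ ≤ c * ‖h‖ := by nlinarith [norm_nonneg z, norm_nonneg h])
    (convex_closedBall _ _)
    (mem_closedBall_self (norm_nonneg h))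
    (mem_closedBall_zero_iff.2 le_rfl)
  rw [hg0, sub_zero, sub_zero] at hmv
  calc ‖g h‖ ≤ c * ‖h‖ * ‖h‖ := hmv
    _ = c * ‖(‖h‖^2)‖ := by rw [Real.norm_eq_abs, abs_of_nonneg (by positivity)]; ring

lemma volume_ball_toReal (hn : 0 < n) (c : E) {r : ℝ} (hr : 0 < r) :
    (volume (ball c r)).toReal = r^n * (volume (ball (0:E) 1)).toReal := by
  haveI : Nonempty (Fin n) := ⟨⟨0, hn⟩⟩
  haveI : Nontrivial E := by
    refine nontrivial_of_ne (EuclideanSpace.single ⟨0, hn⟩ (1:ℝ)) 0 fun h => ?_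
    have := congrArg norm h
    rw [EuclideanSpace.norm_single] at this
    simp at this
  rw [Measure.addHaar_ball volume c hr.le, ENNReal.toReal_mul,
    ENNReal.toReal_ofReal (by positivity), finrank_euclideanSpace_fin]

lemma err_tendsto (hn : 0 < n) {g : E → ℝ} (hgcont : Continuous g)
    (hlittle : g =o[𝓝 0] fun h : E => ‖h‖^2) {vol1 : ℝ}
    (hvol1 : vol1 = (volume (ball (0:E) 1)).toReal) (hvol1pos : 0 < vol1) :
    Tendsto (fun r : ℝ => (1/r^2) * (r^n * vol1)⁻¹ * ∫ h in ball (0:E) r, g h)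
      (𝓝[>] (0:ℝ)) (𝓝 0) := by
  rw [NormedAddCommGroup.tendsto_nhds_zero]
  intro ε hε
  have hev := Asymptotics.isLittleO_iff.1 hlittle (show (0:ℝ) < ε/2 by linarith)
  rw [Metric.eventually_nhds_iff] at hev
  obtain ⟨δ, hδ, hb⟩ := hev
  have hIoo : Set.Ioo (0:ℝ) δ ∈ 𝓝[>] (0:ℝ) := Ioo_mem_nhdsGT_of_mem ⟨le_refl 0, hδ⟩
  filter_upwards [hIoo] with r hr
  obtain ⟨hr0, hrδ⟩ := hr
  have hgb : ∀ h ∈ ball (0:E) r, ‖g h‖ ≤ (ε/2) * r^2 := by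
    intro h hh
    rw [mem_ball_zero_iff] at hh
    have h1 := hb (y := h) (by rw [dist_zero_right]; exact hh.trans hrδ)
    have h1' : ‖g h‖ ≤ ε/2 * ‖h‖^2 := by
      simpa [Real.norm_eq_abs, abs_pow, abs_norm] using h1
    have hh2 : ‖h‖^2 ≤ r^2 := by nlinarith [norm_nonneg h]
    nlinarith [norm_nonneg (g h)]
  have hI := norm_setIntegral_le_of_norm_le_const (μ := volume) (s := ball (0:E) r)
    measure_ball_lt_top hgb
  rw [measureReal_def, volume_ball_toReal hn 0 hr0, ← hvol1] at hI
  have hrn : (0:ℝ) < r^n := pow_pos hr0 _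
  have hfac : (0:ℝ) < (1/r^2) * (r^n * vol1)⁻¹ := by positivity
  calc ‖(1/r^2) * (r^n * vol1)⁻¹ * ∫ h in ball (0:E) r, g h‖
      = (1/r^2) * (r^n * vol1)⁻¹ * ‖∫ h in ball (0:E) r, g h‖ := by
        rw [norm_mul, Real.norm_eq_abs ((1/r^2) * (r^n * vol1)⁻¹), abs_of_nonneg hfac.le]
    _ ≤ (1/r^2) * (r^n * vol1)⁻¹ * ((ε/2) * r^2 * (r^n * vol1)) :=
        mul_le_mul_of_nonneg_left hI hfac.le
    _ = ε/2 := by field_simp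
    _ < ε := by linarith


/-- For a `C²` function `u : ℝⁿ → ℝ` (n ≥ 1) and any point `x`, the AMV
Laplacian of `u` at `x` w.r.t. the Euclidean distance and Lebesgue measure exists and equals
`Δu(x) / (2(n+2))`. -/
theorem amv_laplacian_eq_euclidean_laplacian
    (n : ℕ) (hn : 1 ≤ n) (u : EuclideanSpace ℝ (Fin n) → ℝ)
    (hu : ContDiff ℝ 2 u) (x : EuclideanSpace ℝ (Fin n)) :
    Filter.Tendsto
      (fun r : ℝ => (1 / r ^ 2) * ⨍ y in Metric.ball x r, (u y - u x) ∂volume)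
      (𝓝[>] (0 : ℝ))
      (𝓝 ((1 / (2 * ((n : ℝ) + 2))) *
        ∑ k : Fin n, fderiv ℝ (fun z => fderiv ℝ u z (EuclideanSpace.single k 1)) x
          (EuclideanSpace.single k 1))) := by
  have hn0 : 0 < n := hn
  obtain ⟨L, hLdef⟩ : ∃ L : EuclideanSpace ℝ (Fin n) →L[ℝ] ℝ, L = fderiv ℝ u x := ⟨_, rfl⟩
  obtain ⟨B, hBdef⟩ : ∃ B : EuclideanSpace ℝ (Fin n) →L[ℝ] EuclideanSpace ℝ (Fin n) →L[ℝ] ℝ, B = fderiv ℝ (fderiv ℝ u) x := ⟨_, rfl⟩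
  obtain ⟨S, hS⟩ : ∃ S : ℝ,
    S = ∑ i : Fin n, B (EuclideanSpace.single i 1) (EuclideanSpace.single i 1) := ⟨_, rfl⟩
  obtain ⟨vol1, hvol1⟩ : ∃ v : ℝ, v = (volume (ball (0:EuclideanSpace ℝ (Fin n)) 1)).toReal := ⟨_, rfl⟩
  have hvol1pos : 0 < vol1 := hvol1 ▸ ENNReal.toReal_pos
    (measure_ball_pos _ _ one_pos).ne' measure_ball_lt_top.ne
  -- identify the target sum
  have hf'd : HasFDerivAt (fderiv ℝ u) B x := by
    rw [hBdef]
    exact ((hu.fderiv_right (m := 1) (by norm_num)).differentiable (by norm_num) x).hasFDerivAt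
  have hk : ∀ v w : EuclideanSpace ℝ (Fin n), fderiv ℝ (fun z => fderiv ℝ u z v) x w = B w v := by
    intro v w
    have happ : HasFDerivAt (fun z => fderiv ℝ u z v)
        ((ContinuousLinearMap.apply ℝ ℝ v).comp B) x :=
      ((ContinuousLinearMap.apply ℝ ℝ v).hasFDerivAt).comp x hf'd
    rw [happ.fderiv]
    rfl
  have hgoalsum : ∑ k : Fin n, fderiv ℝ (fun z => fderiv ℝ u z (EuclideanSpace.single k 1)) x
      (EuclideanSpace.single k 1) = S := by
    rw [hS]; exact Finset.sum_congr rfl fun k _ => hk _ _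
  -- the remainder
  obtain ⟨g, hg⟩ : ∃ g : EuclideanSpace ℝ (Fin n) → ℝ, g = fun h => u (x + h) - u x - L h - (1/2) * B h h := ⟨_, rfl⟩
  have hlittle : g =o[𝓝 0] (fun h : EuclideanSpace ℝ (Fin n) => ‖h‖^2) := by
    rw [hg, hLdef, hBdef]
    exact taylor_quadratic hu x
  have hBcont : Continuous fun h : EuclideanSpace ℝ (Fin n) => B h h :=
    B.isBoundedBilinearMap.continuous.comp (continuous_id.prodMk continuous_id)
  have hgcont : Continuous g := by
    rw [hg]
    refine Continuous.sub (Continuous.sub (Continuous.sub ?_ continuous_const)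
      L.continuous) (continuous_const.mul hBcont)
    exact hu.continuous.comp (continuous_const.add continuous_id)
  -- translation
  have htrans : ∀ r : ℝ, ∫ y in ball x r, (u y - u x)
      = ∫ h in ball (0:EuclideanSpace ℝ (Fin n)) r, (u (x + h) - u x) := by
    intro r
    have hmp : MeasurePreserving (fun h : EuclideanSpace ℝ (Fin n) => x + h) volume volume :=
      measurePreserving_add_left volume x
    have hemb : MeasurableEmbedding (fun h : EuclideanSpace ℝ (Fin n) => x + h) :=
      (Homeomorph.addLeft x).measurableEmbedding
    have hpre : (fun h : EuclideanSpace ℝ (Fin n) => x + h) ⁻¹' (ball x r) = ball (0:EuclideanSpace ℝ (Fin n)) r := by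
      ext h
      simp [mem_ball, dist_eq_norm]
    have := hmp.setIntegral_preimage_emb hemb (fun y => u y - u x) (ball x r)
    rw [hpre] at this
    exact this.symm
  -- splitting the integral
  have hsplit : ∀ r : ℝ, 0 < r → ∫ h in ball (0:EuclideanSpace ℝ (Fin n)) r, (u (x + h) - u x)
      = (1/2) * (S * (vol1 * (r^(n+2)/(n+2)))) + ∫ h in ball (0:EuclideanSpace ℝ (Fin n)) r, g h := by
    intro r hr
    have h1 : ∀ h : EuclideanSpace ℝ (Fin n), u (x + h) - u x = L h + ((1/2) * B h h + g h) := by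
      intro h; rw [hg]; ring
    rw [setIntegral_congr_fun measurableSet_ball (fun h _ => h1 h)]
    have hi2 : IntegrableOn (fun h : EuclideanSpace ℝ (Fin n) => (1:ℝ)/2 * B h h)
        (ball (0:EuclideanSpace ℝ (Fin n)) r) volume :=
      cont_integrableOn_ball (continuous_const.mul hBcont) _ _
    have hi3 : IntegrableOn g (ball (0:EuclideanSpace ℝ (Fin n)) r) volume :=
      cont_integrableOn_ball hgcont _ _
    have hi23 : IntegrableOn (fun h : EuclideanSpace ℝ (Fin n) => (1:ℝ)/2 * B h h + g h)
        (ball (0:EuclideanSpace ℝ (Fin n)) r) volume := hi2.add hi3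
    rw [integral_add (cont_integrableOn_ball L.continuous _ _) hi23,
      integral_add hi2 hi3,
      integral_linear_ball L r, integral_const_mul, integral_bilinear_ball hn0 hr B]
    rw [← hS, ← hvol1]
    ring
  -- main formula for r > 0
  have hmain : ∀ r : ℝ, 0 < r →
      (1 / r ^ 2) * ⨍ y in ball x r, (u y - u x) ∂volume
        = S / (2*((n:ℝ)+2))
          + (1/r^2) * (r^n * vol1)⁻¹ * ∫ h in ball (0:EuclideanSpace ℝ (Fin n)) r, g h := by
    intro r hr
    rw [setAverage_eq, htrans r, hsplit r hr, smul_eq_mul,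
      measureReal_def, volume_ball_toReal hn0 x hr, ← hvol1, pow_add]
    have hr' : (r:ℝ) ≠ 0 := hr.ne'
    have hn2 : ((n:ℝ)+2) ≠ 0 := by positivity
    have hrn : r^n ≠ 0 := pow_ne_zero _ hr'
    have hv1 : vol1 ≠ 0 := hvol1pos.ne'
    field_simp
  -- error term tends to zero
  have herr := err_tendsto hn0 hgcont hlittle hvol1 hvol1pos
  -- conclusion
  have hlim := (tendsto_const_nhds (x := S / (2*((n:ℝ)+2)))
    (f := 𝓝[>] (0:ℝ))).add herr
  rw [add_zero] at hlim
  have hval : S / (2*((n:ℝ)+2)) = (1 / (2 * ((n : ℝ) + 2))) *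
      ∑ k : Fin n, fderiv ℝ (fun z => fderiv ℝ u z (EuclideanSpace.single k 1)) x
        (EuclideanSpace.single k 1) := by
    rw [hgoalsum]; ring
  rw [← hval]
  refine Tendsto.congr' ?_ hlim
  filter_upwards [self_mem_nhdsWithin] with r hr
  exact (hmain r hr).symm
end

section
/- In ℝ², let w(x,y) := (x+y)², u(x,y) := x² − 3xy + y², and μ := w·L². Then for every (x,y) ∈ ℝ² and every r > 0, the μ-average of u on the Euclidean ball B_r(x,y) equals u(x,y) + r⁴/(6(r² + 2(x+y)²)); equivalently, Δ_{μ,r} u(x,y) = r²/(6(r² + 2(x+y)²)). In particular w Δu + 2∇w·∇u = 0 everywhere but u does not satisfy the mean value property with respect to μ at any point. -/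
open MeasureTheory Metric Filter Topology Real
open scoped ENNReal RealInnerProductSpace

open Set InnerProductSpace
open scoped NNReal

noncomputable section


def Dset (r : ℝ) : Set (ℝ × ℝ) := {v | v.1 ^ 2 + v.2 ^ 2 < r ^ 2}

lemma Dset_measurable (r : ℝ) : MeasurableSet (Dset r) := by
  have : IsOpen (Dset r) := isOpen_lt (by fun_prop) continuous_const
  exact this.measurableSet

lemma integrableOn_Dset {g : ℝ × ℝ → ℝ} (hg : Continuous g) (r : ℝ) :
    IntegrableOn g (Dset r) volume := by
  have hK : IsCompact {v : ℝ × ℝ | v.1 ^ 2 + v.2 ^ 2 ≤ r ^ 2} := by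
    have hcl : IsClosed {v : ℝ × ℝ | v.1 ^ 2 + v.2 ^ 2 ≤ r ^ 2} :=
      isClosed_le (by fun_prop) continuous_const
    have hb : Bornology.IsBounded {v : ℝ × ℝ | v.1 ^ 2 + v.2 ^ 2 ≤ r ^ 2} := by
      apply (Metric.isBounded_closedBall (x := (0 : ℝ × ℝ)) (r := |r|)).subset
      intro v hv
      simp only [mem_setOf_eq] at hv
      have h1 : v.1 ^ 2 ≤ r ^ 2 := by nlinarith [sq_nonneg v.2]
      have h2 : v.2 ^ 2 ≤ r ^ 2 := by nlinarith [sq_nonneg v.1]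
      have h1' : |v.1| ≤ |r| := by
        rw [← Real.sqrt_sq_eq_abs, ← Real.sqrt_sq_eq_abs]; exact Real.sqrt_le_sqrt h1
      have h2' : |v.2| ≤ |r| := by
        rw [← Real.sqrt_sq_eq_abs, ← Real.sqrt_sq_eq_abs]; exact Real.sqrt_le_sqrt h2
      simp only [Metric.mem_closedBall, dist_zero_right, Prod.norm_def, Real.norm_eq_abs,
        max_le_iff]
      exact ⟨h1', h2'⟩
    exact Metric.isCompact_of_isClosed_isBounded hcl hb
  exact (hg.continuousOn.integrableOn_compact hK).mono_set (fun v hv => by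
    simp only [Dset, mem_setOf_eq] at hv ⊢; exact le_of_lt hv)

lemma integrableOn_rect {F : ℝ × ℝ → ℝ} (hF : Continuous F) (r : ℝ) :
    IntegrableOn F (Ioo (0:ℝ) r ×ˢ Ioo (-π) π) volume := by
  have hK : IsCompact (Set.Icc (0:ℝ) r ×ˢ Set.Icc (-π) π) :=
    (isCompact_Icc).prod isCompact_Icc
  exact (hF.continuousOn.integrableOn_compact hK).mono_set
    (Set.prod_mono Set.Ioo_subset_Icc_self Set.Ioo_subset_Icc_self)

lemma polar_Dset {g : ℝ × ℝ → ℝ} (hg : Continuous g) {r : ℝ} (hr : 0 < r) :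
    ∫ z in Dset r, g z =
      ∫ ρ in Ioo (0:ℝ) r, ∫ θ in Ioo (-π) π, ρ * g (ρ * cos θ, ρ * sin θ) := by
  have h1 : ∫ z in Dset r, g z = ∫ z, (Dset r).indicator g z := by
    rw [integral_indicator (Dset_measurable r)]
  rw [h1, ← integral_comp_polarCoord_symm]
  have h2 : ∀ p ∈ polarCoord.target,
      p.1 • (Dset r).indicator g (polarCoord.symm p) =
      (Ioo (0:ℝ) r ×ˢ Ioo (-π) π).indicator
        (fun p : ℝ × ℝ => p.1 * g (p.1 * cos p.2, p.1 * sin p.2)) p := by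
    rintro ⟨ρ, θ⟩ hp
    rw [polarCoord_target] at hp
    obtain ⟨hρ, hθ⟩ := hp
    simp only [mem_Ioi] at hρ
    have hsymm : polarCoord.symm (ρ, θ) = (ρ * cos θ, ρ * sin θ) := rfl
    have hmem : ((ρ * cos θ, ρ * sin θ) : ℝ × ℝ) ∈ Dset r ↔ ρ < r := by
      simp only [Dset, mem_setOf_eq]
      have key : (ρ * cos θ) ^ 2 + (ρ * sin θ) ^ 2 = ρ ^ 2 := by
        have h := sin_sq_add_cos_sq θ; nlinarith [h]
      rw [key]
      constructor
      · intro h; nlinarith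
      · intro h; nlinarith
    rw [hsymm]
    by_cases hcase : ρ < r
    · rw [indicator_of_mem (hmem.mpr hcase), indicator_of_mem (by exact ⟨⟨hρ, hcase⟩, hθ⟩)]
      simp [smul_eq_mul]
    · rw [indicator_of_notMem (fun h => hcase (hmem.mp h)), indicator_of_notMem (by
        rintro ⟨⟨_, h2⟩, _⟩; exact hcase h2)]
      simp
  have htm : MeasurableSet polarCoord.target := by
    rw [polarCoord_target]; exact measurableSet_Ioi.prod measurableSet_Ioo
  rw [setIntegral_congr_fun htm h2]
  rw [setIntegral_indicator (measurableSet_Ioo.prod measurableSet_Ioo)]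
  have hsub : (Ioo (0:ℝ) r ×ˢ Ioo (-π) π) ⊆ polarCoord.target := by
    rw [polarCoord_target]
    exact Set.prod_mono Set.Ioo_subset_Ioi_self (fun x hx => hx)
  rw [Set.inter_eq_self_of_subset_right hsub]
  exact setIntegral_prod _ (integrableOn_rect (by fun_prop) r)


lemma moment (i j : ℕ) {r : ℝ} (hr : 0 < r) :
    ∫ z in Dset r, z.1 ^ i * z.2 ^ j =
      (r ^ (i + j + 2) / (i + j + 2)) * ∫ θ in (-π)..π, cos θ ^ i * sin θ ^ j := by
  rw [polar_Dset (by fun_prop) hr]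
  have h1 : ∀ ρ : ℝ, (∫ θ in Ioo (-π) π, ρ * ((ρ * cos θ, ρ * sin θ).1 ^ i *
      (ρ * cos θ, ρ * sin θ).2 ^ j))
      = ρ ^ (i + j + 1) * ∫ θ in (-π)..π, cos θ ^ i * sin θ ^ j := by
    intro ρ
    rw [intervalIntegral.integral_of_le (by linarith [pi_pos]),
      ← integral_Ioc_eq_integral_Ioo, ← integral_const_mul]
    congr 1
    funext θ
    show ρ * ((ρ * cos θ) ^ i * (ρ * sin θ) ^ j) = _
    rw [mul_pow, mul_pow]
    ring
  simp only [h1]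
  rw [integral_mul_const]
  congr 1
  rw [← integral_Ioc_eq_integral_Ioo, ← intervalIntegral.integral_of_le hr.le, integral_pow,
    zero_pow (by omega)]
  push_cast
  ring_nf

lemma sin_pi_mul_four : sin (π * 4) = 0 := by
  have := Real.sin_nat_mul_pi 4
  norm_num at this
  rw [mul_comm]
  exact this

lemma T00 : (∫ θ in (-π)..π, cos θ ^ 0 * sin θ ^ 0) = 2 * π := by norm_num; ring
lemma T10 : (∫ θ in (-π)..π, cos θ ^ 1 * sin θ ^ 0) = 0 := by norm_num
lemma T01 : (∫ θ in (-π)..π, cos θ ^ 0 * sin θ ^ 1) = 0 := by norm_num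
lemma T20 : (∫ θ in (-π)..π, cos θ ^ 2 * sin θ ^ 0) = π := by norm_num
lemma T11 : (∫ θ in (-π)..π, cos θ ^ 1 * sin θ ^ 1) = 0 := by
  simp_rw [pow_one, mul_comm (cos _) (sin _)]; norm_num
lemma T02 : (∫ θ in (-π)..π, cos θ ^ 0 * sin θ ^ 2) = π := by norm_num
lemma T30 : (∫ θ in (-π)..π, cos θ ^ 3 * sin θ ^ 0) = 0 := by norm_num
lemma T21 : (∫ θ in (-π)..π, cos θ ^ 2 * sin θ ^ 1) = 0 := by
  simp_rw [pow_one, mul_comm (cos _ ^ 2) (sin _)]; norm_num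
lemma T12 : (∫ θ in (-π)..π, cos θ ^ 1 * sin θ ^ 2) = 0 := by
  simp_rw [pow_one, mul_comm (cos _) (sin _ ^ 2)]; norm_num
lemma T03 : (∫ θ in (-π)..π, cos θ ^ 0 * sin θ ^ 3) = 0 := by norm_num
lemma T40 : (∫ θ in (-π)..π, cos θ ^ 4 * sin θ ^ 0) = 3 * π / 4 := by
  simp only [pow_zero, mul_one]
  rw [show (4:ℕ) = 2 + 2 from rfl, integral_cos_pow]
  norm_num
  ring
lemma T31 : (∫ θ in (-π)..π, cos θ ^ 3 * sin θ ^ 1) = 0 := by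
  simp_rw [show ∀ θ:ℝ, cos θ ^ 3 * sin θ ^ 1 = sin θ ^ 1 * cos θ ^ (2*1+1) from fun θ => by ring]
  rw [integral_sin_pow_mul_cos_pow_odd]
  simp
lemma T22 : (∫ θ in (-π)..π, cos θ ^ 2 * sin θ ^ 2) = π / 4 := by
  simp_rw [mul_comm (cos _ ^ 2) (sin _ ^ 2)]
  norm_num [sin_pi_mul_four]
  ring_nf
  simp [sin_pi_mul_four, mul_comm]
lemma T13 : (∫ θ in (-π)..π, cos θ ^ 1 * sin θ ^ 3) = 0 := by
  simp_rw [show ∀ θ:ℝ, cos θ ^ 1 * sin θ ^ 3 = sin θ ^ (2*1+1) * cos θ ^ 1 from fun θ => by ring]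
  rw [integral_sin_pow_odd_mul_cos_pow]
  simp
lemma T04 : (∫ θ in (-π)..π, cos θ ^ 0 * sin θ ^ 4) = 3 * π / 4 := by
  simp only [pow_zero, one_mul]
  rw [show (4:ℕ) = 2 + 2 from rfl, integral_sin_pow]
  norm_num
  ring

lemma master {r : ℝ} (hr : 0 < r) (a00 a10 a01 a20 a11 a02 a30 a21 a12 a03 a40 a31 a22 a13 a04 : ℝ) :
    (∫ z in Dset r, (a00 * (z.1 ^ 0 * z.2 ^ 0) + a10 * (z.1 ^ 1 * z.2 ^ 0) + a01 * (z.1 ^ 0 * z.2 ^ 1) + a20 * (z.1 ^ 2 * z.2 ^ 0) + a11 * (z.1 ^ 1 * z.2 ^ 1) + a02 * (z.1 ^ 0 * z.2 ^ 2) + a30 * (z.1 ^ 3 * z.2 ^ 0) + a21 * (z.1 ^ 2 * z.2 ^ 1) + a12 * (z.1 ^ 1 * z.2 ^ 2) + a03 * (z.1 ^ 0 * z.2 ^ 3) + a40 * (z.1 ^ 4 * z.2 ^ 0) + a31 * (z.1 ^ 3 * z.2 ^ 1) + a22 * (z.1 ^ 2 * z.2 ^ 2) + a13 * (z.1 ^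 1 * z.2 ^ 3) + a04 * (z.1 ^ 0 * z.2 ^ 4))) =
      a00 * (π * r ^ 2) + (a20 + a02) * (π * r ^ 4 / 4) + (a40 + a04) * (π * r ^ 6 / 8)
        + a22 * (π * r ^ 6 / 24) := by
  have key : ∀ (c : ℝ) (i j : ℕ), Integrable (fun z : ℝ × ℝ => c * (z.1 ^ i * z.2 ^ j))
      (volume.restrict (Dset r)) := fun c i j => integrableOn_Dset (by fun_prop) r
  have S0 : Integrable (fun z : ℝ × ℝ => a00 * (z.1 ^ 0 * z.2 ^ 0)) (volume.restrict (Dset r)) := key a00 0 0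
  have S1 : Integrable (fun z : ℝ × ℝ => a00 * (z.1 ^ 0 * z.2 ^ 0) + a10 * (z.1 ^ 1 * z.2 ^ 0)) (volume.restrict (Dset r)) := S0.add (key a10 1 0)
  have S2 : Integrable (fun z : ℝ × ℝ => a00 * (z.1 ^ 0 * z.2 ^ 0) + a10 * (z.1 ^ 1 * z.2 ^ 0) + a01 * (z.1 ^ 0 * z.2 ^ 1)) (volume.restrict (Dset r)) := S1.add (key a01 0 1)
  have S3 : Integrable (fun z : ℝ × ℝ => a00 * (z.1 ^ 0 * z.2 ^ 0) + a10 * (z.1 ^ 1 * z.2 ^ 0) + a01 * (z.1 ^ 0 * z.2 ^ 1) + a20 * (z.1 ^ 2 * z.2 ^ 0)) (volume.restrict (Dset r)) := S2.add (key a20 2 0)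
  have S4 : Integrable (fun z : ℝ × ℝ => a00 * (z.1 ^ 0 * z.2 ^ 0) + a10 * (z.1 ^ 1 * z.2 ^ 0) + a01 * (z.1 ^ 0 * z.2 ^ 1) + a20 * (z.1 ^ 2 * z.2 ^ 0) + a11 * (z.1 ^ 1 * z.2 ^ 1)) (volume.restrict (Dset r)) := S3.add (key a11 1 1)
  have S5 : Integrable (fun z : ℝ × ℝ => a00 * (z.1 ^ 0 * z.2 ^ 0) + a10 * (z.1 ^ 1 * z.2 ^ 0) + a01 * (z.1 ^ 0 * z.2 ^ 1) + a20 * (z.1 ^ 2 * z.2 ^ 0) + a11 * (z.1 ^ 1 * z.2 ^ 1) + a02 * (z.1 ^ 0 * z.2 ^ 2)) (volume.restrict (Dset r)) := S4.add (key a02 0 2)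
  have S6 : Integrable (fun z : ℝ × ℝ => a00 * (z.1 ^ 0 * z.2 ^ 0) + a10 * (z.1 ^ 1 * z.2 ^ 0) + a01 * (z.1 ^ 0 * z.2 ^ 1) + a20 * (z.1 ^ 2 * z.2 ^ 0) + a11 * (z.1 ^ 1 * z.2 ^ 1) + a02 * (z.1 ^ 0 * z.2 ^ 2) + a30 * (z.1 ^ 3 * z.2 ^ 0)) (volume.restrict (Dset r)) := S5.add (key a30 3 0)
  have S7 : Integrable (fun z : ℝ × ℝ => a00 * (z.1 ^ 0 * z.2 ^ 0) + a10 * (z.1 ^ 1 * z.2 ^ 0) + a01 * (z.1 ^ 0 * z.2 ^ 1) + a20 * (z.1 ^ 2 * z.2 ^ 0) + a11 * (z.1 ^ 1 * z.2 ^ 1) + a02 * (z.1 ^ 0 * z.2 ^ 2) + a30 * (z.1 ^ 3 * z.2 ^ 0) + a21 * (z.1 ^ 2 * z.2 ^ 1)) (volume.restrict (Dset r)) := S6.add (key a21 2 1)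
  have S8 : Integrable (fun z : ℝ × ℝ => a00 * (z.1 ^ 0 * z.2 ^ 0) + a10 * (z.1 ^ 1 * z.2 ^ 0) + a01 * (z.1 ^ 0 * z.2 ^ 1) + a20 * (z.1 ^ 2 * z.2 ^ 0) + a11 * (z.1 ^ 1 * z.2 ^ 1) + a02 * (z.1 ^ 0 * z.2 ^ 2) + a30 * (z.1 ^ 3 * z.2 ^ 0) + a21 * (z.1 ^ 2 * z.2 ^ 1) + a12 * (z.1 ^ 1 * z.2 ^ 2)) (volume.restrict (Dset r)) := S7.add (key a12 1 2)
  have S9 : Integrable (fun z : ℝ × ℝ => a00 * (z.1 ^ 0 * z.2 ^ 0) + a10 * (z.1 ^ 1 * z.2 ^ 0) + a01 * (z.1 ^ 0 * z.2 ^ 1) + a20 * (z.1 ^ 2 * z.2 ^ 0) + a11 * (z.1 ^ 1 * z.2 ^ 1) + a02 * (z.1 ^ 0 * z.2 ^ 2) + a30 * (z.1 ^ 3 * z.2 ^ 0) + a21 * (z.1 ^ 2 * z.2 ^ 1) + a12 * (z.1 ^ 1 * z.2 ^ 2) + a03 * (z.1 ^ 0 * z.2 ^ 3)) (volume.restrict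 (Dset r)) := S8.add (key a03 0 3)
  have S10 : Integrable (fun z : ℝ × ℝ => a00 * (z.1 ^ 0 * z.2 ^ 0) + a10 * (z.1 ^ 1 * z.2 ^ 0) + a01 * (z.1 ^ 0 * z.2 ^ 1) + a20 * (z.1 ^ 2 * z.2 ^ 0) + a11 * (z.1 ^ 1 * z.2 ^ 1) + a02 * (z.1 ^ 0 * z.2 ^ 2) + a30 * (z.1 ^ 3 * z.2 ^ 0) + a21 * (z.1 ^ 2 * z.2 ^ 1) + a12 * (z.1 ^ 1 * z.2 ^ 2) + a03 * (z.1 ^ 0 * z.2 ^ 3) + a40 * (z.1 ^ 4 * z.2 ^ 0)) (volume.restrict (Dset r)) := S9.add (key a40 4 0)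
  have S11 : Integrable (fun z : ℝ × ℝ => a00 * (z.1 ^ 0 * z.2 ^ 0) + a10 * (z.1 ^ 1 * z.2 ^ 0) + a01 * (z.1 ^ 0 * z.2 ^ 1) + a20 * (z.1 ^ 2 * z.2 ^ 0) + a11 * (z.1 ^ 1 * z.2 ^ 1) + a02 * (z.1 ^ 0 * z.2 ^ 2) + a30 * (z.1 ^ 3 * z.2 ^ 0) + a21 * (z.1 ^ 2 * z.2 ^ 1) + a12 * (z.1 ^ 1 * z.2 ^ 2) + a03 * (z.1 ^ 0 * z.2 ^ 3) + a40 * (z.1 ^ 4 * z.2 ^ 0) + a31 * (z.1 ^ 3 * z.2 ^ 1)) (volume.restrict (Dset r)) := S10.add (key a31 3 1)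
  have S12 : Integrable (fun z : ℝ × ℝ => a00 * (z.1 ^ 0 * z.2 ^ 0) + a10 * (z.1 ^ 1 * z.2 ^ 0) + a01 * (z.1 ^ 0 * z.2 ^ 1) + a20 * (z.1 ^ 2 * z.2 ^ 0) + a11 * (z.1 ^ 1 * z.2 ^ 1) + a02 * (z.1 ^ 0 * z.2 ^ 2) + a30 * (z.1 ^ 3 * z.2 ^ 0) + a21 * (z.1 ^ 2 * z.2 ^ 1) + a12 * (z.1 ^ 1 * z.2 ^ 2) + a03 * (z.1 ^ 0 * z.2 ^ 3) + a40 * (z.1 ^ 4 * z.2 ^ 0) + a31 * (z.1 ^ 3 * z.2 ^ 1) + a22 * (z.1 ^ 2 * z.2 ^ 2)) (volume.restrict (Dset r)) := S11.add (key a22 2 2)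
  have S13 : Integrable (fun z : ℝ × ℝ => a00 * (z.1 ^ 0 * z.2 ^ 0) + a10 * (z.1 ^ 1 * z.2 ^ 0) + a01 * (z.1 ^ 0 * z.2 ^ 1) + a20 * (z.1 ^ 2 * z.2 ^ 0) + a11 * (z.1 ^ 1 * z.2 ^ 1) + a02 * (z.1 ^ 0 * z.2 ^ 2) + a30 * (z.1 ^ 3 * z.2 ^ 0) + a21 * (z.1 ^ 2 * z.2 ^ 1) + a12 * (z.1 ^ 1 * z.2 ^ 2) + a03 * (z.1 ^ 0 * z.2 ^ 3) + a40 * (z.1 ^ 4 * z.2 ^ 0) + a31 * (z.1 ^ 3 * z.2 ^ 1) + a22 * (z.1 ^ 2 * z.2 ^ 2) + a13 * (z.1 ^ 1 * z.2 ^ 3)) (volume.restrict (Dset r)) := S12.add (key a13 1 3)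
  rw [integral_add S13 (key a04 0 4),
    integral_add S12 (key a13 1 3),
    integral_add S11 (key a22 2 2),
    integral_add S10 (key a31 3 1),
    integral_add S9 (key a40 4 0),
    integral_add S8 (key a03 0 3),
    integral_add S7 (key a12 1 2),
    integral_add S6 (key a21 2 1),
    integral_add S5 (key a30 3 0),
    integral_add S4 (key a02 0 2),
    integral_add S3 (key a11 1 1),
    integral_add S2 (key a20 2 0),
    integral_add S1 (key a01 0 1),
    integral_add S0 (key a10 1 0)]
  simp only [integral_const_mul]
  rw [moment 0 0 hr, moment 1 0 hr, moment 0 1 hr, moment 2 0 hr, moment 1 1 hr, moment 0 2 hr, moment 3 0 hr, moment 2 1 hr, moment 1 2 hr, moment 0 3 hr, moment 4 0 hr, moment 3 1 hr, moment 2 2 hr, moment 1 3 hr, moment 0 4 hr]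
  rw [T00, T10, T01, T20, T11, T02, T30, T21, T12, T03, T40, T31, T22, T13, T04]
  push_cast
  ring


abbrev E2 := EuclideanSpace ℝ (Fin 2)

def Tmap : ℝ × ℝ ≃ᵐ E2 :=
  (MeasurableEquiv.finTwoArrow (α := ℝ)).symm.trans
    (MeasurableEquiv.toLp 2 (Fin 2 → ℝ))

lemma Tmap_apply_zero (v : ℝ × ℝ) : Tmap v 0 = v.1 := by
  simp [Tmap, MeasurableEquiv.coe_toLp]
lemma Tmap_apply_one (v : ℝ × ℝ) : Tmap v 1 = v.2 := by
  simp [Tmap, MeasurableEquiv.coe_toLp]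

lemma Tmap_mp : MeasurePreserving (⇑Tmap) volume volume := by
  have h : ⇑Tmap = ⇑(MeasurableEquiv.toLp 2 (Fin 2 → ℝ)) ∘
      ⇑(MeasurableEquiv.finTwoArrow (α := ℝ)).symm := rfl
  rw [h]
  exact ((EuclideanSpace.volume_preserving_symm_measurableEquiv_toLp (Fin 2)).symm).comp
    ((volume_preserving_finTwoArrow ℝ).symm)

lemma ball_to_Dset (p : E2) {r : ℝ} (hr : 0 < r) (f : E2 → ℝ) :
    ∫ y in ball p r, f y = ∫ z in Dset r, f (Tmap (p 0 + z.1, p 1 + z.2)) := by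
  rw [← Tmap_mp.setIntegral_preimage_emb Tmap.measurableEmbedding f (ball p r)]
  have hpre : Tmap ⁻¹' ball p r = {v : ℝ × ℝ | (v.1 - p 0) ^ 2 + (v.2 - p 1) ^ 2 < r ^ 2} := by
    ext v
    simp only [mem_preimage, mem_ball, Set.mem_setOf_eq, EuclideanSpace.dist_eq,
      Fin.sum_univ_two, Tmap_apply_zero, Tmap_apply_one, Real.dist_eq, sq_abs]
    exact Real.sqrt_lt' hr
  rw [hpre]
  have hshift := (measurePreserving_add_left (volume : Measure (ℝ × ℝ))
    ((p 0, p 1) : ℝ × ℝ)).setIntegral_preimage_emb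
    (MeasurableEquiv.addLeft ((p 0, p 1) : ℝ × ℝ)).measurableEmbedding
    (fun v => f (Tmap v)) {v : ℝ × ℝ | (v.1 - p 0) ^ 2 + (v.2 - p 1) ^ 2 < r ^ 2}
  have hpre2 : (fun v : ℝ × ℝ => (p 0, p 1) + v) ⁻¹'
      {v : ℝ × ℝ | (v.1 - p 0) ^ 2 + (v.2 - p 1) ^ 2 < r ^ 2} = Dset r := by
    ext z
    simp only [mem_preimage, Set.mem_setOf_eq, Prod.fst_add, Prod.snd_add, Dset]
    constructor
    · intro h; convert h using 2 <;> ring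
    · intro h; convert h using 2 <;> ring
  rw [hpre2] at hshift
  rw [← hshift]
  rfl


lemma intW (p : E2) {r : ℝ} (hr : 0 < r) :
    ∫ y in ball p r, (y 0 + y 1) ^ 2 = π * r ^ 2 * (p 0 + p 1) ^ 2 + π * r ^ 4 / 2 := by
  rw [ball_to_Dset p hr (fun y => (y 0 + y 1) ^ 2)]
  have hfun : ∀ z : ℝ × ℝ,
      (Tmap (p 0 + z.1, p 1 + z.2) 0 + Tmap (p 0 + z.1, p 1 + z.2) 1) ^ 2
      = (p 1 ^ 2 + 2 * (p 0) * (p 1) + p 0 ^ 2) * (z.1 ^ 0 * z.2 ^ 0) + (2 * p 1 + 2 * p 0) * (z.1 ^ 1 * z.2 ^ 0) + (2 * p 1 + 2 * p 0) * (z.1 ^ 0 * z.2 ^ 1) + (1:ℝ) * (z.1 ^ 2 * z.2 ^ 0) + (2:ℝ) * (z.1 ^ 1 * z.2 ^ 1) + (1:ℝ) * (z.1 ^ 0 * z.2 ^ 2) + (0:ℝ) * (z.1 ^ 3 * z.2 ^ 0) + (0:ℝ) * (z.1 ^ 2 * z.2 ^ 1) + (0:ℝ) * (z.1 ^ 1 *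 z.2 ^ 2) + (0:ℝ) * (z.1 ^ 0 * z.2 ^ 3) + (0:ℝ) * (z.1 ^ 4 * z.2 ^ 0) + (0:ℝ) * (z.1 ^ 3 * z.2 ^ 1) + (0:ℝ) * (z.1 ^ 2 * z.2 ^ 2) + (0:ℝ) * (z.1 ^ 1 * z.2 ^ 3) + (0:ℝ) * (z.1 ^ 0 * z.2 ^ 4) := by
    intro z
    rw [Tmap_apply_zero, Tmap_apply_one]
    ring
  simp only [hfun]
  rw [master hr]
  ring

lemma intUW (p : E2) {r : ℝ} (hr : 0 < r) :
    ∫ y in ball p r, ((y 0) ^ 2 - 3 * (y 0) * (y 1) + (y 1) ^ 2) * (y 0 + y 1) ^ 2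
      = ((p 0) ^ 2 - 3 * (p 0) * (p 1) + (p 1) ^ 2) * (π * r ^ 2 * (p 0 + p 1) ^ 2 + π * r ^ 4 / 2)
        + π * r ^ 6 / 12 := by
  rw [ball_to_Dset p hr (fun y => ((y 0) ^ 2 - 3 * (y 0) * (y 1) + (y 1) ^ 2) * (y 0 + y 1) ^ 2)]
  have hfun : ∀ z : ℝ × ℝ,
      ((Tmap (p 0 + z.1, p 1 + z.2) 0) ^ 2
        - 3 * (Tmap (p 0 + z.1, p 1 + z.2) 0) * (Tmap (p 0 + z.1, p 1 + z.2) 1)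
        + (Tmap (p 0 + z.1, p 1 + z.2) 1) ^ 2)
        * (Tmap (p 0 + z.1, p 1 + z.2) 0 + Tmap (p 0 + z.1, p 1 + z.2) 1) ^ 2
      = (p 1 ^ 4 - p 0 * p 1 ^ 3 - 4 * p 0 ^ 2 * p 1 ^ 2 - p 0 ^ 3 * p 1 + p 0 ^ 4) * (z.1 ^ 0 * z.2 ^ 0) + (-(p 1 ^ 3) - 8 * p 0 * p 1 ^ 2 - 3 * p 0 ^ 2 * p 1 + 4 * p 0 ^ 3) * (z.1 ^ 1 * z.2 ^ 0) + (4 * p 1 ^ 3 - 3 * p 0 * p 1 ^ 2 - 8 * p 0 ^ 2 * p 1 - p 0 ^ 3) * (z.1 ^ 0 * z.2 ^ 1) + (-4 * p 1 ^ 2 - 3 * p 0 * p 1 + 6 * p 0 ^ 2) * (z.1 ^ 2 * z.2 ^ 0) + (-3 * p 1 ^ 2 - 16 * p 0 * p 1 - 3 * p 0 ^ 2) * (z.1 ^ 1 * z.2 ^ 1) + (6 * p 1 ^ 2 - 3 * p 0 * p 1 - 4 * p 0 ^ 2) * (z.1 ^ 0 * z.2 ^ 2) + (-(p 1) + 4 *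 p 0) * (z.1 ^ 3 * z.2 ^ 0) + (-8 * p 1 - 3 * p 0) * (z.1 ^ 2 * z.2 ^ 1) + (-3 * p 1 - 8 * p 0) * (z.1 ^ 1 * z.2 ^ 2) + (4 * p 1 - p 0) * (z.1 ^ 0 * z.2 ^ 3) + (1:ℝ) * (z.1 ^ 4 * z.2 ^ 0) + (-1:ℝ) * (z.1 ^ 3 * z.2 ^ 1) + (-4:ℝ) * (z.1 ^ 2 * z.2 ^ 2) + (-1:ℝ) * (z.1 ^ 1 * z.2 ^ 3) + (1:ℝ) * (z.1 ^ 0 * z.2 ^ 4) := by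
    intro z
    rw [Tmap_apply_zero, Tmap_apply_one]
    ring
  simp only [hfun]
  rw [master hr]
  ring


lemma integrableOn_ball2 {f : E2 → ℝ} (hf : Continuous f) (p : E2) (r : ℝ) :
    IntegrableOn f (ball p r) volume :=
  (hf.continuousOn.integrableOn_compact (isCompact_closedBall p r)).mono_set
    ball_subset_closedBall

lemma Wpos (p : E2) {r : ℝ} (hr : 0 < r) :
    0 < π * r ^ 2 * (p 0 + p 1) ^ 2 + π * r ^ 4 / 2 := by
  have := pi_pos
  positivity

lemma measure_ball2 (p : E2) {r : ℝ} (hr : 0 < r) :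
    (volume.withDensity fun y : E2 => ENNReal.ofReal ((y 0 + y 1) ^ 2)) (ball p r)
      = ENNReal.ofReal (π * r ^ 2 * (p 0 + p 1) ^ 2 + π * r ^ 4 / 2) := by
  rw [withDensity_apply _ measurableSet_ball]
  rw [← ofReal_integral_eq_lintegral_ofReal]
  · rw [intW p hr]
  · exact integrableOn_ball2 (by fun_prop) p r
  · exact Filter.Eventually.of_forall fun y => by positivity

lemma setIntegral_density (p : E2) {r : ℝ} (hr : 0 < r) (g : E2 → ℝ) :
    (∫ y in ball p r, g y ∂(volume.withDensity fun y : E2 => ENNReal.ofReal ((y 0 + y 1) ^ 2)))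
      = ∫ y in ball p r, (y 0 + y 1) ^ 2 * g y := by
  have h : (fun y : E2 => ENNReal.ofReal ((y 0 + y 1) ^ 2))
      = fun y : E2 => (((y 0 + y 1) ^ 2).toNNReal : ℝ≥0∞) := rfl
  rw [h, setIntegral_withDensity_eq_setIntegral_smul
    (by fun_prop : Measurable fun y : E2 => ((y 0 + y 1) ^ 2).toNNReal) g measurableSet_ball]
  apply setIntegral_congr_fun measurableSet_ball
  intro y _
  simp [NNReal.smul_def, Real.coe_toNNReal _ (sq_nonneg _)]




def Fu (z : E2) : E2 →L[ℝ] ℝ :=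
  (2 * z 0 - 3 * z 1) • EuclideanSpace.proj 0 + (2 * z 1 - 3 * z 0) • EuclideanSpace.proj 1

def Fw (z : E2) : E2 →L[ℝ] ℝ :=
  (2 * (z 0 + z 1)) • EuclideanSpace.proj 0 + (2 * (z 0 + z 1)) • EuclideanSpace.proj 1

lemma hasFDerivAt_u (z : E2) :
    HasFDerivAt (fun y : E2 => (y 0) ^ 2 - 3 * (y 0) * (y 1) + (y 1) ^ 2) (Fu z) z := by
  have h0 : HasFDerivAt (fun y : E2 => y 0) (EuclideanSpace.proj (𝕜 := ℝ) (ι := Fin 2) 0) z :=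
    (EuclideanSpace.proj (𝕜 := ℝ) (ι := Fin 2) 0).hasFDerivAt
  have h1 : HasFDerivAt (fun y : E2 => y 1) (EuclideanSpace.proj (𝕜 := ℝ) (ι := Fin 2) 1) z :=
    (EuclideanSpace.proj (𝕜 := ℝ) (ι := Fin 2) 1).hasFDerivAt
  have h := ((h0.mul h0).sub ((h0.mul h1).const_mul 3)).add (h1.mul h1)
  convert (preTransparency := .instances) h using 1
  · funext y; simp only [Pi.add_apply, Pi.sub_apply, Pi.mul_apply, Pi.pow_apply]; ring
  · ext v
    simp only [Fu, ContinuousLinearMap.add_apply, ContinuousLinearMap.smul_apply,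
      ContinuousLinearMap.sub_apply, ContinuousLinearMap.coe_smul', Pi.smul_apply,
      smul_eq_mul, PiLp.proj_apply]
    ring

lemma hasFDerivAt_w (z : E2) :
    HasFDerivAt (fun y : E2 => (y 0 + y 1) ^ 2) (Fw z) z := by
  have h0 : HasFDerivAt (fun y : E2 => y 0) (EuclideanSpace.proj (𝕜 := ℝ) (ι := Fin 2) 0) z :=
    (EuclideanSpace.proj (𝕜 := ℝ) (ι := Fin 2) 0).hasFDerivAt
  have h1 : HasFDerivAt (fun y : E2 => y 1) (EuclideanSpace.proj (𝕜 := ℝ) (ι := Fin 2) 1) z :=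
    (EuclideanSpace.proj (𝕜 := ℝ) (ι := Fin 2) 1).hasFDerivAt
  have h := (h0.add h1).mul (h0.add h1)
  convert (preTransparency := .instances) h using 1
  · funext y; simp only [Pi.add_apply, Pi.sub_apply, Pi.mul_apply, Pi.pow_apply]; ring
  ext v
  simp only [Fw, ContinuousLinearMap.add_apply, ContinuousLinearMap.smul_apply,
    smul_eq_mul, PiLp.proj_apply, Pi.add_apply]
  ring

def gu (p : E2) : E2 := EuclideanSpace.single 0 (2 * p 0 - 3 * p 1)
  + EuclideanSpace.single 1 (2 * p 1 - 3 * p 0)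

def gw (p : E2) : E2 := EuclideanSpace.single 0 (2 * (p 0 + p 1))
  + EuclideanSpace.single 1 (2 * (p 0 + p 1))

lemma gradient_u (p : E2) :
    gradient (fun y : E2 => (y 0) ^ 2 - 3 * (y 0) * (y 1) + (y 1) ^ 2) p = gu p := by
  apply HasGradientAt.gradient
  rw [hasGradientAt_iff_hasFDerivAt]
  convert (preTransparency := .instances) hasFDerivAt_u p using 1
  ext v
  rw [toDual_apply_apply]
  simp only [Fu, gu, ContinuousLinearMap.add_apply, ContinuousLinearMap.smul_apply,
    smul_eq_mul, PiLp.proj_apply, PiLp.inner_apply, RCLike.inner_apply,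
    starRingEnd_apply, star_trivial, Fin.sum_univ_two, PiLp.add_apply,
    EuclideanSpace.single_apply]
  norm_num
  ring

lemma gradient_w (p : E2) :
    gradient (fun y : E2 => (y 0 + y 1) ^ 2) p = gw p := by
  apply HasGradientAt.gradient
  rw [hasGradientAt_iff_hasFDerivAt]
  convert (preTransparency := .instances) hasFDerivAt_w p using 1
  ext v
  rw [toDual_apply_apply]
  simp only [Fw, gw, ContinuousLinearMap.add_apply, ContinuousLinearMap.smul_apply,
    smul_eq_mul, PiLp.proj_apply, PiLp.inner_apply, RCLike.inner_apply,
    starRingEnd_apply, star_trivial, Fin.sum_univ_two, PiLp.add_apply,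
    EuclideanSpace.single_apply]
  norm_num
  ring

lemma statement3 (p : E2) :
    ((p 0 + p 1) ^ 2) * (∑ k : Fin 2, fderiv ℝ (fun z : E2 =>
        fderiv ℝ (fun y : E2 => (y 0) ^ 2 - 3 * (y 0) * (y 1) + (y 1) ^ 2) z
          (EuclideanSpace.single k 1)) p (EuclideanSpace.single k 1))
      + 2 * ⟪gradient (fun y : E2 => (y 0 + y 1) ^ 2) p,
          gradient (fun y : E2 => (y 0) ^ 2 - 3 * (y 0) * (y 1) + (y 1) ^ 2) p⟫ = 0 := by
  have hfd : ∀ z : E2, fderiv ℝ (fun y : E2 => (y 0) ^ 2 - 3 * (y 0) * (y 1) + (y 1) ^ 2) z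
      = Fu z := fun z => (hasFDerivAt_u z).fderiv
  have happ : ∀ (z : E2) (k : Fin 2), Fu z (EuclideanSpace.single k 1)
      = (2 * z 0 - 3 * z 1) * (if (0:Fin 2) = k then 1 else 0)
        + (2 * z 1 - 3 * z 0) * (if (1:Fin 2) = k then 1 else 0) := by
    intro z k
    simp [Fu, EuclideanSpace.single_apply]
  have hsec0 : fderiv ℝ (fun z : E2 =>
      fderiv ℝ (fun y : E2 => (y 0) ^ 2 - 3 * (y 0) * (y 1) + (y 1) ^ 2) z
        (EuclideanSpace.single 0 1)) p (EuclideanSpace.single 0 1) = 2 := by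
    have heq : (fun z : E2 => fderiv ℝ (fun y : E2 => (y 0) ^ 2 - 3 * (y 0) * (y 1) + (y 1) ^ 2) z
        (EuclideanSpace.single 0 1)) = fun z : E2 => 2 * z 0 - 3 * z 1 := by
      funext z; rw [hfd z, happ z 0]; norm_num
    have hd : HasFDerivAt (fun z : E2 => 2 * z 0 - 3 * z 1)
        ((2:ℝ) • EuclideanSpace.proj (𝕜 := ℝ) (ι := Fin 2) 0
          - (3:ℝ) • EuclideanSpace.proj (𝕜 := ℝ) (ι := Fin 2) 1) p := by
      have h0 := (EuclideanSpace.proj (𝕜 := ℝ) (ι := Fin 2) 0).hasFDerivAt (x := p)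
      have h1 := (EuclideanSpace.proj (𝕜 := ℝ) (ι := Fin 2) 1).hasFDerivAt (x := p)
      exact (h0.const_mul 2).sub (h1.const_mul 3)
    rw [heq, hd.fderiv]
    simp [EuclideanSpace.single_apply]
  have hsec1 : fderiv ℝ (fun z : E2 =>
      fderiv ℝ (fun y : E2 => (y 0) ^ 2 - 3 * (y 0) * (y 1) + (y 1) ^ 2) z
        (EuclideanSpace.single 1 1)) p (EuclideanSpace.single 1 1) = 2 := by
    have heq : (fun z : E2 => fderiv ℝ (fun y : E2 => (y 0) ^ 2 - 3 * (y 0) * (y 1) + (y 1) ^ 2) z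
        (EuclideanSpace.single 1 1)) = fun z : E2 => 2 * z 1 - 3 * z 0 := by
      funext z; rw [hfd z, happ z 1]; norm_num
    have hd : HasFDerivAt (fun z : E2 => 2 * z 1 - 3 * z 0)
        ((2:ℝ) • EuclideanSpace.proj (𝕜 := ℝ) (ι := Fin 2) 1
          - (3:ℝ) • EuclideanSpace.proj (𝕜 := ℝ) (ι := Fin 2) 0) p := by
      have h0 := (EuclideanSpace.proj (𝕜 := ℝ) (ι := Fin 2) 0).hasFDerivAt (x := p)
      have h1 := (EuclideanSpace.proj (𝕜 := ℝ) (ι := Fin 2) 1).hasFDerivAt (x := p)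
      exact (h1.const_mul 2).sub (h0.const_mul 3)
    rw [heq, hd.fderiv]
    simp [EuclideanSpace.single_apply]
  rw [Fin.sum_univ_two, hsec0, hsec1, gradient_u, gradient_w]
  have hinner : ⟪gw p, gu p⟫ = 2 * (p 0 + p 1) * (2 * p 0 - 3 * p 1)
      + 2 * (p 0 + p 1) * (2 * p 1 - 3 * p 0) := by
    simp [gw, gu, PiLp.inner_apply, RCLike.inner_apply, starRingEnd_apply,
      Fin.sum_univ_two, PiLp.add_apply, EuclideanSpace.single_apply]
    ring
  rw [hinner]
  ring

lemma avg_lemma (p : E2) {r : ℝ} (hr : 0 < r) :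
    (⨍ y in ball p r, ((y 0) ^ 2 - 3 * (y 0) * (y 1) + (y 1) ^ 2)
        ∂(volume.withDensity fun y : E2 => ENNReal.ofReal ((y 0 + y 1) ^ 2)))
      = ((p 0) ^ 2 - 3 * (p 0) * (p 1) + (p 1) ^ 2)
        + r ^ 4 / (6 * (r ^ 2 + 2 * (p 0 + p 1) ^ 2)) := by
  rw [setAverage_eq, measureReal_def, setIntegral_density p hr, measure_ball2 p hr]
  have hcomm : (fun y : E2 => (y 0 + y 1) ^ 2 * ((y 0) ^ 2 - 3 * (y 0) * (y 1) + (y 1) ^ 2))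
      = fun y : E2 => ((y 0) ^ 2 - 3 * (y 0) * (y 1) + (y 1) ^ 2) * (y 0 + y 1) ^ 2 :=
    funext fun y => by ring
  rw [hcomm, intUW p hr, ENNReal.toReal_ofReal (Wpos p hr).le, smul_eq_mul]
  have hW := Wpos p hr
  have hd : (0:ℝ) < 6 * (r ^ 2 + 2 * (p 0 + p 1) ^ 2) := by positivity
  field_simp
  ring

lemma intSub (p : E2) {r : ℝ} (hr : 0 < r) :
    (∫ y in ball p r, ((y 0) ^ 2 - 3 * (y 0) * (y 1) + (y 1) ^ 2
        - ((p 0) ^ 2 - 3 * (p 0) * (p 1) + (p 1) ^ 2))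
        ∂(volume.withDensity fun y : E2 => ENNReal.ofReal ((y 0 + y 1) ^ 2)))
      = π * r ^ 6 / 12 := by
  rw [setIntegral_density p hr]
  have hsplit : (fun y : E2 => (y 0 + y 1) ^ 2 * ((y 0) ^ 2 - 3 * (y 0) * (y 1) + (y 1) ^ 2
        - ((p 0) ^ 2 - 3 * (p 0) * (p 1) + (p 1) ^ 2)))
      = fun y : E2 => ((y 0) ^ 2 - 3 * (y 0) * (y 1) + (y 1) ^ 2) * (y 0 + y 1) ^ 2
          - ((p 0) ^ 2 - 3 * (p 0) * (p 1) + (p 1) ^ 2) * ((y 0 + y 1) ^ 2) :=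
    funext fun y => by ring
  rw [hsplit, integral_sub (integrableOn_ball2 (by fun_prop) p r)
    (integrableOn_ball2 (by fun_prop) p r), intUW p hr, integral_const_mul, intW p hr]
  ring

end

/-- In `ℝ²` with `w(x,y) = (x+y)²`, `u(x,y) = x² - 3xy + y²` and `μ = w·L²`,
the `μ`-average of `u` on `B_r(x,y)` equals `u(x,y) + r⁴/(6(r² + 2(x+y)²))`; equivalently
`Δ_{μ,r}u(x,y) = r²/(6(r² + 2(x+y)²))`. In particular `wΔu + 2∇w·∇u = 0` everywhere, yet `u`
does not satisfy the mean value property with respect to `μ` at any point. -/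
theorem bose_example_weighted_harmonic_not_mean_value
    (w u : EuclideanSpace ℝ (Fin 2) → ℝ)
    (hw : w = fun p => (p 0 + p 1) ^ 2)
    (hu : u = fun p => (p 0) ^ 2 - 3 * (p 0) * (p 1) + (p 1) ^ 2)
    (μ : Measure (EuclideanSpace ℝ (Fin 2)))
    (hμ : μ = volume.withDensity fun p => ENNReal.ofReal (w p)) :
    (∀ (p : EuclideanSpace ℝ (Fin 2)) (r : ℝ), 0 < r →
      (⨍ y in Metric.ball p r, u y ∂μ) = u p + r ^ 4 / (6 * (r ^ 2 + 2 * (p 0 + p 1) ^ 2))) ∧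
    (∀ (p : EuclideanSpace ℝ (Fin 2)) (r : ℝ), 0 < r →
      (1 / r ^ 2) * (⨍ y in Metric.ball p r, (u y - u p) ∂μ) =
        r ^ 2 / (6 * (r ^ 2 + 2 * (p 0 + p 1) ^ 2))) ∧
    (∀ p : EuclideanSpace ℝ (Fin 2),
      w p * (∑ k : Fin 2, fderiv ℝ (fun z => fderiv ℝ u z (EuclideanSpace.single k 1)) p
          (EuclideanSpace.single k 1))
        + 2 * ⟪gradient w p, gradient u p⟫ = 0) ∧
    (∀ (p : EuclideanSpace ℝ (Fin 2)) (r : ℝ), 0 < r →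
      (⨍ y in Metric.ball p r, u y ∂μ) ≠ u p) := by
  refine ⟨?_, ?_, ?_, ?_⟩
  · intro p r hr
    simp only [hu, hμ, hw]
    exact avg_lemma p hr
  · intro p r hr
    simp only [hu, hμ, hw]
    rw [setAverage_eq, measureReal_def, intSub p hr, measure_ball2 p hr,
      ENNReal.toReal_ofReal (Wpos p hr).le, smul_eq_mul]
    have hW := Wpos p hr
    have hd : (0:ℝ) < 6 * (r ^ 2 + 2 * (p 0 + p 1) ^ 2) := by positivity
    field_simp
    ring
  · intro p
    simp only [hu, hw]
    exact statement3 p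
  · intro p r hr
    simp only [hu, hμ, hw]
    rw [avg_lemma p hr]
    have hpos : 0 < r ^ 4 / (6 * (r ^ 2 + 2 * (p 0 + p 1) ^ 2)) := by positivity
    intro h
    nlinarith
end

section
/- Let n ≥ 3, μ := Lⁿ + δ_o on ℝⁿ with the Euclidean distance, where δ_o is the Dirac mass at the origin o, and let u ∈ L¹_loc(ℝⁿ, Lⁿ). If o is a Lebesgue point of u with respect to Lⁿ (i.e. there is u*(o) ∈ ℝ with ⨍_{B_r(o)} |u(y) − u*(o)| dy → 0 as r → 0⁺), then the AMV Laplacian Δ_μ u(o) exists and equals 0, for any choice of the value u(o). -/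
open MeasureTheory Metric Filter Topology Real
open scoped ENNReal

set_option maxHeartbeats 1000000

/-- For `n ≥ 3`, `μ = Lⁿ + δ₀` on `ℝⁿ` and `u ∈ L¹_loc(ℝⁿ, Lⁿ)`, if the origin is
a Lebesgue point of `u` with respect to `Lⁿ` (with Lebesgue value `ustar`), then the AMV
Laplacian of `u` at the origin exists and equals `0`, for any choice of the value `u(0)`. -/
theorem amv_laplacian_lebesgue_plus_dirac_dim_ge_three
    (n : ℕ) (hn : 3 ≤ n)
    (u : EuclideanSpace ℝ (Fin n) → ℝ) (hu : LocallyIntegrable u volume)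
    (μ : Measure (EuclideanSpace ℝ (Fin n)))
    (hμ : μ = volume + Measure.dirac (0 : EuclideanSpace ℝ (Fin n)))
    (ustar : ℝ)
    (hleb : Filter.Tendsto
      (fun r : ℝ => ⨍ y in Metric.ball (0 : EuclideanSpace ℝ (Fin n)) r, |u y - ustar| ∂volume)
      (𝓝[>] (0 : ℝ)) (𝓝 0)) :
    Filter.Tendsto
      (fun r : ℝ =>
        (1 / r ^ 2) * ⨍ y in Metric.ball (0 : EuclideanSpace ℝ (Fin n)) r, (u y - u 0) ∂μ)
      (𝓝[>] (0 : ℝ)) (𝓝 0) := by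
  classical
  subst hμ
  set M : Measure (EuclideanSpace ℝ (Fin n)) := volume + Measure.dirac 0 with hM
  have hnpos : (0:ℕ) < n := by omega
  haveI : Nontrivial (EuclideanSpace ℝ (Fin n)) := by
    have : Nontrivial (Fin n) := Fin.nontrivial_iff_two_le.2 (by omega)
    infer_instance
  set c : ℝ := (volume (ball (0:EuclideanSpace ℝ (Fin n)) 1)).toReal with hc
  set C : ℝ := |ustar - u 0| with hCdef
  set A : ℝ → ℝ := fun r => ⨍ y in ball (0:EuclideanSpace ℝ (Fin n)) r, |u y - ustar| ∂volume
    with hAdef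
  have hg : Tendsto (fun r => c * r ^ (n-2) * (A r + C)) (𝓝[>] (0:ℝ)) (𝓝 0) := by
    have h1 : Tendsto (fun r : ℝ => c * r ^ (n-2)) (𝓝[>] (0:ℝ)) (𝓝 (c * 0)) := by
      have h0 : Tendsto (fun r : ℝ => r ^ (n-2)) (𝓝 (0:ℝ)) (𝓝 ((0:ℝ) ^ (n-2))) :=
        (continuous_pow (n-2)).tendsto 0
      rw [zero_pow (by omega : n - 2 ≠ 0)] at h0
      exact (h0.mono_left nhdsWithin_le_nhds).const_mul c
    have h2 : Tendsto (fun r => A r + C) (𝓝[>] (0:ℝ)) (𝓝 (0 + C)) :=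
      hleb.add tendsto_const_nhds
    simpa using h1.mul h2
  refine squeeze_zero_norm' ?_ hg
  filter_upwards [self_mem_nhdsWithin] with r (hr : 0 < r)
  set B := ball (0:EuclideanSpace ℝ (Fin n)) r with hB
  have h0B : (0:EuclideanSpace ℝ (Fin n)) ∈ B := mem_ball_self hr
  have hVlt : volume B < ⊤ := measure_ball_lt_top
  set v : ℝ := (volume B).toReal with hv
  have hvpos : 0 < v := ENNReal.toReal_pos (measure_ball_pos volume _ hr).ne' hVlt.ne
  -- integrability
  have hiu : IntegrableOn u B volume :=
    (hu.integrableOn_isCompact (isCompact_closedBall 0 r)).mono_set ball_subset_closedBall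
  have hiconst : ∀ a : ℝ, IntegrableOn (fun _ => a) B volume := fun a =>
    integrableOn_const hVlt.ne
  have hi1 : IntegrableOn (fun y => u y - u 0) B volume := hiu.sub (hiconst (u 0))
  have hi2 : Integrable (fun y => u y - u 0) ((Measure.dirac (0:EuclideanSpace ℝ (Fin n))).restrict B) := by
    have h := MeasureTheory.ae_eq_dirac (a := (0:EuclideanSpace ℝ (Fin n))) (fun y => u y - u 0)
    exact ((integrable_const (u 0 - u 0)).congr h.symm).restrict
  -- the μ-integral equals the volume integral
  have hint : ∫ y in B, (u y - u 0) ∂M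
      = ∫ y in B, (u y - u 0) ∂volume := by
    rw [hM, Measure.restrict_add, integral_add_measure hi1 hi2]
    have h2 : ∫ y in B, (u y - u 0) ∂(Measure.dirac (0:EuclideanSpace ℝ (Fin n))) = 0 := by
      rw [setIntegral_dirac, if_pos h0B, sub_self]
    rw [h2, add_zero]
  -- compute measures
  have hMB : M B = volume B + 1 := by
    rw [hM, Measure.add_apply, Measure.dirac_apply_of_mem h0B]
  have hμB : (M B).toReal = v + 1 := by
    rw [hMB, ENNReal.toReal_add hVlt.ne ENNReal.one_ne_top, ENNReal.toReal_one]
  have hvc : v = c * r ^ n := by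
    rw [hv, hB, Measure.addHaar_ball volume _ hr.le, finrank_euclideanSpace_fin,
      ENNReal.toReal_mul, ENNReal.toReal_ofReal (by positivity)]
    ring
  -- bound on the volume integral
  have hIbound : |∫ y in B, (u y - u 0) ∂volume| ≤ v * (A r + C) := by
    have hsplit : ∫ y in B, (u y - u 0) ∂volume
        = (∫ y in B, (u y - ustar) ∂volume) + (ustar - u 0) * v := by
      have : ∫ y in B, ((u y - ustar) + (ustar - u 0)) ∂volume
          = (∫ y in B, (u y - ustar) ∂volume) + ∫ y in B, (ustar - u 0) ∂volume :=
        integral_add (hiu.sub (hiconst ustar)) (hiconst _)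
      simp only [sub_add_sub_cancel] at this
      rw [this, setIntegral_const, smul_eq_mul, mul_comm, hv, measureReal_def]
    rw [hsplit]
    have hAr : ∫ y in B, |u y - ustar| ∂volume = v * A r := by
      rw [hAdef]
      simp only
      rw [setAverage_eq, smul_eq_mul, measureReal_def, ← hv, ← mul_assoc, mul_inv_cancel₀ hvpos.ne', one_mul]
    calc |(∫ y in B, (u y - ustar) ∂volume) + (ustar - u 0) * v|
        ≤ |∫ y in B, (u y - ustar) ∂volume| + |(ustar - u 0) * v| := abs_add_le _ _
      _ ≤ (∫ y in B, |u y - ustar| ∂volume) + C * v := by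
          gcongr
          · simpa [Real.norm_eq_abs] using
              (norm_integral_le_integral_norm (μ := volume.restrict B) (fun y => u y - ustar))
          · rw [abs_mul, abs_of_pos hvpos, hCdef]
      _ = v * (A r + C) := by rw [hAr]; ring
  -- assemble
  have hAnn : 0 ≤ A r := by
    rw [hAdef]
    simp only
    rw [setAverage_eq, smul_eq_mul]
    exact mul_nonneg (by positivity) (integral_nonneg fun y => abs_nonneg _)
  have hfr : (M B).toReal⁻¹ ≤ 1 := by
    rw [hμB, inv_le_one_iff₀]
    right; linarith
  rw [Real.norm_eq_abs, setAverage_eq, smul_eq_mul, hint, abs_mul, abs_mul]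
  have h1r : |1 / r ^ 2| = 1 / r ^ 2 := abs_of_pos (by positivity)
  have hinv : |(M B).toReal⁻¹| = (M B).toReal⁻¹ := abs_of_nonneg (by positivity)
  rw [h1r, measureReal_def, hinv]
  calc (1 / r ^ 2) * ((M B).toReal⁻¹ * |∫ y in B, (u y - u 0) ∂volume|)
      ≤ (1 / r ^ 2) * (1 * (v * (A r + C))) := by
        exact mul_le_mul_of_nonneg_left
          (mul_le_mul hfr hIbound (abs_nonneg _) zero_le_one) (by positivity)
    _ = c * r ^ (n - 2) * (A r + C) := by
        rw [one_mul, hvc]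
        have hrn : r ^ n = r ^ 2 * r ^ (n - 2) := by
          rw [← pow_add]; congr 1; omega
        field_simp [hrn]
        rw [hrn]
        ring
end

section
/- Let n = 2, μ := L² + δ_o on ℝ² with the Euclidean distance, where δ_o is the Dirac mass at the origin o, and let u ∈ L¹_loc(ℝ², L²). If o is a Lebesgue point of u with respect to L², with limit value u*(o) (the unique a ∈ ℝ with ⨍_{B_r(o)} |u(y) − a| dy → 0 as r → 0⁺), then the AMV Laplacian Δ_μ u(o) exists and Δ_μ u(o) = π (u*(o) − u(o)). -/
open MeasureTheory Metric Filter Topology Real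
open scoped ENNReal

lemma vol_ball_two (r : ℝ) (hr : 0 ≤ r) :
    volume (Metric.ball (0 : EuclideanSpace ℝ (Fin 2)) r) = ENNReal.ofReal (π * r ^ 2) := by
  rw [EuclideanSpace.volume_ball]
  rw [Fintype.card_fin] at *
  have : Real.sqrt π ^ 2 / Real.Gamma ((2 : ℕ) / 2 + 1) = π := by
    have : ((2:ℕ):ℝ) / 2 + 1 = 2 := by norm_num
    rw [this, Real.Gamma_two, Real.sq_sqrt pi_pos.le, div_one]
  rw [this, ← ENNReal.ofReal_pow hr, ← ENNReal.ofReal_mul (by positivity), mul_comm]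


/-- For `μ = L² + δ₀` on `ℝ²` and `u ∈ L¹_loc(ℝ², L²)`, if the origin is a
Lebesgue point of `u` with respect to `L²` with Lebesgue value `ustar`, then the AMV Laplacian
of `u` at the origin exists and equals `π (ustar - u(0))`. -/
theorem amv_laplacian_lebesgue_plus_dirac_dim_two
    (u : EuclideanSpace ℝ (Fin 2) → ℝ) (hu : LocallyIntegrable u volume)
    (μ : Measure (EuclideanSpace ℝ (Fin 2)))
    (hμ : μ = volume + Measure.dirac (0 : EuclideanSpace ℝ (Fin 2)))
    (ustar : ℝ)
    (hleb : Filter.Tendsto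
      (fun r : ℝ => ⨍ y in Metric.ball (0 : EuclideanSpace ℝ (Fin 2)) r, |u y - ustar| ∂volume)
      (𝓝[>] (0 : ℝ)) (𝓝 0)) :
    Filter.Tendsto
      (fun r : ℝ =>
        (1 / r ^ 2) * ⨍ y in Metric.ball (0 : EuclideanSpace ℝ (Fin 2)) r, (u y - u 0) ∂μ)
      (𝓝[>] (0 : ℝ)) (𝓝 (Real.pi * (ustar - u 0))) := by
  have hπ : (0:ℝ) < π := pi_pos
  have hInt : ∀ r : ℝ, IntegrableOn u (Metric.ball (0 : EuclideanSpace ℝ (Fin 2)) r) volume :=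
    fun r => (hu.integrableOn_isCompact (isCompact_closedBall 0 r)).mono_set ball_subset_closedBall
  have hfin : ∀ r : ℝ, volume (Metric.ball (0 : EuclideanSpace ℝ (Fin 2)) r) < ⊤ :=
    fun r => measure_ball_lt_top
  have hIsub : ∀ r : ℝ, Integrable (fun y => u y - u 0)
      (volume.restrict (Metric.ball (0 : EuclideanSpace ℝ (Fin 2)) r)) :=
    fun r => (hInt r).sub (integrableOn_const (hfin r).ne)
  -- average wrt volume of (u - ustar) tends to 0
  have havg0 : Tendsto (fun r : ℝ => ⨍ y in Metric.ball (0 : EuclideanSpace ℝ (Fin 2)) r,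
      (u y - ustar) ∂volume) (𝓝[>] (0:ℝ)) (𝓝 0) := by
    apply squeeze_zero_norm' ?_ hleb
    filter_upwards [self_mem_nhdsWithin] with r (hr : 0 < r)
    rw [setAverage_eq, setAverage_eq]
    rw [smul_eq_mul, smul_eq_mul, Real.norm_eq_abs, abs_mul,
      abs_of_nonneg (by positivity : (0:ℝ) ≤ (volume.real (Metric.ball (0 : EuclideanSpace ℝ (Fin 2)) r))⁻¹)]
    gcongr
    simpa [Real.norm_eq_abs] using
      norm_integral_le_integral_norm (μ := volume.restrict (Metric.ball (0 : EuclideanSpace ℝ (Fin 2)) r))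
        (fun y => u y - ustar)
  -- average wrt volume of (u - u 0) tends to ustar - u 0
  have hB : Tendsto (fun r : ℝ => ⨍ y in Metric.ball (0 : EuclideanSpace ℝ (Fin 2)) r,
      (u y - u 0) ∂volume) (𝓝[>] (0:ℝ)) (𝓝 (ustar - u 0)) := by
    have heq : (fun r : ℝ => (⨍ y in Metric.ball (0 : EuclideanSpace ℝ (Fin 2)) r,
        (u y - ustar) ∂volume) + (ustar - u 0)) =ᶠ[𝓝[>] (0:ℝ)]
        (fun r : ℝ => ⨍ y in Metric.ball (0 : EuclideanSpace ℝ (Fin 2)) r, (u y - u 0) ∂volume) := by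
      filter_upwards [self_mem_nhdsWithin] with r (hr : 0 < r)
      have hne : volume (Metric.ball (0 : EuclideanSpace ℝ (Fin 2)) r) ≠ 0 :=
        (measure_ball_pos volume _ hr).ne'
      have hI1 : IntegrableOn (fun y => u y - ustar)
          (Metric.ball (0 : EuclideanSpace ℝ (Fin 2)) r) volume :=
        (hInt r).sub (integrableOn_const (hfin r).ne)
      have hc : IntegrableOn (fun _ : EuclideanSpace ℝ (Fin 2) => ustar - u 0)
          (Metric.ball (0 : EuclideanSpace ℝ (Fin 2)) r) volume :=
        integrableOn_const (hfin r).ne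
      have hfe : (fun y => u y - u 0) = fun y => (u y - ustar) + (ustar - u 0) := by
        funext y; ring
      have htne : (volume (Metric.ball (0 : EuclideanSpace ℝ (Fin 2)) r)).toReal ≠ 0 := by
        simp [ENNReal.toReal_ne_zero, hne, (hfin r).ne, hr, hπ]
      rw [hfe, setAverage_eq, setAverage_eq, integral_add hI1 hc, setIntegral_const,
        smul_add, smul_smul, inv_mul_cancel₀ (a := volume.real (Metric.ball (0 : EuclideanSpace ℝ (Fin 2)) r)) htne, one_smul]
    refine Tendsto.congr' heq ?_
    simpa using havg0.add_const (ustar - u 0)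
  -- rewrite the μ-average
  have heq2 : (fun r : ℝ =>
        (1 / r ^ 2) * ⨍ y in Metric.ball (0 : EuclideanSpace ℝ (Fin 2)) r, (u y - u 0) ∂μ)
      =ᶠ[𝓝[>] (0:ℝ)]
      (fun r : ℝ => (π / (π * r ^ 2 + 1)) *
        ⨍ y in Metric.ball (0 : EuclideanSpace ℝ (Fin 2)) r, (u y - u 0) ∂volume) := by
    filter_upwards [self_mem_nhdsWithin] with r (hr : 0 < r)
    set s := Metric.ball (0 : EuclideanSpace ℝ (Fin 2)) r with hs
    have h0s : (0 : EuclideanSpace ℝ (Fin 2)) ∈ s := mem_ball_self hr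
    have hμs : μ s = ENNReal.ofReal (π * r ^ 2) + 1 := by
      rw [hμ, Measure.add_apply, hs, vol_ball_two r hr.le,
        Measure.dirac_apply' _ measurableSet_ball, Set.indicator_of_mem (by simpa [hs] using h0s)]
      rfl
    have haedirac : (fun y => u y - u 0) =ᵐ[Measure.dirac (0 : EuclideanSpace ℝ (Fin 2))]
        (fun _ => u 0 - u 0) := ae_eq_dirac _
    have hIdirac : Integrable (fun y => u y - u 0)
        (Measure.dirac (0 : EuclideanSpace ℝ (Fin 2))) :=
      (integrable_const (u 0 - u 0)).congr haedirac.symm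
    have hrestr : (Measure.dirac (0 : EuclideanSpace ℝ (Fin 2))).restrict s
        = Measure.dirac (0 : EuclideanSpace ℝ (Fin 2)) := by
      classical
      rw [hs, restrict_dirac' measurableSet_ball, if_pos (by simpa [hs] using h0s)]
    have hIdirac' : Integrable (fun y => u y - u 0)
        ((Measure.dirac (0 : EuclideanSpace ℝ (Fin 2))).restrict s) := by
      rw [hrestr]; exact hIdirac
    have hIμ : ∫ y in s, (u y - u 0) ∂μ = ∫ y in s, (u y - u 0) ∂volume := by
      rw [hμ, Measure.restrict_add, integral_add_measure (hIsub r) hIdirac', hrestr,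
        integral_dirac]
      simp
      rfl
    rw [setAverage_eq, setAverage_eq, hIμ, measureReal_def, measureReal_def, hμs, vol_ball_two r hr.le,
      ENNReal.toReal_add ENNReal.ofReal_ne_top ENNReal.one_ne_top,
      ENNReal.toReal_ofReal (by positivity), ENNReal.toReal_one, smul_eq_mul, smul_eq_mul]
    have h1 : π * r ^ 2 + 1 ≠ 0 := by positivity
    have h2 : π * r ^ 2 ≠ 0 := by positivity
    field_simp
  refine Tendsto.congr' heq2.symm ?_
  have hden : Tendsto (fun r : ℝ => π / (π * r ^ 2 + 1)) (𝓝[>] (0:ℝ)) (𝓝 π) := by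
    have : ContinuousAt (fun r : ℝ => π / (π * r ^ 2 + 1)) 0 := by
      apply ContinuousAt.div (by fun_prop) (by fun_prop)
      norm_num
    simpa using this.continuousWithinAt.tendsto
  exact hden.mul hB
end

section
/- Let n = 1, μ := L¹ + δ_o on ℝ with the Euclidean distance, where δ_o is the Dirac mass at the origin o, and let u ∈ L¹_loc(ℝ, L¹). Assume o is a Lebesgue point of u with respect to L¹ with u*(o) = u(o), and assume additionally that r^{-1} ⨍_{B_r(o)} (u(y) − u(o)) dy converges to some constant b ∈ ℝ as r → 0⁺. Then the AMV Laplacian Δ_μ u(o) exists and Δ_μ u(o) = 2b. -/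
open MeasureTheory Metric Filter Topology Real
open scoped ENNReal

/-- For `μ = L¹ + δ₀` on `ℝ` and `u ∈ L¹_loc(ℝ, L¹)`, if the origin is a Lebesgue
point of `u` with Lebesgue value `u(0)`, and `r⁻¹ ⨍_{B_r(0)} (u(y) - u(0)) dy → b` as `r → 0⁺`,
then the AMV Laplacian of `u` at the origin exists and equals `2b`. -/
theorem amv_laplacian_lebesgue_plus_dirac_dim_one
    (u : ℝ → ℝ) (hu : LocallyIntegrable u volume)
    (μ : Measure ℝ) (hμ : μ = volume + Measure.dirac (0 : ℝ))
    (hleb : Filter.Tendsto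
      (fun r : ℝ => ⨍ y in Metric.ball (0 : ℝ) r, |u y - u 0| ∂volume)
      (𝓝[>] (0 : ℝ)) (𝓝 0))
    (b : ℝ)
    (hb : Filter.Tendsto
      (fun r : ℝ => (1 / r) * ⨍ y in Metric.ball (0 : ℝ) r, (u y - u 0) ∂volume)
      (𝓝[>] (0 : ℝ)) (𝓝 b)) :
    Filter.Tendsto
      (fun r : ℝ => (1 / r ^ 2) * ⨍ y in Metric.ball (0 : ℝ) r, (u y - u 0) ∂μ)
      (𝓝[>] (0 : ℝ)) (𝓝 (2 * b)) := by
  classical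
  set f : ℝ → ℝ := fun y => u y - u 0 with hf
  -- eventual equality
  have key : ∀ᶠ r in 𝓝[>] (0 : ℝ),
      (1 / r ^ 2) * ⨍ y in Metric.ball (0 : ℝ) r, f y ∂μ
        = (2 / (2 * r + 1)) * ((1 / r) * ⨍ y in Metric.ball (0 : ℝ) r, f y ∂volume) := by
    filter_upwards [self_mem_nhdsWithin] with r (hr : 0 < r)
    have h0 : (0 : ℝ) ∈ Metric.ball (0 : ℝ) r := by simpa using hr
    have hvol : IntegrableOn f (Metric.ball (0 : ℝ) r) volume := by
      have : IntegrableOn u (Metric.ball (0 : ℝ) r) volume :=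
        (hu.integrableOn_isCompact (isCompact_closedBall (0:ℝ) r)).mono_set
          Metric.ball_subset_closedBall
      exact this.sub (integrableOn_const measure_ball_lt_top.ne)
    have hdirac : IntegrableOn f (Metric.ball (0 : ℝ) r) (Measure.dirac (0 : ℝ)) := by
      rw [IntegrableOn, MeasureTheory.restrict_dirac' measurableSet_ball, if_pos h0]
      exact (integrable_const (f 0)).congr (ae_eq_dirac f).symm
    have hμball : μ (Metric.ball (0 : ℝ) r) = ENNReal.ofReal (2 * r) + 1 := by
      rw [hμ]
      simp [Real.volume_ball, Measure.dirac_apply' _ measurableSet_ball, h0]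
    have hint : ∫ y in Metric.ball (0 : ℝ) r, f y ∂μ
        = ∫ y in Metric.ball (0 : ℝ) r, f y ∂volume := by
      rw [hμ, Measure.restrict_add, integral_add_measure hvol hdirac,
        setIntegral_dirac f 0 _, if_pos h0]
      simp [hf]
    rw [setAverage_eq, setAverage_eq, hint, measureReal_def, measureReal_def, hμball, Real.volume_ball]
    have htr : (ENNReal.ofReal (2 * r) + 1).toReal = 2 * r + 1 := by
      rw [ENNReal.toReal_add ENNReal.ofReal_ne_top (by simp)]
      simp [ENNReal.toReal_ofReal (by positivity : (0:ℝ) ≤ 2 * r), hr.le]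
    rw [htr, ENNReal.toReal_ofReal (by positivity : (0:ℝ) ≤ 2 * r)]
    have h1 : (2 * r + 1) ≠ 0 := by positivity
    have h2 : r ≠ 0 := ne_of_gt hr
    simp only [smul_eq_mul]
    field_simp
  have hcoef : Filter.Tendsto (fun r : ℝ => 2 / (2 * r + 1)) (𝓝[>] (0 : ℝ)) (𝓝 2) := by
    have : Filter.Tendsto (fun r : ℝ => 2 / (2 * r + 1)) (𝓝 (0 : ℝ)) (𝓝 (2 / (2 * 0 + 1))) := by
      apply Tendsto.div tendsto_const_nhds
      · exact ((tendsto_id.const_mul 2).add tendsto_const_nhds)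
      · norm_num
    simpa using this.mono_left nhdsWithin_le_nhds
  have := hcoef.mul hb
  exact (this.congr' (EventuallyEq.symm key))
end

section
/- Let (X,d) be a metric space equipped with a stratified measure μ = μ_1 + ⋯ + μ_k: each μ_j is a Borel measure supported on a closed set Y_j ⊆ X, each μ_j is Q_j-Ahlfors regular on Y_j (there are constants 0 < c_j ≤ C_j with c_j r^{Q_j} ≤ μ_j(B_r(y)) ≤ C_j r^{Q_j} for all y ∈ Y_j and all radii r > 0 of balls of (Y_j, d)), and Q_1 < Q_2 < ⋯ < Q_k. Let u ∈ L¹_loc(X,μ) and let x ∈ ⋂_{i=1}^{l} Y_{j_i}, where {j_i} is an increasing subsequence of {1,…,k}, with x ∉ Y_j for j ∉ {j_1,…,j_l}. If the AMV Laplacian Δ_{μ_{j_1}} u(x) exists and r^{Q_{j_i} − Q_{j_1}} |Δ_{μ_{j_i}, r} u(x)| → 0 as r → 0⁺ for all 2 ≤ i ≤ l, then Δ_μ u(x) exists and Δ_μ u(x) = Δ_{μ_{j_1}} u(x). -/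
open MeasureTheory Metric Filter Topology Real
open scoped ENNReal

private lemma sum_range_aux {M : Type*} [AddCommMonoid M] {k l : ℕ} {js : Fin l → Fin k}
    (hinj : Function.Injective js) (f : Fin k → M)
    (h0 : ∀ m, m ∉ Set.range js → f m = 0) :
    ∑ m, f m = ∑ i, f (js i) := by
  classical
  have h1 : ∑ i : Fin l, f (js i) = ∑ m ∈ Finset.univ.image js, f m :=
    (Finset.sum_image (fun a _ b _ h => hinj h)).symm
  rw [h1]
  refine (Finset.sum_subset (Finset.subset_univ _) fun m _ hm => h0 m ?_).symm
  simpa using hm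

/-- For a stratified measure `μ = μ₁ + ⋯ + μ_k` (each `μ_j` supported on a closed
set `Y_j` and `Q_j`-Ahlfors regular on it, `Q₁ < ⋯ < Q_k`), a point `x` in the intersection of
the strata `Y_{j₁}, …, Y_{j_l}` (and in no other stratum): if `Δ_{μ_{j₁}} u(x)` exists and
`r^{Q_{j_i} - Q_{j₁}} |Δ_{μ_{j_i},r} u(x)| → 0` for `i ≥ 2`, then `Δ_μ u(x)` exists and equals
`Δ_{μ_{j₁}} u(x)`. -/
theorem amv_laplacian_stratified_measure
    {X : Type*} [MetricSpace X] [MeasurableSpace X] [BorelSpace X]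
    (k : ℕ) (μs : Fin k → Measure X) (Y : Fin k → Set X)
    (Q : Fin k → ℝ) (c C : Fin k → ℝ)
    (hYclosed : ∀ m, IsClosed (Y m))
    (hsupp : ∀ m, μs m (Y m)ᶜ = 0)
    (hc : ∀ m, 0 < c m) (hcC : ∀ m, c m ≤ C m)
    (hQnn : ∀ m, 0 ≤ Q m)
    (hAhlfors : ∀ m, ∀ y ∈ Y m, ∀ r : ℝ, 0 < r →
      ENNReal.ofReal (c m * r ^ Q m) ≤ μs m (Metric.ball y r) ∧
      μs m (Metric.ball y r) ≤ ENNReal.ofReal (C m * r ^ Q m))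
    (hQmono : StrictMono Q)
    (u : X → ℝ) (hu : LocallyIntegrable u (∑ m, μs m))
    (l : ℕ) (hl : 0 < l) (js : Fin l → Fin k) (hjs : StrictMono js)
    (x : X) (hx : ∀ i, x ∈ Y (js i))
    (hxnot : ∀ m : Fin k, m ∉ Set.range js → x ∉ Y m)
    (L : ℝ)
    (hL : Filter.Tendsto
      (fun r : ℝ => (1 / r ^ 2) * ⨍ y in Metric.ball x r, (u y - u x) ∂(μs (js ⟨0, hl⟩)))
      (𝓝[>] (0 : ℝ)) (𝓝 L))
    (hrest : ∀ i : Fin l, i ≠ ⟨0, hl⟩ → Filter.Tendsto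
      (fun r : ℝ => r ^ (Q (js i) - Q (js ⟨0, hl⟩)) *
        |(1 / r ^ 2) * ⨍ y in Metric.ball x r, (u y - u x) ∂(μs (js i))|)
      (𝓝[>] (0 : ℝ)) (𝓝 0)) :
    Filter.Tendsto
      (fun r : ℝ => (1 / r ^ 2) * ⨍ y in Metric.ball x r, (u y - u x) ∂(∑ m, μs m))
      (𝓝[>] (0 : ℝ)) (𝓝 L) := by
  classical
  set i0 : Fin l := ⟨0, hl⟩ with hi0def
  have hi0lt : ∀ i : Fin l, i ≠ i0 → i0 < i := by
    intro i hi
    have hv : (i : ℕ) ≠ 0 := fun h => hi (Fin.ext h)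
    exact Fin.lt_def.mpr (Nat.pos_of_ne_zero hv)
  have hQgt : ∀ i : Fin l, i ≠ i0 → 0 < Q (js i) - Q (js i0) := fun i hi =>
    sub_pos.mpr (hQmono (hjs (hi0lt i hi)))
  -- abbreviations
  set N : Fin l → ℝ → ℝ := fun i r => (μs (js i) (Metric.ball x r)).toReal with hNdef
  set T : ℝ → ℝ := fun r => ((∑ m, μs m) (Metric.ball x r)).toReal with hTdef
  set G : Fin l → ℝ → ℝ :=
    fun i r => (1 / r ^ 2) * ⨍ y in Metric.ball x r, (u y - u x) ∂(μs (js i)) with hGdef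
  set w : Fin l → ℝ → ℝ := fun i r => N i r / T r with hwdef
  -- choose δ
  obtain ⟨s, hs_mem, hs_int⟩ := hu x
  obtain ⟨δ1, hδ1pos, hδ1⟩ := Metric.mem_nhds_iff.mp hs_mem
  have hopen : IsOpen {y : X | ∀ m : Fin k, m ∉ Set.range js → y ∉ Y m} := by
    have he : {y : X | ∀ m : Fin k, m ∉ Set.range js → y ∉ Y m}
        = ⋂ m ∈ {m : Fin k | m ∉ Set.range js}, (Y m)ᶜ := by
      ext y; simp [Set.mem_iInter]
    rw [he]
    exact (Set.toFinite _).isOpen_biInter (fun m _ => (hYclosed m).isOpen_compl)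
  obtain ⟨δ2, hδ2pos, hδ2⟩ := Metric.isOpen_iff.mp hopen x hxnot
  set δ : ℝ := min δ1 δ2 with hδdef
  have hδpos : 0 < δ := lt_min hδ1pos hδ2pos
  have hmemIoo : Set.Ioo (0:ℝ) δ ∈ 𝓝[>] (0:ℝ) := Ioo_mem_nhdsGT_of_mem ⟨le_refl 0, hδpos⟩
  -- per-radius facts
  have hzero : ∀ r ∈ Set.Ioo (0:ℝ) δ, ∀ m, m ∉ Set.range js → μs m (Metric.ball x r) = 0 := by
    intro r hr m hm
    refine measure_mono_null (fun y hy => ?_) (hsupp m)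
    have hyb : y ∈ Metric.ball x δ2 :=
      mem_ball.mpr (lt_of_lt_of_le (mem_ball.mp hy) (hr.2.le.trans (min_le_right _ _)))
    exact hδ2 hyb m hm
  have hNfin : ∀ r ∈ Set.Ioo (0:ℝ) δ, ∀ i : Fin l, μs (js i) (Metric.ball x r) ≠ ⊤ := by
    intro r hr i
    exact ((hAhlfors (js i) x (hx i) r hr.1).2.trans_lt ENNReal.ofReal_lt_top).ne
  have hNpos : ∀ r ∈ Set.Ioo (0:ℝ) δ, ∀ i : Fin l, 0 < N i r := by
    intro r hr i
    simp only [hNdef]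
    refine ENNReal.toReal_pos ?_ (hNfin r hr i)
    refine (lt_of_lt_of_le ?_ (hAhlfors (js i) x (hx i) r hr.1).1).ne'
    exact ENNReal.ofReal_pos.mpr (mul_pos (hc _) (Real.rpow_pos_of_pos hr.1 _))
  have hNle : ∀ r ∈ Set.Ioo (0:ℝ) δ, ∀ i : Fin l, N i r ≤ C (js i) * r ^ Q (js i) := by
    intro r hr i
    simp only [hNdef]
    refine ENNReal.toReal_le_of_le_ofReal ?_ (hAhlfors (js i) x (hx i) r hr.1).2
    exact mul_nonneg ((hc _).trans_le (hcC _)).le (Real.rpow_pos_of_pos hr.1 _).le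
  have hNge : ∀ r ∈ Set.Ioo (0:ℝ) δ, ∀ i : Fin l, c (js i) * r ^ Q (js i) ≤ N i r := by
    intro r hr i
    simp only [hNdef]
    exact (ENNReal.ofReal_le_iff_le_toReal (hNfin r hr i)).mp (hAhlfors (js i) x (hx i) r hr.1).1
  have htotE : ∀ r ∈ Set.Ioo (0:ℝ) δ,
      (∑ m, μs m) (Metric.ball x r) = ∑ i, μs (js i) (Metric.ball x r) := by
    intro r hr
    rw [Measure.finset_sum_apply]
    exact sum_range_aux hjs.injective _ (hzero r hr)
  have hTfin : ∀ r ∈ Set.Ioo (0:ℝ) δ, (∑ m, μs m) (Metric.ball x r) ≠ ⊤ := by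
    intro r hr
    rw [htotE r hr]
    exact (ENNReal.sum_lt_top.2 fun i _ => (hNfin r hr i).lt_top).ne
  have hTsum : ∀ r ∈ Set.Ioo (0:ℝ) δ, T r = ∑ i, N i r := by
    intro r hr
    simp only [hTdef, hNdef]
    rw [htotE r hr]
    exact ENNReal.toReal_sum fun i _ => hNfin r hr i
  have hTpos : ∀ r ∈ Set.Ioo (0:ℝ) δ, 0 < T r := by
    intro r hr
    rw [hTsum r hr]
    exact Finset.sum_pos (fun i _ => hNpos r hr i) ⟨i0, Finset.mem_univ i0⟩
  -- integrability
  have hIntSum : ∀ r ∈ Set.Ioo (0:ℝ) δ,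
      IntegrableOn (fun y => u y - u x) (Metric.ball x r) (∑ m, μs m) := by
    intro r hr
    have hsub : Metric.ball x r ⊆ s :=
      (Metric.ball_subset_ball (hr.2.le.trans (min_le_left _ _))).trans hδ1
    have h1 : IntegrableOn u (Metric.ball x r) (∑ m, μs m) := hs_int.mono_set hsub
    have h2 : IntegrableOn (fun _ => u x) (Metric.ball x r) (∑ m, μs m) :=
      integrableOn_const (hTfin r hr)
    exact h1.sub h2
  have hres : ∀ r : ℝ, (∑ m, μs m).restrict (Metric.ball x r)
      = ∑ m, (μs m).restrict (Metric.ball x r) := by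
    intro r
    refine Measure.ext fun t ht => ?_
    simp [Measure.restrict_apply ht, Measure.finset_sum_apply]
  have hIntm : ∀ r ∈ Set.Ioo (0:ℝ) δ, ∀ m : Fin k,
      IntegrableOn (fun y => u y - u x) (Metric.ball x r) (μs m) := by
    intro r hr m
    have h := hIntSum r hr
    rw [IntegrableOn, hres r] at h
    exact integrable_finset_sum_measure.mp h m (Finset.mem_univ m)
  -- splitting the integral
  have hIeq : ∀ r ∈ Set.Ioo (0:ℝ) δ,
      ∫ y in Metric.ball x r, (u y - u x) ∂(∑ m, μs m)
        = ∑ i, ∫ y in Metric.ball x r, (u y - u x) ∂(μs (js i)) := by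
    intro r hr
    rw [show (∫ y in Metric.ball x r, (u y - u x) ∂(∑ m, μs m))
        = ∫ y, (u y - u x) ∂(∑ m, (μs m).restrict (Metric.ball x r)) by rw [← hres r]]
    rw [integral_finset_sum_measure (fun m _ => hIntm r hr m)]
    refine sum_range_aux hjs.injective _ (fun m hm => ?_)
    have : (μs m).restrict (Metric.ball x r) = 0 :=
      Measure.restrict_eq_zero.mpr (hzero r hr m hm)
    rw [show (∫ y in Metric.ball x r, (u y - u x) ∂(μs m))
        = ∫ y, (u y - u x) ∂((μs m).restrict (Metric.ball x r)) from rfl, this,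
      integral_zero_measure]
  -- main pointwise identity
  have hmain : ∀ r ∈ Set.Ioo (0:ℝ) δ,
      (1 / r ^ 2) * ⨍ y in Metric.ball x r, (u y - u x) ∂(∑ m, μs m)
        = ∑ i, w i r * G i r := by
    intro r hr
    have h2 : ((∑ m, μs m) (Metric.ball x r)).toReal ≠ 0 := by
      have := (hTpos r hr).ne'
      simpa [hTdef] using this
    have hr2 : (r : ℝ) ^ 2 ≠ 0 := pow_ne_zero _ hr.1.ne'
    simp only [hwdef, hGdef, hNdef, hTdef]
    rw [setAverage_eq, smul_eq_mul, hIeq r hr, Finset.mul_sum, Finset.mul_sum]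
    refine Finset.sum_congr rfl fun i _ => ?_
    have h1 : (μs (js i) (Metric.ball x r)).toReal ≠ 0 := by
      have := (hNpos r hr i).ne'
      simpa [hNdef] using this
    rw [setAverage_eq, smul_eq_mul]
    have h2' : (∑ j : Fin k, (μs j) (Metric.ball x r)).toReal ≠ 0 := by
      rw [← Measure.finset_sum_apply]; exact h2
    simp only [measureReal_def]
    field_simp
  -- tendsto of r ^ q
  have hrpow : ∀ q : ℝ, 0 < q → Tendsto (fun r : ℝ => r ^ q) (𝓝[>] (0:ℝ)) (𝓝 0) := by
    intro q hq
    have h := (Real.continuousAt_rpow_const 0 q (Or.inr hq.le)).tendsto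
    rw [Real.zero_rpow hq.ne'] at h
    exact h.mono_left nhdsWithin_le_nhds
  -- bound on w i for i ≠ i0
  have hwbound : ∀ i : Fin l, i ≠ i0 → ∀ r ∈ Set.Ioo (0:ℝ) δ,
      w i r ≤ (C (js i) / c (js i0)) * r ^ (Q (js i) - Q (js i0)) := by
    intro i hi r hr
    have h1 : w i r ≤ N i r / N i0 r := by
      refine div_le_div_of_nonneg_left (hNpos r hr i).le (hNpos r hr i0) ?_
      rw [hTsum r hr]
      exact Finset.single_le_sum (fun j _ => (hNpos r hr j).le) (Finset.mem_univ i0)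
    refine h1.trans ?_
    have h2 : N i r / N i0 r ≤ (C (js i) * r ^ Q (js i)) / (c (js i0) * r ^ Q (js i0)) := by
      refine div_le_div₀ (mul_nonneg ((hc _).trans_le (hcC _)).le
          (Real.rpow_pos_of_pos hr.1 _).le) (hNle r hr i)
        (mul_pos (hc _) (Real.rpow_pos_of_pos hr.1 _)) (hNge r hr i0)
    refine h2.trans_eq ?_
    rw [Real.rpow_sub hr.1, div_mul_div_comm]
  have hwnonneg : ∀ i : Fin l, ∀ r ∈ Set.Ioo (0:ℝ) δ, 0 ≤ w i r :=
    fun i r hr => div_nonneg (hNpos r hr i).le (hTpos r hr).le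
  -- w i → 0 for i ≠ i0
  have hwzero : ∀ i : Fin l, i ≠ i0 → Tendsto (fun r => w i r) (𝓝[>] (0:ℝ)) (𝓝 0) := by
    intro i hi
    have hgb : Tendsto (fun r : ℝ => (C (js i) / c (js i0)) * r ^ (Q (js i) - Q (js i0)))
        (𝓝[>] (0:ℝ)) (𝓝 0) := by
      have h := (hrpow _ (hQgt i hi)).const_mul (C (js i) / c (js i0))
      rw [mul_zero] at h
      exact h
    refine squeeze_zero' ?_ ?_ hgb
    · filter_upwards [hmemIoo] with r hr using hwnonneg i r hr
    · filter_upwards [hmemIoo] with r hr using hwbound i hi r hr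
  -- w i * G i → 0 for i ≠ i0
  have hwG : ∀ i : Fin l, i ≠ i0 → Tendsto (fun r => w i r * G i r) (𝓝[>] (0:ℝ)) (𝓝 0) := by
    intro i hi
    have hgb : Tendsto (fun r : ℝ => (C (js i) / c (js i0)) *
        (r ^ (Q (js i) - Q (js i0)) * |G i r|)) (𝓝[>] (0:ℝ)) (𝓝 0) := by
      have h := (hrest i hi).const_mul (C (js i) / c (js i0))
      rw [mul_zero] at h
      exact h
    refine squeeze_zero_norm' ?_ hgb
    filter_upwards [hmemIoo] with r hr
    rw [Real.norm_eq_abs, abs_mul, abs_of_nonneg (hwnonneg i r hr)]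
    have h1 : w i r * |G i r| ≤ ((C (js i) / c (js i0)) * r ^ (Q (js i) - Q (js i0))) * |G i r| :=
      mul_le_mul_of_nonneg_right (hwbound i hi r hr) (abs_nonneg _)
    refine h1.trans_eq (by ring)
  -- w i0 → 1
  have hwsum1 : ∀ r ∈ Set.Ioo (0:ℝ) δ, w i0 r = 1 - ∑ i ∈ Finset.univ.erase i0, w i r := by
    intro r hr
    have h : ∑ i, w i r = 1 := by
      simp only [hwdef]
      rw [← Finset.sum_div, ← hTsum r hr, div_self (hTpos r hr).ne']
    have h2 : w i0 r + ∑ i ∈ Finset.univ.erase i0, w i r = ∑ i, w i r :=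
      Finset.add_sum_erase _ (fun i => w i r) (Finset.mem_univ i0)
    linarith [h2.trans h]
  have hw0 : Tendsto (fun r => w i0 r) (𝓝[>] (0:ℝ)) (𝓝 1) := by
    have hsum0 : Tendsto (fun r => ∑ i ∈ Finset.univ.erase i0, w i r) (𝓝[>] (0:ℝ)) (𝓝 0) := by
      have h := tendsto_finset_sum (Finset.univ.erase i0)
        (fun i hi => hwzero i (Finset.ne_of_mem_erase hi))
      rw [Finset.sum_const_zero] at h
      exact h
    have h1 : Tendsto (fun r => 1 - ∑ i ∈ Finset.univ.erase i0, w i r) (𝓝[>] (0:ℝ)) (𝓝 1) := by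
      have h := (tendsto_const_nhds (α := ℝ) (x := (1:ℝ)) (f := 𝓝[>] (0:ℝ))).sub hsum0
      rw [sub_zero] at h
      exact h
    exact h1.congr' (by filter_upwards [hmemIoo] with r hr using (hwsum1 r hr).symm)
  -- assemble
  have hsum : Tendsto (fun r => ∑ i, w i r * G i r) (𝓝[>] (0:ℝ)) (𝓝 L) := by
    have hterm : Tendsto (fun r => w i0 r * G i0 r +
        ∑ i ∈ Finset.univ.erase i0, w i r * G i r) (𝓝[>] (0:ℝ)) (𝓝 L) := by
      have hG0 : Tendsto (fun r => G i0 r) (𝓝[>] (0:ℝ)) (𝓝 L) := hL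
      have h1 : Tendsto (fun r => w i0 r * G i0 r) (𝓝[>] (0:ℝ)) (𝓝 L) := by
        have h := hw0.mul hG0
        rw [one_mul] at h
        exact h
      have h2 : Tendsto (fun r => ∑ i ∈ Finset.univ.erase i0, w i r * G i r)
          (𝓝[>] (0:ℝ)) (𝓝 0) := by
        have h := tendsto_finset_sum (Finset.univ.erase i0)
          (fun i hi => hwG i (Finset.ne_of_mem_erase hi))
        rw [Finset.sum_const_zero] at h
        exact h
      have h := h1.add h2
      rw [add_zero] at h
      exact h
    refine hterm.congr (fun r => Finset.add_sum_erase _ (fun i => w i r * G i r) (Finset.mem_univ i0))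
  refine hsum.congr' ?_
  filter_upwards [hmemIoo] with r hr
  exact (hmain r hr).symm
end

section
/- Let (X,d) be a metric space equipped with μ = μ_1 + ⋯ + μ_k, where each μ_j is a Borel measure supported on a closed set Y_j ⊆ X and is Q_j-Ahlfors regular on Y_j, with Q_1 ≤ Q_2 ≤ ⋯ ≤ Q_k. Let u ∈ L¹_loc(X,μ) and let x ∈ ⋂_{i=1}^{l} Y_{j_i}, where {j_i} is an increasing subsequence of {1,…,k} with x ∉ Y_j for j ∉ {j_1,…,j_l}, and suppose Q_{j_1} = Q_{j_2} = ⋯ = Q_{j_n} < Q_{j_{n+1}} ≤ ⋯ ≤ Q_{j_l}. Assume: (i) r^{Q_{j_i} − Q_{j_1}} |Δ_{μ_{j_i}, r} u(x)| → 0 as r → 0⁺ for all n+1 ≤ i ≤ l; (ii) the AMV Laplacians Δ_{μ_{j_1}} u(x), …, Δ_{μ_{j_n}} u(x) all exist; (iii) for each 1 ≤ i ≤ n the limit α_i(x) := lim_{r→0⁺} μ_{j_i}(B_r(x)) / μ(B_r(x)) exists. Then Δ_μ u(x) exists, Δ_μ u(x) = Σ_{i=1}^{n} α_i(x) Δ_{μ_{j_i}}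 u(x), and Σ_{i=1}^{n} α_i(x) = 1. -/
open MeasureTheory Metric Filter Topology Real
open scoped ENNReal

lemma restrict_finset_sum_aux {X : Type*} [MeasurableSpace X] {ι : Type*} (s : Finset ι)
    (μ : ι → Measure X) (t : Set X) :
    (∑ m ∈ s, μ m).restrict t = ∑ m ∈ s, (μ m).restrict t := by
  classical
  induction s using Finset.induction with
  | empty => simp
  | insert _ _ h ih => rw [Finset.sum_insert h, Finset.sum_insert h, Measure.restrict_add, ih]

/-- For `μ = μ₁ + ⋯ + μ_k` with nondecreasing Ahlfors dimensions `Q₁ ≤ ⋯ ≤ Q_k`,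
a point `x` in the strata `Y_{j₁}, …, Y_{j_l}` only, with `Q_{j₁} = ⋯ = Q_{j_nn} < Q_{j_{nn+1}}`:
if the higher-dimensional rescaled AMV Laplacians vanish in the limit, the AMV Laplacians of the
lowest strata exist, and the density ratios `α_i(x)` exist, then `Δ_μ u(x)` exists, equals
`Σ_{i=1}^{nn} α_i(x) Δ_{μ_{j_i}} u(x)`, and `Σ_{i=1}^{nn} α_i(x) = 1`. -/
theorem amv_laplacian_stratified_measure_nondecreasing
    {X : Type*} [MetricSpace X] [MeasurableSpace X] [BorelSpace X]
    (k : ℕ) (μs : Fin k → Measure X) (Y : Fin k → Set X)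
    (Q : Fin k → ℝ) (c C : Fin k → ℝ)
    (hYclosed : ∀ m, IsClosed (Y m))
    (hsupp : ∀ m, μs m (Y m)ᶜ = 0)
    (hc : ∀ m, 0 < c m) (hcC : ∀ m, c m ≤ C m)
    (hQnn : ∀ m, 0 ≤ Q m)
    (hAhlfors : ∀ m, ∀ y ∈ Y m, ∀ r : ℝ, 0 < r →
      ENNReal.ofReal (c m * r ^ Q m) ≤ μs m (Metric.ball y r) ∧
      μs m (Metric.ball y r) ≤ ENNReal.ofReal (C m * r ^ Q m))
    (hQmono : Monotone Q)
    (u : X → ℝ) (hu : LocallyIntegrable u (∑ m, μs m))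
    (l : ℕ) (hl : 0 < l) (js : Fin l → Fin k) (hjs : StrictMono js)
    (x : X) (hx : ∀ i, x ∈ Y (js i))
    (hxnot : ∀ m : Fin k, m ∉ Set.range js → x ∉ Y m)
    (nn : ℕ) (hnn : 1 ≤ nn) (hnl : nn ≤ l)
    (hQeq : ∀ i : Fin l, (i : ℕ) < nn → Q (js i) = Q (js ⟨0, hl⟩))
    (hQgt : ∀ i : Fin l, nn ≤ (i : ℕ) → Q (js ⟨0, hl⟩) < Q (js i))
    (hrest : ∀ i : Fin l, nn ≤ (i : ℕ) → Filter.Tendsto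
      (fun r : ℝ => r ^ (Q (js i) - Q (js ⟨0, hl⟩)) *
        |(1 / r ^ 2) * ⨍ y in Metric.ball x r, (u y - u x) ∂(μs (js i))|)
      (𝓝[>] (0 : ℝ)) (𝓝 0))
    (L : Fin l → ℝ)
    (hL : ∀ i : Fin l, (i : ℕ) < nn → Filter.Tendsto
      (fun r : ℝ => (1 / r ^ 2) * ⨍ y in Metric.ball x r, (u y - u x) ∂(μs (js i)))
      (𝓝[>] (0 : ℝ)) (𝓝 (L i)))
    (α : Fin l → ℝ)
    (hα : ∀ i : Fin l, (i : ℕ) < nn → Filter.Tendsto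
      (fun r : ℝ => (μs (js i) (Metric.ball x r)).toReal / ((∑ m, μs m) (Metric.ball x r)).toReal)
      (𝓝[>] (0 : ℝ)) (𝓝 (α i))) :
    Filter.Tendsto
      (fun r : ℝ => (1 / r ^ 2) * ⨍ y in Metric.ball x r, (u y - u x) ∂(∑ m, μs m))
      (𝓝[>] (0 : ℝ))
      (𝓝 (∑ i ∈ Finset.univ.filter (fun i : Fin l => (i : ℕ) < nn), α i * L i)) ∧
    (∑ i ∈ Finset.univ.filter (fun i : Fin l => (i : ℕ) < nn), α i) = 1 := by
  classical
  set j0 : Fin l := ⟨0, hl⟩ with hj0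
  set μt : Measure X := ∑ m, μs m with hμt
  -- pointwise ball measure facts
  have hνub : ∀ (i : Fin l) (r : ℝ), 0 < r →
      μs (js i) (Metric.ball x r) ≤ ENNReal.ofReal (C (js i) * r ^ Q (js i)) :=
    fun i r hr => (hAhlfors _ _ (hx i) r hr).2
  have hνlb : ∀ (i : Fin l) (r : ℝ), 0 < r →
      ENNReal.ofReal (c (js i) * r ^ Q (js i)) ≤ μs (js i) (Metric.ball x r) :=
    fun i r hr => (hAhlfors _ _ (hx i) r hr).1
  have hνlt : ∀ (i : Fin l) (r : ℝ), 0 < r → μs (js i) (Metric.ball x r) < ⊤ :=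
    fun i r hr => lt_of_le_of_lt (hνub i r hr) ENNReal.ofReal_lt_top
  have hνtub : ∀ (i : Fin l) (r : ℝ), 0 < r →
      (μs (js i) (Metric.ball x r)).toReal ≤ C (js i) * r ^ Q (js i) := by
    intro i r hr
    exact ENNReal.toReal_le_of_le_ofReal
      (mul_nonneg ((hc _).trans_le (hcC _)).le (Real.rpow_pos_of_pos hr _).le) (hνub i r hr)
  have hνtlb : ∀ (i : Fin l) (r : ℝ), 0 < r →
      c (js i) * r ^ Q (js i) ≤ (μs (js i) (Metric.ball x r)).toReal := by
    intro i r hr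
    have h2 := ENNReal.toReal_mono (hνlt i r hr).ne (hνlb i r hr)
    rwa [ENNReal.toReal_ofReal (mul_pos (hc _) (Real.rpow_pos_of_pos hr _)).le] at h2
  have hνtpos : ∀ (i : Fin l) (r : ℝ), 0 < r → 0 < (μs (js i) (Metric.ball x r)).toReal := by
    intro i r hr
    refine lt_of_lt_of_le ?_ (hνtlb i r hr)
    exact mul_pos (hc _) (Real.rpow_pos_of_pos hr _)
  -- eventually: measures outside the range of js vanish on the ball
  have hzero : ∀ᶠ r in 𝓝[>] (0:ℝ), ∀ m : Fin k, m ∉ Set.range js → μs m (Metric.ball x r) = 0 := by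
    rw [eventually_all]
    intro m
    by_cases hm : m ∈ Set.range js
    · exact Eventually.of_forall fun r h => absurd hm h
    · have hxm := hxnot m hm
      obtain ⟨ε, hε, hball⟩ := Metric.mem_nhds_iff.mp
        ((hYclosed m).isOpen_compl.mem_nhds hxm)
      filter_upwards [Ioo_mem_nhdsGT_of_mem (Set.left_mem_Ico.mpr hε)] with r hr _
      exact measure_mono_null
        (fun y hy => hball (Metric.ball_subset_ball hr.2.le hy)) (hsupp m)
  -- ball measure splitting
  have hμsum : ∀ r : ℝ, (∀ m : Fin k, m ∉ Set.range js → μs m (Metric.ball x r) = 0) →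
      μt (Metric.ball x r) = ∑ i : Fin l, μs (js i) (Metric.ball x r) := by
    intro r h0
    rw [hμt, Measure.finset_sum_apply]
    rw [← Finset.sum_subset (Finset.subset_univ (Finset.univ.image js))
      (fun m _ hm => h0 m
        (fun ⟨i, hi⟩ => hm (Finset.mem_image.mpr ⟨i, Finset.mem_univ i, hi⟩)))]
    exact (Finset.sum_image (fun a _ b _ hab => hjs.injective hab))
  have hμile : ∀ i : Fin l, μs (js i) ≤ μt := by
    intro i
    rw [hμt]
    refine Measure.le_iff.mpr fun s hs => ?_
    rw [Measure.finset_sum_apply]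
    exact Finset.single_le_sum (f := fun m => μs m s) (fun m _ => zero_le) (Finset.mem_univ _)
  -- eventual integrability
  have hint : ∀ᶠ r in 𝓝[>] (0:ℝ), IntegrableOn u (Metric.ball x r) μt := by
    obtain ⟨s, hs, hsint⟩ := hu x
    obtain ⟨ε, hε, hball⟩ := Metric.mem_nhds_iff.mp hs
    filter_upwards [Ioo_mem_nhdsGT_of_mem (Set.left_mem_Ico.mpr hε)] with r hr
    exact hsint.mono_set (subset_trans (Metric.ball_subset_ball hr.2.le) hball)
  -- the key eventual identity
  have key : ∀ᶠ r in 𝓝[>] (0:ℝ),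
      ((1 / r ^ 2) * ⨍ y in Metric.ball x r, (u y - u x) ∂μt
        = ∑ i : Fin l, ((μs (js i) (Metric.ball x r)).toReal / (μt (Metric.ball x r)).toReal)
            * ((1 / r ^ 2) * ⨍ y in Metric.ball x r, (u y - u x) ∂(μs (js i))))
      ∧ (∑ i : Fin l,
          (μs (js i) (Metric.ball x r)).toReal / (μt (Metric.ball x r)).toReal) = 1 := by
    filter_upwards [hzero, hint, self_mem_nhdsWithin] with r h0 hIu hr
    replace hr : (0:ℝ) < r := hr
    have hμeq := hμsum r h0
    have hμlt : μt (Metric.ball x r) < ⊤ := by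
      rw [hμeq]
      exact ENNReal.sum_lt_top.mpr fun i _ => hνlt i r hr
    have hμtoReal : (μt (Metric.ball x r)).toReal
        = ∑ i : Fin l, (μs (js i) (Metric.ball x r)).toReal := by
      rw [hμeq, ENNReal.toReal_sum fun i _ => (hνlt i r hr).ne]
    have hμtpos : 0 < (μt (Metric.ball x r)).toReal := by
      rw [hμtoReal]
      exact lt_of_lt_of_le (hνtpos j0 r hr)
        (Finset.single_le_sum
          (f := fun i : Fin l => (μs (js i) (Metric.ball x r)).toReal)
          (fun i _ => ENNReal.toReal_nonneg) (Finset.mem_univ j0))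
    have hres : μt.restrict (Metric.ball x r)
        = ∑ i : Fin l, (μs (js i)).restrict (Metric.ball x r) := by
      rw [hμt, restrict_finset_sum_aux]
      rw [← Finset.sum_subset (Finset.subset_univ (Finset.univ.image js))
        (fun m _ hm => Measure.restrict_eq_zero.mpr (h0 m
          (fun ⟨i, hi⟩ => hm (Finset.mem_image.mpr ⟨i, Finset.mem_univ i, hi⟩))))]
      exact (Finset.sum_image (fun a _ b _ hab => hjs.injective hab))
    have hIis : ∀ i : Fin l, IntegrableOn (fun y => u y - u x) (Metric.ball x r) (μs (js i)) := by
      intro i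
      refine ((hIu.mono_measure (hμile i)).sub ?_)
      exact integrableOn_const (hνlt i r hr).ne
    have hintsum : ∫ y in Metric.ball x r, (u y - u x) ∂μt
        = ∑ i : Fin l, ∫ y in Metric.ball x r, (u y - u x) ∂(μs (js i)) := by
      rw [show (∫ y in Metric.ball x r, (u y - u x) ∂μt)
          = ∫ y, (u y - u x) ∂(μt.restrict (Metric.ball x r)) from rfl, hres,
        integral_finset_sum_measure fun i _ => hIis i]
    constructor
    · have hterm : ∀ i : Fin l,
          ((μs (js i) (Metric.ball x r)).toReal / (μt (Metric.ball x r)).toReal)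
            * ((1 / r ^ 2) * ⨍ y in Metric.ball x r, (u y - u x) ∂(μs (js i)))
          = (1 / r ^ 2) * ((μt (Metric.ball x r)).toReal⁻¹
              * ∫ y in Metric.ball x r, (u y - u x) ∂(μs (js i))) := by
        intro i
        rw [setAverage_eq, smul_eq_mul, measureReal_def]
        have hni : (μs (js i) (Metric.ball x r)).toReal ≠ 0 := (hνtpos i r hr).ne'
        field_simp
      rw [Finset.sum_congr rfl fun i _ => hterm i, ← Finset.mul_sum, ← Finset.mul_sum,
        setAverage_eq, smul_eq_mul, hintsum, measureReal_def]
    · rw [← Finset.sum_div, ← hμtoReal, div_self hμtpos.ne']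
  -- ratio upper bound for higher strata
  have hratio_bound : ∀ i : Fin l, ∀ᶠ r in 𝓝[>] (0:ℝ),
      (μs (js i) (Metric.ball x r)).toReal / (μt (Metric.ball x r)).toReal
        ≤ (C (js i) / c (js j0)) * r ^ (Q (js i) - Q (js j0)) := by
    intro i
    filter_upwards [hzero, self_mem_nhdsWithin] with r h0 hr
    replace hr : (0:ℝ) < r := hr
    have hμeq := hμsum r h0
    have hμlt : μt (Metric.ball x r) < ⊤ := by
      rw [hμeq]
      exact ENNReal.sum_lt_top.mpr fun i _ => hνlt i r hr
    have h1 : (μs (js j0) (Metric.ball x r)).toReal ≤ (μt (Metric.ball x r)).toReal := by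
      refine ENNReal.toReal_mono hμlt.ne ?_
      rw [hμeq]
      exact Finset.single_le_sum (f := fun i : Fin l => μs (js i) (Metric.ball x r))
        (fun i _ => zero_le) (Finset.mem_univ j0)
    calc (μs (js i) (Metric.ball x r)).toReal / (μt (Metric.ball x r)).toReal
        ≤ (μs (js i) (Metric.ball x r)).toReal / (μs (js j0) (Metric.ball x r)).toReal :=
          div_le_div_of_nonneg_left ENNReal.toReal_nonneg (hνtpos j0 r hr) h1
      _ ≤ (C (js i) * r ^ Q (js i)) / (c (js j0) * r ^ Q (js j0)) := by
          refine div_le_div₀ (mul_nonneg ((hc _).trans_le (hcC _)).le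
              (Real.rpow_pos_of_pos hr _).le) (hνtub i r hr)
            (mul_pos (hc _) (Real.rpow_pos_of_pos hr _)) (hνtlb j0 r hr)
      _ = (C (js i) / c (js j0)) * r ^ (Q (js i) - Q (js j0)) := by
          rw [Real.rpow_sub hr, div_mul_div_comm]
  -- ratios of higher strata tend to 0
  have hratio_zero : ∀ i : Fin l, nn ≤ (i : ℕ) →
      Tendsto (fun r : ℝ =>
        (μs (js i) (Metric.ball x r)).toReal / (μt (Metric.ball x r)).toReal)
      (𝓝[>] (0:ℝ)) (𝓝 0) := by
    intro i hi
    have hp : 0 < Q (js i) - Q (js j0) := sub_pos.mpr (hQgt i hi)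
    have hb : Tendsto (fun r : ℝ => (C (js i) / c (js j0)) * r ^ (Q (js i) - Q (js j0)))
        (𝓝[>] (0:ℝ)) (𝓝 0) := by
      have h2 : Tendsto (fun r : ℝ => r ^ (Q (js i) - Q (js j0))) (𝓝[>] (0:ℝ)) (𝓝 0) := by
        have h3 := (Real.continuousAt_rpow_const 0 _ (Or.inr hp.le)).tendsto
        rw [Real.zero_rpow hp.ne'] at h3
        exact h3.mono_left nhdsWithin_le_nhds
      simpa using h2.const_mul (C (js i) / c (js j0))
    exact squeeze_zero'
      (Eventually.of_forall fun r => div_nonneg ENNReal.toReal_nonneg ENNReal.toReal_nonneg)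
      (hratio_bound i) hb
  -- products for higher strata tend to 0
  have hterm_zero : ∀ i : Fin l, nn ≤ (i : ℕ) →
      Tendsto (fun r : ℝ =>
        ((μs (js i) (Metric.ball x r)).toReal / (μt (Metric.ball x r)).toReal)
          * ((1 / r ^ 2) * ⨍ y in Metric.ball x r, (u y - u x) ∂(μs (js i))))
      (𝓝[>] (0:ℝ)) (𝓝 0) := by
    intro i hi
    have hb2 : Tendsto (fun r : ℝ => (C (js i) / c (js j0)) * (r ^ (Q (js i) - Q (js j0))
        * |(1 / r ^ 2) * ⨍ y in Metric.ball x r, (u y - u x) ∂(μs (js i))|))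
        (𝓝[>] (0:ℝ)) (𝓝 0) := by
      simpa using (hrest i hi).const_mul (C (js i) / c (js j0))
    refine squeeze_zero_norm' ?_ hb2
    filter_upwards [hratio_bound i] with r hb
    rw [Real.norm_eq_abs, abs_mul,
      abs_of_nonneg (div_nonneg ENNReal.toReal_nonneg ENNReal.toReal_nonneg)]
    calc _ ≤ ((C (js i) / c (js j0)) * r ^ (Q (js i) - Q (js j0)))
          * |(1 / r ^ 2) * ⨍ y in Metric.ball x r, (u y - u x) ∂(μs (js i))| :=
        mul_le_mul_of_nonneg_right hb (abs_nonneg _)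
      _ = _ := by ring
  -- the filter/partition of the index sum
  have hsplit : ∀ f : Fin l → ℝ, ∑ i : Fin l, f i
      = (∑ i ∈ Finset.univ.filter (fun i : Fin l => (i : ℕ) < nn), f i)
        + ∑ i ∈ Finset.univ.filter (fun i : Fin l => ¬ (i : ℕ) < nn), f i :=
    fun f => (Finset.sum_filter_add_sum_filter_not _ _ _).symm
  -- Tendsto of the full ratio-weighted sum
  have hsum : Tendsto (fun r : ℝ => ∑ i : Fin l,
        ((μs (js i) (Metric.ball x r)).toReal / (μt (Metric.ball x r)).toReal)
          * ((1 / r ^ 2) * ⨍ y in Metric.ball x r, (u y - u x) ∂(μs (js i))))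
      (𝓝[>] (0:ℝ))
      (𝓝 (∑ i ∈ Finset.univ.filter (fun i : Fin l => (i : ℕ) < nn), α i * L i)) := by
    have h1 : Tendsto (fun r : ℝ =>
        ∑ i ∈ Finset.univ.filter (fun i : Fin l => (i : ℕ) < nn),
          ((μs (js i) (Metric.ball x r)).toReal / (μt (Metric.ball x r)).toReal)
            * ((1 / r ^ 2) * ⨍ y in Metric.ball x r, (u y - u x) ∂(μs (js i))))
        (𝓝[>] (0:ℝ))
        (𝓝 (∑ i ∈ Finset.univ.filter (fun i : Fin l => (i : ℕ) < nn), α i * L i)) := by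
      refine tendsto_finset_sum _ fun i hi => ?_
      have hilt : (i : ℕ) < nn := (Finset.mem_filter.mp hi).2
      exact (hα i hilt).mul (hL i hilt)
    have h2 : Tendsto (fun r : ℝ =>
        ∑ i ∈ Finset.univ.filter (fun i : Fin l => ¬ (i : ℕ) < nn),
          ((μs (js i) (Metric.ball x r)).toReal / (μt (Metric.ball x r)).toReal)
            * ((1 / r ^ 2) * ⨍ y in Metric.ball x r, (u y - u x) ∂(μs (js i))))
        (𝓝[>] (0:ℝ)) (𝓝 0) := by
      have h3 := tendsto_finset_sum
        (Finset.univ.filter (fun i : Fin l => ¬ (i : ℕ) < nn))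
        (fun i hi => hterm_zero i (not_lt.mp (Finset.mem_filter.mp hi).2))
      simpa using h3
    have h4 := h1.add h2
    rw [add_zero] at h4
    refine h4.congr fun r => ?_
    exact (hsplit _).symm
  constructor
  · exact Tendsto.congr' (key.mono fun r h => h.1.symm) hsum
  · have hg1 : Tendsto (fun r : ℝ => ∑ i : Fin l,
        (μs (js i) (Metric.ball x r)).toReal / (μt (Metric.ball x r)).toReal)
        (𝓝[>] (0:ℝ)) (𝓝 1) :=
      Tendsto.congr' (key.mono fun r h => h.2.symm) tendsto_const_nhds
    have hg2 : Tendsto (fun r : ℝ => ∑ i : Fin l,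
        (μs (js i) (Metric.ball x r)).toReal / (μt (Metric.ball x r)).toReal)
        (𝓝[>] (0:ℝ))
        (𝓝 (∑ i ∈ Finset.univ.filter (fun i : Fin l => (i : ℕ) < nn), α i)) := by
      have h1 : Tendsto (fun r : ℝ =>
          ∑ i ∈ Finset.univ.filter (fun i : Fin l => (i : ℕ) < nn),
            (μs (js i) (Metric.ball x r)).toReal / (μt (Metric.ball x r)).toReal)
          (𝓝[>] (0:ℝ))
          (𝓝 (∑ i ∈ Finset.univ.filter (fun i : Fin l => (i : ℕ) < nn), α i)) :=
        tendsto_finset_sum _ fun i hi => hα i (Finset.mem_filter.mp hi).2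
      have h2 : Tendsto (fun r : ℝ =>
          ∑ i ∈ Finset.univ.filter (fun i : Fin l => ¬ (i : ℕ) < nn),
            (μs (js i) (Metric.ball x r)).toReal / (μt (Metric.ball x r)).toReal)
          (𝓝[>] (0:ℝ)) (𝓝 0) := by
        have h3 := tendsto_finset_sum
          (Finset.univ.filter (fun i : Fin l => ¬ (i : ℕ) < nn))
          (fun i hi => hratio_zero i (not_lt.mp (Finset.mem_filter.mp hi).2))
        simpa using h3
      have h4 := h1.add h2
      rw [add_zero] at h4
      refine h4.congr fun r => ?_
      exact (hsplit _).symm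
    exact tendsto_nhds_unique hg2 hg1
end

section
/- Let (X,d,μ) be a proper metric measure space (closed bounded sets are compact) with μ a Borel measure that is positive on every nonempty open set and finite on balls. Let Ω ⊆ X be a nonempty bounded open set with nonempty boundary ∂Ω, and let u : Ω̄ → ℝ̄ be upper semicontinuous on Ω̄ with u ∈ L¹_loc(Ω,μ), such that the upper AMV Laplacian satisfies Δ̄_μ u(x) > 0 for every x ∈ Ω. Then max_{∂Ω} u = max_{Ω̄} u, and u does not attain its maximum over Ω̄ at any point of Ω. -/
open MeasureTheory Metric Filter Topology Real
open scoped ENNReal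

/-- Upper semicontinuous functions attain their max on nonempty compact sets. -/
theorem usc_exists_max' {X : Type*} [TopologicalSpace X] {K : Set X} (hK : IsCompact K)
    (hne : K.Nonempty) {u : X → ℝ} (hu : UpperSemicontinuousOn u K) :
    ∃ x ∈ K, ∀ y ∈ K, u y ≤ u x := by
  by_contra hcon
  push_neg at hcon
  choose y hyK hy using hcon
  have hU : ∀ x (hx : x ∈ K), ∃ U : Set X, IsOpen U ∧ x ∈ U ∧
      ∀ z ∈ U ∩ K, u z < u (y x hx) := by
    intro x hx
    have := hu x hx (u (y x hx)) (hy x hx)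
    rcases mem_nhdsWithin.1 this with ⟨U, hUo, hxU, hsub⟩
    exact ⟨U, hUo, hxU, fun z hz => hsub hz⟩
  choose U hUo hxU hUsub using hU
  obtain ⟨t, ht⟩ := hK.elim_nhds_subcover' U (fun x hx => (hUo x hx).mem_nhds (hxU x hx))
  obtain ⟨z, hz⟩ := hne
  have hzt := ht hz
  simp only [Set.mem_iUnion] at hzt
  obtain ⟨x₀, hx₀t, _⟩ := hzt
  obtain ⟨b, hbt, hb⟩ := t.exists_max_image (fun x : K => u (y x x.2)) ⟨x₀, hx₀t⟩
  have hyb := ht (hyK b b.2)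
  simp only [Set.mem_iUnion] at hyb
  obtain ⟨c, hct, hyc⟩ := hyb
  have h1 : u (y b b.2) < u (y c c.2) := hUsub c c.2 _ ⟨hyc, hyK b b.2⟩
  have h2 : u (y c c.2) ≤ u (y b b.2) := hb c hct
  linarith

/-- Maximum principle for strictly upper AMV subharmonic functions: on a proper
metric measure space, if `u` is u.s.c. on `Ω̄`, locally integrable on `Ω`, and its upper AMV
Laplacian is `> 0` on `Ω`, then `max_{∂Ω} u = max_{Ω̄} u` and `u` does not attain its maximum
in `Ω`. -/
theorem maximum_principle_strictly_upper_amv_subharmonic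
    {X : Type*} [MetricSpace X] [ProperSpace X] [MeasurableSpace X] [BorelSpace X]
    (μ : Measure X) [μ.IsOpenPosMeasure]
    (hfin : ∀ (x : X) (r : ℝ), μ (Metric.ball x r) < ⊤)
    (Ω : Set X) (hΩo : IsOpen Ω) (hΩne : Ω.Nonempty) (hΩb : Bornology.IsBounded Ω)
    (hfr : (frontier Ω).Nonempty)
    (u : X → ℝ)
    (husc : UpperSemicontinuousOn u (closure Ω))
    (hloc : LocallyIntegrableOn u Ω μ)
    (hsub : ∀ x ∈ Ω, 0 < Filter.limsup
      (fun r : ℝ => (1 / r ^ 2) * ⨍ y in Metric.ball x r ∩ closure Ω, (u y - u x) ∂μ)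
      (𝓝[>] (0 : ℝ))) :
    sSup (u '' frontier Ω) = sSup (u '' closure Ω) ∧
    ∀ x ∈ Ω, u x ≠ sSup (u '' closure Ω) := by
  have hcc : IsCompact (closure Ω) := Metric.isCompact_of_isClosed_isBounded
    isClosed_closure hΩb.closure
  have hcne : (closure Ω).Nonempty := hΩne.closure
  -- no interior max point
  have hnomax : ∀ x ∈ Ω, ¬ (∀ y ∈ closure Ω, u y ≤ u x) := by
    intro x hx hmax
    have hle : ∀ r ∈ Set.Ioi (0 : ℝ),
        (1 / r ^ 2) * ⨍ y in Metric.ball x r ∩ closure Ω, (u y - u x) ∂μ ≤ 0 := by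
      intro r hr
      have hs : MeasurableSet (Metric.ball x r ∩ closure Ω) :=
        measurableSet_ball.inter isClosed_closure.measurableSet
      have hint : ∫ y in Metric.ball x r ∩ closure Ω, (u y - u x) ∂μ ≤ 0 := by
        apply integral_nonpos_of_ae
        filter_upwards [ae_restrict_mem hs] with y hy
        simpa using sub_nonpos.2 (hmax y hy.2)
      have havg : (⨍ y in Metric.ball x r ∩ closure Ω, (u y - u x) ∂μ) ≤ 0 := by
        rw [setAverage_eq]
        exact smul_nonpos_of_nonneg_of_nonpos (by positivity) hint
      have h2 : (0 : ℝ) ≤ 1 / r ^ 2 := by positivity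
      exact mul_nonpos_iff.2 (Or.inl ⟨h2, havg⟩)
    have hev : ∀ᶠ r in 𝓝[>] (0 : ℝ),
        (1 / r ^ 2) * ⨍ y in Metric.ball x r ∩ closure Ω, (u y - u x) ∂μ ≤ 0 :=
      eventually_nhdsWithin_of_forall hle
    have hls := hsub x hx
    have : Filter.limsup
        (fun r : ℝ => (1 / r ^ 2) * ⨍ y in Metric.ball x r ∩ closure Ω, (u y - u x) ∂μ)
        (𝓝[>] (0 : ℝ)) ≤ 0 := by
      rw [Filter.limsup_eq]
      by_cases hb : BddBelow {a : ℝ | ∀ᶠ r in 𝓝[>] (0 : ℝ),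
          (1 / r ^ 2) * ⨍ y in Metric.ball x r ∩ closure Ω, (u y - u x) ∂μ ≤ a}
      · exact csInf_le hb hev
      · rw [Real.sInf_of_not_bddBelow hb]
    linarith
  -- max point on closure
  obtain ⟨x₀, hx₀c, hx₀max⟩ := usc_exists_max' hcc hcne husc
  have hx₀f : x₀ ∈ frontier Ω := by
    rw [hΩo.frontier_eq]
    refine ⟨hx₀c, fun hx₀Ω => hnomax x₀ hx₀Ω hx₀max⟩
  have hbdd : BddAbove (u '' closure Ω) := by
    refine ⟨u x₀, ?_⟩
    rintro _ ⟨y, hy, rfl⟩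
    exact hx₀max y hy
  have hsupc : sSup (u '' closure Ω) = u x₀ := by
    apply le_antisymm
    · apply csSup_le (hcne.image u)
      rintro _ ⟨y, hy, rfl⟩
      exact hx₀max y hy
    · exact le_csSup hbdd ⟨x₀, hx₀c, rfl⟩
  have hfrsub : frontier Ω ⊆ closure Ω := frontier_subset_closure
  have hsupf : sSup (u '' frontier Ω) = u x₀ := by
    apply le_antisymm
    · apply csSup_le (hfr.image u)
      rintro _ ⟨y, hy, rfl⟩
      exact hx₀max y (hfrsub hy)
    · exact le_csSup (hbdd.mono (Set.image_mono (f := u) hfrsub)) ⟨x₀, hx₀f, rfl⟩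
  refine ⟨hsupf.trans hsupc.symm, fun x hx hxe => ?_⟩
  apply hnomax x hx
  intro y hy
  calc u y ≤ u x₀ := hx₀max y hy
    _ = u x := by rw [← hsupc, ← hxe]
end

section
/- On ℝ with the Euclidean distance and the Lebesgue measure L¹, let sgn denote the sign function with sgn 0 = 0, and define u(x) := sgn x − sgn(x−1) and Ω := (−1, 2). Then for every x ∈ Ω the AMV Laplacian exists and Δ_{L¹} u(x) = 0 (u is pointwise AMV harmonic in Ω), yet the maximum principle fails: u = 0 on ∂Ω = {−1, 2} while max_{Ω̄} u = 2 > 0 is attained at interior points. -/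
open MeasureTheory Metric Filter Topology Real
open scoped ENNReal

/-- Average of `u y - u x` over a set vanishes when the integral does. -/
lemma amv_aux_avg_eq_zero {f : ℝ → ℝ} {s : Set ℝ}
    (h : ∫ y in s, f y ∂volume = 0) : ⨍ y in s, f y ∂volume = 0 := by
  rw [setAverage_eq, h, smul_zero]

/-- If `u` is constant on the ball, the integral of `u y - u x` vanishes. -/
lemma amv_aux_const_case {u : ℝ → ℝ} {x r : ℝ}
    (h : ∀ y ∈ Metric.ball x r, u y = u x) :
    ∫ y in Metric.ball x r, (u y - u x) ∂volume = 0 := by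
  rw [setIntegral_congr_fun (g := fun _ => (0 : ℝ)) measurableSet_ball
    (fun y hy => by rw [h y hy]; ring)]
  simp

/-- Integral over a symmetric interval of a function which is `c` on the left half
and `-c` on the right half vanishes. -/
lemma amv_aux_split {g : ℝ → ℝ} {a m b c : ℝ} (ham : a < m) (hmb : m < b)
    (hlen : m - a = b - m)
    (h1 : ∀ y ∈ Set.Ioo a m, g y = c) (h2 : ∀ y ∈ Set.Ioo m b, g y = -c) :
    ∫ y in Set.Ioo a b, g y ∂volume = 0 := by
  have hsplit : Set.Ioo a b = Set.Ioo a m ∪ Set.Ico m b :=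
    (Set.Ioo_union_Ico_eq_Ioo ham hmb.le).symm
  have hdisj : Disjoint (Set.Ioo a m) (Set.Ico m b) := by
    apply Set.disjoint_left.2
    rintro y ⟨_, hy1⟩ ⟨hy2, _⟩
    exact absurd hy2 (not_le.2 hy1)
  have hint1 : IntegrableOn g (Set.Ioo a m) volume := by
    apply (integrableOn_const (C := c) measure_Ioo_lt_top.ne enorm_ne_top).congr
    exact (ae_restrict_iff' measurableSet_Ioo).2
      (MeasureTheory.ae_of_all _ fun y hy => (h1 y hy).symm)
  have hint2 : IntegrableOn g (Set.Ico m b) volume := by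
    apply (integrableOn_const (C := -c) measure_Ico_lt_top.ne enorm_ne_top).congr
    refine (ae_restrict_iff' measurableSet_Ico).2 ?_
    have h0 : ∀ᵐ y : ℝ ∂volume, y ≠ m := by
      refine ae_iff.2 ?_
      have : {y : ℝ | ¬ y ≠ m} = {m} := by ext y; simp
      rw [this, Real.volume_singleton]
    filter_upwards [h0] with y hy hym
    exact (h2 y ⟨lt_of_le_of_ne hym.1 (Ne.symm hy), hym.2⟩).symm
  rw [hsplit, setIntegral_union hdisj measurableSet_Ico hint1 hint2,
    setIntegral_congr_fun measurableSet_Ioo h1,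
    integral_Ico_eq_integral_Ioo,
    setIntegral_congr_fun measurableSet_Ioo h2,
    setIntegral_const, setIntegral_const,
    Real.volume_real_Ioo_of_le (by linarith), Real.volume_real_Ioo_of_le (by linarith)]
  rw [hlen]
  simp only [smul_eq_mul]
  ring

/-- On `(ℝ, d_e, L¹)`, the function `u = sgn x − sgn(x−1)` is pointwise AMV
harmonic in `Ω = (−1, 2)`, yet the maximum principle fails: `u = 0` on `∂Ω = {−1, 2}` while
`max_{Ω̄} u = 2 > 0` is attained at interior points. -/
theorem amv_harmonic_sign_violates_maximum_principle
    (u : ℝ → ℝ) (hu : u = fun x => Real.sign x - Real.sign (x - 1)) :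
    (∀ x ∈ Set.Ioo (-1 : ℝ) 2, Filter.Tendsto
      (fun r : ℝ => (1 / r ^ 2) * ⨍ y in Metric.ball x r, (u y - u x) ∂volume)
      (𝓝[>] (0 : ℝ)) (𝓝 0)) ∧
    (∀ x ∈ ({-1, 2} : Set ℝ), u x = 0) ∧
    (frontier (Set.Ioo (-1 : ℝ) 2) = {-1, 2}) ∧
    (∀ y ∈ Set.Icc (-1 : ℝ) 2, u y ≤ 2) ∧
    (∃ x ∈ Set.Ioo (-1 : ℝ) 2, u x = 2) := by
  have huval : ∀ x : ℝ, u x = Real.sign x - Real.sign (x - 1) := fun x => by rw [hu]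
  refine ⟨?_, ?_, ?_, ?_, ?_⟩
  · -- AMV harmonic
    intro x hx
    obtain ⟨hx1, hx2⟩ := hx
    -- we show eventual equality to 0 in 𝓝[>] 0
    have main : ∃ ε > (0 : ℝ), ∀ r ∈ Set.Ioo (0 : ℝ) ε,
        ∫ y in Metric.ball x r, (u y - u x) ∂volume = 0 := by
      rcases lt_trichotomy x 0 with hx0 | hx0 | hx0
      · -- x ∈ (-1, 0) : u is 0 near x
        refine ⟨min (-x) (x + 1), by simp [lt_min_iff]; constructor <;> linarith, ?_⟩
        rintro r ⟨hr0, hrε⟩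
        apply amv_aux_const_case
        intro y hy
        rw [Real.ball_eq_Ioo] at hy
        obtain ⟨hy1, hy2⟩ := hy
        have h1 : y < 0 := by
          have := lt_min_iff.1 hrε
          linarith [this.1]
        have h2 : (-1 : ℝ) < y := by
          have := lt_min_iff.1 hrε
          linarith [this.2]
        rw [huval, huval, Real.sign_of_neg h1, Real.sign_of_neg hx0,
          Real.sign_of_neg (by linarith : y - 1 < 0),
          Real.sign_of_neg (by linarith : x - 1 < 0)]
      · -- x = 0
        subst hx0
        refine ⟨1, one_pos, ?_⟩
        rintro r ⟨hr0, hr1⟩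
        rw [Real.ball_eq_Ioo, zero_sub, zero_add]
        have hu0 : u 0 = 1 := by
          rw [huval, Real.sign_zero, zero_sub, Real.sign_of_neg (by norm_num : (0:ℝ) - 1 < 0)]
          norm_num
        refine amv_aux_split (m := (0:ℝ)) (c := (-1 : ℝ)) (by linarith) (by linarith) (by ring) ?_ ?_
        · rintro y ⟨hy1, hy2⟩
          rw [huval, hu0, Real.sign_of_neg hy2, Real.sign_of_neg (by linarith : y - 1 < 0)]
          ring
        · rintro y ⟨hy1, hy2⟩
          rw [huval, hu0, Real.sign_of_pos hy1, Real.sign_of_neg (by linarith : y - 1 < 0)]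
          ring
      · rcases lt_trichotomy x 1 with hx1' | hx1' | hx1'
        · -- x ∈ (0, 1) : u is 2 near x
          refine ⟨min x (1 - x), by simp [lt_min_iff]; constructor <;> linarith, ?_⟩
          rintro r ⟨hr0, hrε⟩
          apply amv_aux_const_case
          intro y hy
          rw [Real.ball_eq_Ioo] at hy
          obtain ⟨hy1, hy2⟩ := hy
          have := lt_min_iff.1 hrε
          have h1 : 0 < y := by linarith [this.1]
          have h2 : y < 1 := by linarith [this.2]
          rw [huval, huval, Real.sign_of_pos h1, Real.sign_of_pos hx0,
            Real.sign_of_neg (by linarith : y - 1 < 0),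
            Real.sign_of_neg (by linarith : x - 1 < 0)]
        · -- x = 1
          subst hx1'
          refine ⟨1, one_pos, ?_⟩
          rintro r ⟨hr0, hr1⟩
          rw [Real.ball_eq_Ioo]
          have hu1 : u 1 = 1 := by
            rw [huval, Real.sign_one]
            norm_num [Real.sign_zero]
          refine amv_aux_split (m := (1:ℝ)) (c := (1 : ℝ)) (by linarith) (by linarith) (by ring) ?_ ?_
          · rintro y ⟨hy1, hy2⟩
            rw [huval, hu1, Real.sign_of_pos (by linarith : (0:ℝ) < y),
              Real.sign_of_neg (by linarith : y - 1 < 0)]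
            ring
          · rintro y ⟨hy1, hy2⟩
            rw [huval, hu1, Real.sign_of_pos (by linarith : (0:ℝ) < y),
              Real.sign_of_pos (by linarith : (0:ℝ) < y - 1)]
            ring
        · -- x ∈ (1, 2) : u is 0 near x
          refine ⟨min (x - 1) (2 - x), by simp [lt_min_iff]; constructor <;> linarith, ?_⟩
          rintro r ⟨hr0, hrε⟩
          apply amv_aux_const_case
          intro y hy
          rw [Real.ball_eq_Ioo] at hy
          obtain ⟨hy1, hy2⟩ := hy
          have := lt_min_iff.1 hrε
          have h1 : 1 < y := by linarith [this.1]
          rw [huval, huval, Real.sign_of_pos (by linarith : (0:ℝ) < y),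
            Real.sign_of_pos (by linarith : (0:ℝ) < x),
            Real.sign_of_pos (by linarith : (0:ℝ) < y - 1),
            Real.sign_of_pos (by linarith : (0:ℝ) < x - 1)]
    obtain ⟨ε, hε, hmain⟩ := main
    have hmem : Set.Ioo (0 : ℝ) ε ∈ 𝓝[>] (0 : ℝ) :=
      Ioo_mem_nhdsGT_of_mem ⟨le_refl 0, hε⟩
    refine Filter.Tendsto.congr' ?_ tendsto_const_nhds
    filter_upwards [hmem] with r hr
    rw [amv_aux_avg_eq_zero (hmain r hr), mul_zero]
  · -- u = 0 on {-1, 2}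
    rintro x (rfl | rfl)
    · rw [huval, Real.sign_of_neg (by norm_num : (-1 : ℝ) < 0),
        Real.sign_of_neg (by norm_num : (-1 : ℝ) - 1 < 0)]
      ring
    · rw [huval, Real.sign_of_pos (by norm_num : (0 : ℝ) < 2),
        Real.sign_of_pos (by norm_num : (0 : ℝ) < 2 - 1)]
      ring
  · exact frontier_Ioo (by norm_num)
  · -- u ≤ 2 on [-1, 2]
    intro y _
    rw [huval]
    have h1 : Real.sign y ≤ 1 := by
      rcases lt_trichotomy y 0 with h | h | h
      · rw [Real.sign_of_neg h]; norm_num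
      · rw [h, Real.sign_zero]; norm_num
      · rw [Real.sign_of_pos h]
    have h2 : -1 ≤ Real.sign (y - 1) := by
      rcases lt_trichotomy (y - 1) 0 with h | h | h
      · rw [Real.sign_of_neg h]
      · rw [h, Real.sign_zero]; norm_num
      · rw [Real.sign_of_pos h]; norm_num
    linarith
  · -- max attained at 1/2
    refine ⟨1 / 2, ⟨by norm_num, by norm_num⟩, ?_⟩
    rw [huval, Real.sign_of_pos (by norm_num : (0 : ℝ) < 1 / 2),
      Real.sign_of_neg (by norm_num : (1 : ℝ) / 2 - 1 < 0)]
    norm_num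
end

section
/- Let (X,d,μ) be a metric measure space with μ(B_r(x)) positive and finite for every ball, fix r > 0, and set w(x) := ∫_{B_r(x)} dμ(y)/μ(B_r(y)) and (T_r u)(x) := ⨍_{B_r(x)} u dμ. Then for every 1 ≤ p ≤ ∞: if u ∈ L^p(X, w μ), then T_r u ∈ L^p(X, μ) and ‖T_r u‖_{L^p(X,μ)} ≤ ‖u‖_{L^p(X, w μ)}. -/
open MeasureTheory Metric Filter Topology Real
open scoped ENNReal

private lemma avg_rpow_le_rpow_avg {α : Type*} [MeasurableSpace α] (μ : Measure α)
    {f : α → ℝ≥0∞} (hf : Measurable f) {q : ℝ} (hq : 1 ≤ q) {s : Set α}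
    (h0 : μ s ≠ 0) (ht : μ s ≠ ∞) :
    ((μ s)⁻¹ * ∫⁻ y in s, f y ∂μ) ^ q ≤ (μ s)⁻¹ * ∫⁻ y in s, f y ^ q ∂μ := by
  rcases eq_or_lt_of_le hq with h1 | h1
  · simp [← h1]
  · have hpq : q.HolderConjugate (Real.conjExponent q) := Real.HolderConjugate.conjExponent h1
    have hold := ENNReal.lintegral_mul_le_Lp_mul_Lq (μ.restrict s) hpq hf.aemeasurable
      (aemeasurable_const (b := (1 : ℝ≥0∞)))
    simp only [Pi.mul_apply, mul_one, ENNReal.one_rpow, lintegral_one,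
      Measure.restrict_apply_univ] at hold
    have h2 : (∫⁻ y in s, f y ∂μ) ^ q ≤ (∫⁻ y in s, f y ^ q ∂μ) * μ s ^ (q - 1) := by
      calc (∫⁻ y in s, f y ∂μ) ^ q
          ≤ ((∫⁻ y in s, f y ^ q ∂μ) ^ (1 / q) * μ s ^ (1 / Real.conjExponent q)) ^ q :=
            ENNReal.rpow_le_rpow hold (by linarith)
        _ = (∫⁻ y in s, f y ^ q ∂μ) * μ s ^ (q - 1) := by
            rw [ENNReal.mul_rpow_of_nonneg _ _ (by linarith), ← ENNReal.rpow_mul,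
              ← ENNReal.rpow_mul, one_div_mul_cancel hpq.ne_zero, ENNReal.rpow_one]
            congr 2
            rw [one_div, inv_mul_eq_div, hpq.div_conj_eq_sub_one]
    calc ((μ s)⁻¹ * ∫⁻ y in s, f y ∂μ) ^ q
        = (μ s)⁻¹ ^ q * (∫⁻ y in s, f y ∂μ) ^ q :=
          ENNReal.mul_rpow_of_nonneg _ _ (by linarith)
      _ ≤ (μ s)⁻¹ ^ q * ((∫⁻ y in s, f y ^ q ∂μ) * μ s ^ (q - 1)) := by gcongr
      _ = (μ s)⁻¹ * ∫⁻ y in s, f y ^ q ∂μ := by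
          rw [ENNReal.inv_rpow, ← ENNReal.rpow_neg, mul_comm ((∫⁻ y in s, f y ^ q ∂μ)),
            ← mul_assoc, ← ENNReal.rpow_add _ _ h0 ht]
          have : -q + (q - 1) = -1 := by ring
          rw [this, ENNReal.rpow_neg_one, mul_comm]


private lemma aux_secondCountable {X : Type*} [MetricSpace X] [MeasurableSpace X]
    [BorelSpace X] (μ : MeasureTheory.Measure X) [MeasureTheory.SigmaFinite μ]
    (hpos : ∀ (x : X) (ε : ℝ), 0 < ε → 0 < μ (Metric.ball x ε)) :
    SecondCountableTopology X := by
  refine Metric.secondCountable_of_almost_dense_set fun ε hε => ?_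
  have hchainub : ∀ c ⊆ {s : Set X | s.Pairwise fun a b => ε ≤ dist a b},
      IsChain (· ⊆ ·) c → ∃ ub ∈ {s : Set X | s.Pairwise fun a b => ε ≤ dist a b},
        ∀ s ∈ c, s ⊆ ub := by
    intro c hcS hchain
    refine ⟨⋃₀ c, ?_, fun t ht => Set.subset_sUnion_of_mem ht⟩
    intro a ha b hb hab
    obtain ⟨s₁, hs₁, ha₁⟩ := ha
    obtain ⟨s₂, hs₂, hb₂⟩ := hb
    rcases eq_or_ne s₁ s₂ with h | h
    · exact hcS hs₁ ha₁ (h ▸ hb₂) hab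
    · rcases hchain hs₁ hs₂ h with hsub | hsub
      · exact hcS hs₂ (hsub ha₁) hb₂ hab
      · exact hcS hs₁ ha₁ (hsub hb₂) hab
  obtain ⟨s, hsmem, hsmax⟩ :=
    zorn_subset {s : Set X | s.Pairwise fun a b => ε ≤ dist a b} hchainub
  · refine ⟨s, ?_, fun x => ?_⟩
    · -- countability of the separated set
      have hdisj : Pairwise (Function.onFun Disjoint fun y : s => Metric.ball (y : X) (ε / 2)) := by
        intro a b hab
        refine ball_disjoint_ball ?_
        have : ε ≤ dist (a : X) (b : X) := hsmem a.2 b.2 (fun h => hab (Subtype.ext h))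
        linarith
      have hcc := MeasureTheory.Measure.countable_meas_pos_of_disjoint_iUnion (μ := μ)
        (fun i : s => measurableSet_ball) hdisj
      have huniv : Set.Countable (Set.univ : Set s) := by
        refine Set.Countable.mono ?_ hcc
        intro i _
        exact hpos _ _ (by linarith)
      have : Countable s := Set.countable_univ_iff.mp huniv
      exact Set.countable_coe_iff.mp this
    · -- ε-density
      by_cases hxs : ∃ y ∈ s, dist x y ≤ ε
      · exact hxs
      · exfalso
        push_neg at hxs
        have hx_not : x ∉ s := fun hx => absurd (hxs x hx) (by
          simp only [dist_self]
          exact not_lt.mpr hε.le)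
        have hsym : Symmetric fun a b : X => ε ≤ dist a b := fun a b h => by dsimp only at h ⊢; rwa [dist_comm]
        have hins : insert x s ∈ {s : Set X | s.Pairwise fun a b => ε ≤ dist a b} := by
          rw [Set.mem_setOf_eq, haveI : Std.Symm (fun a b : X => ε ≤ dist a b) := ⟨fun a b h => hsym h⟩; Set.pairwise_insert_of_symm]
          exact ⟨hsmem, fun b hb _ => le_of_lt (hxs b hb)⟩
        have := hsmax hins (Set.subset_insert x s)
        exact hx_not (this (Set.mem_insert x s))

/-- For a metric measure space with balls of positive finite measure, `r > 0`,
`w(x) := ∫_{B_r(x)} dμ(y)/μ(B_r(y))` and `T_r u(x) := ⨍_{B_r(x)} u dμ`: for every `1 ≤ p ≤ ∞`,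
if `u ∈ L^p(X, wμ)` then `T_r u ∈ L^p(X, μ)` with `‖T_r u‖_{L^p(μ)} ≤ ‖u‖_{L^p(wμ)}`. -/
theorem averaging_operator_Lp_bound
    {X : Type*} [MetricSpace X] [MeasurableSpace X] [BorelSpace X]
    (μ : Measure X)
    (hpos : ∀ (x : X) (r : ℝ), 0 < r → 0 < μ (Metric.ball x r))
    (hfin : ∀ (x : X) (r : ℝ), μ (Metric.ball x r) < ⊤)
    (r : ℝ) (hr : 0 < r)
    (w : X → ℝ≥0∞)
    (hw : w = fun x => ∫⁻ y in Metric.ball x r, (μ (Metric.ball y r))⁻¹ ∂μ)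
    (p : ℝ≥0∞) (hp : 1 ≤ p)
    (u : X → ℝ) (hu : MemLp u p (μ.withDensity w)) :
    MemLp (fun x => ⨍ y in Metric.ball x r, u y ∂μ) p μ ∧
    eLpNorm (fun x => ⨍ y in Metric.ball x r, u y ∂μ) p μ ≤ eLpNorm u p (μ.withDensity w) := by
  rcases isEmpty_or_nonempty X with hX | hX
  · have h0 : μ = 0 := Measure.eq_zero_of_isEmpty μ
    subst h0
    have hwd : (0 : Measure X).withDensity w = 0 := by
      refine Measure.ext fun s hs => ?_
      simp [withDensity_apply _ hs]
    rw [hwd]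
    exact ⟨⟨aestronglyMeasurable_zero_measure _, by simp [eLpNorm_measure_zero]⟩,
      by simp [eLpNorm_measure_zero]⟩
  · obtain ⟨x₀⟩ := hX
    haveI : SigmaFinite μ :=
      ⟨⟨⟨fun n => ball x₀ n, fun _ => trivial, fun n => hfin x₀ n, iUnion_ball_nat x₀⟩⟩⟩
    haveI : SecondCountableTopology X := aux_secondCountable μ hpos
    have hmbne : ∀ x, μ (ball x r) ≠ 0 := fun x => (hpos x r hr).ne'
    have hmbnt : ∀ x, μ (ball x r) ≠ ⊤ := fun x => (hfin x r).ne
    set S : Set (X × X) := {p : X × X | dist p.2 p.1 < r} with hSdef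
    have hS : MeasurableSet S :=
      (isOpen_lt (continuous_snd.dist continuous_fst) continuous_const).measurableSet
    have hmb : Measurable fun x => μ (ball x r) := by
      exact measurable_measure_prodMk_left hS
    have hmbi : Measurable fun x => (μ (ball x r))⁻¹ := hmb.inv
    -- measurability of w
    have hwmeas : Measurable w := by
      rw [hw]
      have e : ∀ x, ∫⁻ y in ball x r, (μ (ball y r))⁻¹ ∂μ
          = ∫⁻ y, S.indicator (fun p : X × X => (μ (ball p.2 r))⁻¹) (x, y) ∂μ := by
        intro x
        rw [← lintegral_indicator measurableSet_ball]
        refine lintegral_congr fun y => ?_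
        by_cases h : dist y x < r <;>
          simp [Set.indicator_apply, hSdef, Set.mem_setOf_eq, mem_ball, h]
      simp_rw [e]
      exact Measurable.lintegral_prod_right' ((hmbi.comp measurable_snd).indicator hS)
    -- positivity of w
    have hwpos : ∀ x, w x ≠ 0 := by
      intro x
      rw [hw]
      have hlt : 0 < ∫⁻ y in ball x r, (μ (ball y r))⁻¹ ∂μ := by
        rw [lintegral_pos_iff_support hmbi]
        have hsupp : Function.support (fun y => (μ (ball y r))⁻¹) = Set.univ := by
          ext y
          simp only [Function.support, ne_eq, Set.mem_setOf_eq, Set.mem_univ, iff_true]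
          exact ENNReal.inv_ne_zero.mpr (hmbnt y)
        rw [hsupp, Measure.restrict_apply_univ]
        exact hpos x r hr
      exact hlt.ne'
    have hac : μ ≪ μ.withDensity w :=
      withDensity_absolutelyContinuous' hwmeas.aemeasurable (Eventually.of_forall hwpos)
    -- replace u by a strongly measurable representative g
    set g := hu.1.mk u with hgdef
    have hg : StronglyMeasurable g := hu.1.stronglyMeasurable_mk
    have hug_w : u =ᵐ[μ.withDensity w] g := hu.1.ae_eq_mk
    have hug : u =ᵐ[μ] g := hac.ae_eq hug_w
    have hu' : MemLp g p (μ.withDensity w) := hu.ae_eq hug_w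
    have hTu : (fun x => ⨍ y in ball x r, u y ∂μ) = fun x => ⨍ y in ball x r, g y ∂μ := by
      funext x
      exact average_congr (ae_restrict_of_ae hug)
    rw [hTu, eLpNorm_congr_ae hug_w]
    -- strong measurability of the averaging operator applied to g
    have hTm : StronglyMeasurable fun x => ⨍ y in ball x r, g y ∂μ := by
      have h1 : (fun x => ⨍ y in ball x r, g y ∂μ)
          = fun x => (μ (ball x r)).toReal⁻¹ •
              ∫ y, S.indicator (fun q : X × X => g q.2) (x, y) ∂μ := by
        funext x
        rw [setAverage_eq]
        congr 1
        rw [← integral_indicator measurableSet_ball]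
        refine integral_congr_ae (Eventually.of_forall fun y => ?_)
        by_cases h : dist y x < r <;>
          simp [Set.indicator_apply, hSdef, Set.mem_setOf_eq, mem_ball, h]
      rw [h1]
      exact (hmb.ennreal_toReal.inv.stronglyMeasurable).smul
        ((hg.comp_measurable measurable_snd).indicator hS).integral_prod_right'
    -- pointwise bound on the average
    have key : ∀ x, (‖⨍ y in ball x r, g y ∂μ‖₊ : ℝ≥0∞)
        ≤ (μ (ball x r))⁻¹ * ∫⁻ y in ball x r, (‖g y‖₊ : ℝ≥0∞) ∂μ := by
      intro x
      rw [setAverage_eq, measureReal_def]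
      have h1 : (‖(μ (ball x r)).toReal⁻¹ • ∫ y in ball x r, g y ∂μ‖₊ : ℝ≥0∞)
          = ENNReal.ofReal ((μ (ball x r)).toReal⁻¹) * ‖∫ y in ball x r, g y ∂μ‖₊ := by
        rw [nnnorm_smul, ENNReal.coe_mul, ← enorm_eq_nnnorm, Real.enorm_eq_ofReal (by positivity)]
      have h2 : ENNReal.ofReal ((μ (ball x r)).toReal⁻¹) = (μ (ball x r))⁻¹ := by
        rw [ENNReal.ofReal_inv_of_pos (ENNReal.toReal_pos (hmbne x) (hmbnt x)),
          ENNReal.ofReal_toReal (hmbnt x)]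
      rw [h1, h2]
      exact mul_le_mul_right (enorm_integral_le_lintegral_enorm _) _
    rcases eq_or_ne p ∞ with hptop | hptop
    · -- case p = ∞
      subst hptop
      have hMg : eLpNorm (fun x => ⨍ y in ball x r, g y ∂μ) ∞ μ ≤ eLpNormEssSup g μ := by
        rw [eLpNorm_exponent_top, eLpNormEssSup]
        refine essSup_le_of_ae_le _ (Filter.Eventually.of_forall fun x => ?_)
        refine (key x).trans ?_
        have hb : ∫⁻ y in ball x r, (‖g y‖₊ : ℝ≥0∞) ∂μ ≤ eLpNormEssSup g μ * μ (ball x r) := by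
          calc ∫⁻ y in ball x r, (‖g y‖₊ : ℝ≥0∞) ∂μ
              ≤ ∫⁻ _ in ball x r, eLpNormEssSup g μ ∂μ :=
                lintegral_mono_ae (ae_restrict_of_ae (enorm_ae_le_eLpNormEssSup g μ))
            _ = eLpNormEssSup g μ * μ (ball x r) := by rw [setLIntegral_const]
        calc (μ (ball x r))⁻¹ * ∫⁻ y in ball x r, (‖g y‖₊ : ℝ≥0∞) ∂μ
            ≤ (μ (ball x r))⁻¹ * (eLpNormEssSup g μ * μ (ball x r)) := mul_le_mul_right hb _
          _ = eLpNormEssSup g μ := by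
              rw [mul_comm (eLpNormEssSup g μ), ← mul_assoc,
                ENNReal.inv_mul_cancel (hmbne x) (hmbnt x), one_mul]
      have hfinal : eLpNorm (fun x => ⨍ y in ball x r, g y ∂μ) ∞ μ
          ≤ eLpNorm g ∞ (μ.withDensity w) := by
        refine hMg.trans ?_
        rw [eLpNorm_exponent_top]
        exact eLpNormEssSup_mono_measure g hac
      exact ⟨⟨hTm.aestronglyMeasurable, lt_of_le_of_lt hfinal hu'.2⟩, hfinal⟩
    · -- case p < ∞
      have hp0 : p ≠ 0 := (lt_of_lt_of_le zero_lt_one hp).ne'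
      have hq1 : 1 ≤ p.toReal := by
        have := ENNReal.toReal_mono hptop hp
        simpa using this
      set q := p.toReal with hqdef
      set f : X → ℝ≥0∞ := fun y => (‖g y‖₊ : ℝ≥0∞) ^ q with hfdef
      have fmeas : Measurable f := hg.measurable.enorm.pow_const q
      have step1 : ∫⁻ x, (‖⨍ y in ball x r, g y ∂μ‖₊ : ℝ≥0∞) ^ q ∂μ
          ≤ ∫⁻ x, (μ (ball x r))⁻¹ * ∫⁻ y in ball x r, f y ∂μ ∂μ := by
        refine lintegral_mono fun x => ?_
        calc (‖⨍ y in ball x r, g y ∂μ‖₊ : ℝ≥0∞) ^ q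
            ≤ ((μ (ball x r))⁻¹ * ∫⁻ y in ball x r, (‖g y‖₊ : ℝ≥0∞) ∂μ) ^ q :=
              ENNReal.rpow_le_rpow (key x) (by linarith)
          _ ≤ _ := avg_rpow_le_rpow_avg μ hg.measurable.enorm hq1 (hmbne x) (hmbnt x)
      have hKmeas : Measurable fun p : X × X =>
          S.indicator (fun p : X × X => (μ (ball p.1 r))⁻¹ * f p.2) p :=
        ((hmbi.comp measurable_fst).mul (fmeas.comp measurable_snd)).indicator hS
      have step2 : ∫⁻ x, (μ (ball x r))⁻¹ * ∫⁻ y in ball x r, f y ∂μ ∂μ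
          = ∫⁻ y, f y * w y ∂μ := by
        have e1 : ∀ x, (μ (ball x r))⁻¹ * ∫⁻ y in ball x r, f y ∂μ
            = ∫⁻ y, S.indicator (fun p : X × X => (μ (ball p.1 r))⁻¹ * f p.2) (x, y) ∂μ := by
          intro x
          rw [← lintegral_const_mul _ fmeas, ← lintegral_indicator measurableSet_ball]
          refine lintegral_congr fun y => ?_
          by_cases h : dist y x < r <;>
            simp [Set.indicator_apply, hSdef, Set.mem_setOf_eq, mem_ball, h]
        simp_rw [e1]
        rw [lintegral_lintegral_swap
          (f := fun x y => S.indicator (fun p : X × X => (μ (ball p.1 r))⁻¹ * f p.2) (x, y))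
          hKmeas.aemeasurable]
        refine lintegral_congr fun y => ?_
        have e2 : (fun x => S.indicator (fun p : X × X => (μ (ball p.1 r))⁻¹ * f p.2) (x, y))
            = (ball y r).indicator (fun x => (μ (ball x r))⁻¹ * f y) := by
          funext x
          by_cases h : dist x y < r
          · rw [Set.indicator_of_mem (show (x, y) ∈ S by
                simpa [hSdef, Set.mem_setOf_eq, dist_comm] using h),
              Set.indicator_of_mem (mem_ball.mpr h)]
          · rw [Set.indicator_of_notMem (show (x, y) ∉ S from fun hc => h (by
                simpa [hSdef, Set.mem_setOf_eq, dist_comm] using hc)),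
              Set.indicator_of_notMem (fun hc => h (mem_ball.mp hc))]
        rw [e2, lintegral_indicator measurableSet_ball, lintegral_mul_const _ hmbi, hw, mul_comm]
      have step3 : ∫⁻ y, f y * w y ∂μ = ∫⁻ y, f y ∂(μ.withDensity w) := by
        rw [lintegral_withDensity_eq_lintegral_mul μ hwmeas fmeas]
        exact lintegral_congr fun y => (mul_comm _ _)
      have hsnorm : eLpNorm (fun x => ⨍ y in ball x r, g y ∂μ) p μ
          ≤ eLpNorm g p (μ.withDensity w) := by
        rw [eLpNorm_eq_lintegral_rpow_enorm_toReal hp0 hptop,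
          eLpNorm_eq_lintegral_rpow_enorm_toReal hp0 hptop]
        refine ENNReal.rpow_le_rpow ?_ (by positivity)
        exact le_trans step1 (le_of_eq (step2.trans step3))
      exact ⟨⟨hTm.aestronglyMeasurable, lt_of_le_of_lt hsnorm hu'.2⟩, hsnorm⟩
end

section
/- Let (X,d,μ) be a metric measure space with μ(B_r(x)) positive and finite for every ball, fix r > 0, and set w(x) := ∫_{B_r(x)} dμ(y)/μ(B_r(y)). Then for every 1 ≤ p ≤ ∞: if u ∈ L^p(X,μ) ∩ L^p(X, w μ), then Δ_{μ,r} u ∈ L^p(X,μ) and ‖Δ_{μ,r} u‖_{L^p(X,μ)} ≤ r^{-2} (‖u‖_{L^p(X,μ)} + ‖u‖_{L^p(X, w μ)}). -/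
open MeasureTheory Metric Filter Topology Real
open scoped ENNReal

private lemma amv_secondCountable {X : Type*} [MetricSpace X] [MeasurableSpace X]
    [BorelSpace X] (μ : Measure X) [SigmaFinite μ]
    (hpos : ∀ (x : X) (ε : ℝ), 0 < ε → 0 < μ (Metric.ball x ε)) :
    SecondCountableTopology X := by
  apply Metric.secondCountable_of_almost_dense_set
  intro ε hε
  set S : Set (Set X) := {s | s.Pairwise fun a b => ε ≤ dist a b} with hS
  obtain ⟨s, hsS, hmax⟩ : ∃ s, s ∈ S ∧ ∀ t ∈ S, s ⊆ t → t ⊆ s := by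
    have hchains : ∀ c ⊆ S, IsChain (· ⊆ ·) c → ∃ ub ∈ S, ∀ t ∈ c, t ⊆ ub := by
      intro c hcS hchain
      refine ⟨⋃₀ c, ?_, fun t ht => Set.subset_sUnion_of_mem ht⟩
      intro a ha b hb hab
      obtain ⟨ta, hta, hat⟩ := ha
      obtain ⟨tb, htb, hbt⟩ := hb
      rcases hchain.total hta htb with h | h
      · exact hcS htb (h hat) hbt hab
      · exact hcS hta hat (h hbt) hab
    obtain ⟨s, hs⟩ := zorn_subset S hchains
    exact ⟨s, hs.1, fun t ht hst => hs.2 ht hst⟩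
  refine ⟨s, ?_, ?_⟩
  · -- countability of the maximal separated set
    have hdisj : Pairwise (Function.onFun Disjoint fun a : s => Metric.ball (a : X) (ε / 2)) := by
      intro a b hab
      have hd : ε / 2 + ε / 2 ≤ dist (a : X) b := by
        have := hsS a.2 b.2 (fun h => hab (Subtype.ext h))
        linarith
      exact ball_disjoint_ball hd
    have hc := Measure.countable_meas_pos_of_disjoint_iUnion
      (μ := μ) (fun a : s => measurableSet_ball) hdisj
    have huniv : (Set.univ : Set s).Countable := by
      refine hc.mono fun a _ => ?_
      exact hpos _ _ (by linarith)
    have : Countable s := Set.countable_univ_iff.mp huniv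
    exact Set.countable_coe_iff.mp this
  · intro x
    by_cases hx : ∃ y ∈ s, dist x y ≤ ε
    · exact hx
    push_neg at hx
    have hxs : x ∉ s := by
      intro h
      have := hx x h
      rw [dist_self] at this
      linarith
    have hins : insert x s ∈ S := by
      intro a ha b hb hab
      rcases ha with rfl | ha
      · rcases hb with rfl | hb
        · exact absurd rfl hab
        · exact (hx b hb).le
      · rcases hb with rfl | hb
        · rw [dist_comm]; exact (hx a ha).le
        · exact hsS ha hb hab
    exact absurd (hmax _ hins (Set.subset_insert x s) (Set.mem_insert x s)) hxs

private lemma amv_jensen {X : Type*} [MeasurableSpace X] (μ : Measure X) (B : Set X)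
    (hB0 : μ B ≠ 0) (hBt : μ B ≠ ∞) (v : X → ℝ≥0∞) (hv : AEMeasurable v (μ.restrict B))
    (q : ℝ) (hq : 1 ≤ q) :
    ((μ B)⁻¹ * ∫⁻ y in B, v y ∂μ) ^ q ≤ (μ B)⁻¹ * ∫⁻ y in B, v y ^ q ∂μ := by
  rcases eq_or_lt_of_le hq with hq1 | hq1
  · simp [← hq1]
  have hq0 : 0 < q := lt_trans one_pos hq1
  have hpq : q.HolderConjugate (q / (q - 1)) := Real.HolderConjugate.conjExponent hq1
  have hone : AEMeasurable (fun _ : X => (1 : ℝ≥0∞)) (μ.restrict B) := aemeasurable_const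
  have hHolder := ENNReal.lintegral_mul_le_Lp_mul_Lq (μ.restrict B) hpq hv hone
  simp only [mul_one, ENNReal.one_rpow, Pi.mul_apply, Pi.one_apply] at hHolder
  -- ∫ v ≤ (∫ v^q)^(1/q) * (μ B)^(1/q')
  have hconst : ∫⁻ _ in B, (1 : ℝ≥0∞) ∂μ = μ B := by simp
  rw [hconst] at hHolder
  have key : (∫⁻ y in B, v y ∂μ) ^ q ≤ (∫⁻ y in B, v y ^ q ∂μ) * μ B ^ (q - 1) := by
    calc (∫⁻ y in B, v y ∂μ) ^ q
        ≤ ((∫⁻ y in B, v y ^ q ∂μ) ^ (1 / q) * μ B ^ (1 / (q / (q - 1)))) ^ q :=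
          ENNReal.rpow_le_rpow hHolder hq0.le
      _ = (∫⁻ y in B, v y ^ q ∂μ) * μ B ^ (q - 1) := by
          rw [ENNReal.mul_rpow_of_nonneg _ _ hq0.le, ← ENNReal.rpow_mul, ← ENNReal.rpow_mul,
            one_div_mul_cancel hq0.ne', ENNReal.rpow_one]
          congr 1
          rw [one_div, div_eq_mul_inv, mul_inv, inv_inv, inv_mul_eq_div, div_mul_eq_mul_div,
            mul_div_assoc, div_self hq0.ne', mul_one]
  calc ((μ B)⁻¹ * ∫⁻ y in B, v y ∂μ) ^ q
      = (μ B)⁻¹ ^ q * (∫⁻ y in B, v y ∂μ) ^ q := ENNReal.mul_rpow_of_nonneg _ _ hq0.le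
    _ ≤ (μ B)⁻¹ ^ q * ((∫⁻ y in B, v y ^ q ∂μ) * μ B ^ (q - 1)) :=
        mul_le_mul_right key _
    _ = (μ B)⁻¹ * ∫⁻ y in B, v y ^ q ∂μ := by
        rw [ENNReal.inv_rpow, ← ENNReal.rpow_neg, mul_comm ((∫⁻ y in B, v y ^ q ∂μ)) (μ B ^ (q - 1)),
          ← mul_assoc, ← ENNReal.rpow_add _ _ hB0 hBt]
        have h1 : -q + (q - 1) = -1 := by ring
        rw [h1, ENNReal.rpow_neg_one]

/-- For a metric measure space with balls of positive finite measure, `r > 0` and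
`w(x) := ∫_{B_r(x)} dμ(y)/μ(B_r(y))`: for every `1 ≤ p ≤ ∞`, if `u ∈ L^p(X,μ) ∩ L^p(X,wμ)` then
`Δ_{μ,r} u ∈ L^p(X,μ)` and `‖Δ_{μ,r} u‖_{L^p(μ)} ≤ r⁻² (‖u‖_{L^p(μ)} + ‖u‖_{L^p(wμ)})`. -/
theorem amv_r_laplacian_Lp_bound
    {X : Type*} [MetricSpace X] [MeasurableSpace X] [BorelSpace X]
    (μ : Measure X)
    (hpos : ∀ (x : X) (r : ℝ), 0 < r → 0 < μ (Metric.ball x r))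
    (hfin : ∀ (x : X) (r : ℝ), μ (Metric.ball x r) < ⊤)
    (r : ℝ) (hr : 0 < r)
    (w : X → ℝ≥0∞)
    (hw : w = fun x => ∫⁻ y in Metric.ball x r, (μ (Metric.ball y r))⁻¹ ∂μ)
    (p : ℝ≥0∞) (hp : 1 ≤ p)
    (u : X → ℝ) (hu : MemLp u p μ) (hu' : MemLp u p (μ.withDensity w)) :
    MemLp (fun x => (1 / r ^ 2) * ⨍ y in Metric.ball x r, (u y - u x) ∂μ) p μ ∧
    eLpNorm (fun x => (1 / r ^ 2) * ⨍ y in Metric.ball x r, (u y - u x) ∂μ) p μ ≤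
      ENNReal.ofReal (1 / r ^ 2) * (eLpNorm u p μ + eLpNorm u p (μ.withDensity w)) := by
  rcases isEmpty_or_nonempty X with hX | hX
  · have hμ : μ = 0 := by
      ext s hs
      rw [Set.eq_empty_of_isEmpty s]
      simp
    constructor
    · rw [hμ]
      exact ⟨aestronglyMeasurable_zero_measure _, by simp [eLpNorm_measure_zero]⟩
    · simp [hμ, eLpNorm_measure_zero]
  haveI : SigmaFinite μ := by
    obtain ⟨x₀⟩ := hX
    refine ⟨⟨⟨fun n => Metric.ball x₀ n, fun _ => trivial, fun n => hfin x₀ n, ?_⟩⟩⟩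
    ext x
    simp only [Set.mem_iUnion, Metric.mem_ball, Set.mem_univ, iff_true]
    obtain ⟨n, hn⟩ := exists_nat_gt (dist x x₀)
    exact ⟨n, hn⟩
  haveI : SecondCountableTopology X := amv_secondCountable μ hpos
  have hb0 : ∀ x : X, μ (Metric.ball x r) ≠ 0 := fun x => (hpos x r hr).ne'
  have hbt : ∀ x : X, μ (Metric.ball x r) ≠ ∞ := fun x => (hfin x r).ne
  have hO : MeasurableSet {q : X × X | dist q.1 q.2 < r} :=
    (isOpen_lt (continuous_fst.dist continuous_snd) continuous_const).measurableSet
  -- measurability of x ↦ μ (ball x r)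
  have mball : Measurable fun x : X => μ (Metric.ball x r) := by
    have h1 : Measurable fun q : X × X =>
        {q : X × X | dist q.1 q.2 < r}.indicator (fun _ => (1 : ℝ≥0∞)) q :=
      measurable_const.indicator hO
    have heq : (fun x : X => μ (Metric.ball x r)) = fun x =>
        ∫⁻ y, {q : X × X | dist q.1 q.2 < r}.indicator (fun _ => (1 : ℝ≥0∞)) (x, y) ∂μ := by
      funext x
      have h2 : (fun y => {q : X × X | dist q.1 q.2 < r}.indicator (fun _ => (1 : ℝ≥0∞)) (x, y))
          = (Metric.ball x r).indicator fun _ => (1 : ℝ≥0∞) := by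
        funext y
        by_cases h : dist y x < r <;>
          simp [Set.indicator_apply, Metric.mem_ball, dist_comm x y, h]
      rw [h2, lintegral_indicator measurableSet_ball]
      simp
    rw [heq]
    exact Measurable.lintegral_prod_right h1
  have minv : Measurable fun y : X => (μ (Metric.ball y r))⁻¹ := mball.inv
  have mw : Measurable w := by
    rw [hw]
    have h1 : Measurable fun q : X × X => {q : X × X | dist q.1 q.2 < r}.indicator
        (fun q : X × X => (μ (Metric.ball q.2 r))⁻¹) q :=
      (minv.comp measurable_snd).indicator hO
    have heq : (fun x => ∫⁻ y in Metric.ball x r, (μ (Metric.ball y r))⁻¹ ∂μ) = fun x =>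
        ∫⁻ y, {q : X × X | dist q.1 q.2 < r}.indicator
          (fun q : X × X => (μ (Metric.ball q.2 r))⁻¹) (x, y) ∂μ := by
      funext x
      have h2 : (fun y => {q : X × X | dist q.1 q.2 < r}.indicator
          (fun q : X × X => (μ (Metric.ball q.2 r))⁻¹) (x, y))
          = (Metric.ball x r).indicator fun y => (μ (Metric.ball y r))⁻¹ := by
        funext y
        by_cases h : dist y x < r <;>
          simp [Set.indicator_apply, Metric.mem_ball, dist_comm x y, h]
      rw [h2, lintegral_indicator measurableSet_ball]
    rw [heq]
    exact Measurable.lintegral_prod_right h1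
  have hwpos : ∀ x, w x ≠ 0 := by
    intro x h0
    rw [hw] at h0
    have hminv : AEMeasurable (fun y : X => (μ (Metric.ball y r))⁻¹)
        (μ.restrict (Metric.ball x r)) := minv.aemeasurable
    rw [lintegral_eq_zero_iff' hminv] at h0
    have hne : ∀ y : X, (μ (Metric.ball y r))⁻¹ ≠ 0 :=
      fun y => ENNReal.inv_ne_zero.mpr (hbt y)
    have h2 := ae_iff.mp h0
    rw [show {a : X | ¬(fun y : X => (μ (Metric.ball y r))⁻¹) a = (0 : X → ℝ≥0∞) a} = Set.univ
        from Set.eq_univ_of_forall fun a => hne a] at h2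
    rw [Measure.restrict_apply_univ] at h2
    exact hb0 x h2
  have hac1 : μ.withDensity w ≪ μ := withDensity_absolutelyContinuous μ w
  have hac2 : μ ≪ μ.withDensity w :=
    withDensity_absolutelyContinuous' mw.aemeasurable (Eventually.of_forall hwpos)
  obtain ⟨g, gsm, hug⟩ := hu.1
  have gm : Measurable g := gsm.measurable
  have hug' : u =ᵐ[μ.withDensity w] g := hug.filter_mono hac1.ae_le
  set T : X → ℝ := fun x => ⨍ y in Metric.ball x r, g y ∂μ with hT
  -- pointwise identity
  have hint : ∀ x : X, IntegrableOn u (Metric.ball x r) μ := by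
    intro x
    haveI : IsFiniteMeasure (μ.restrict (Metric.ball x r)) :=
      ⟨by rw [Measure.restrict_apply_univ]; exact hfin x r⟩
    exact (hu.restrict _).integrable hp
  have hfeq : (fun x => (1 / r ^ 2) * ⨍ y in Metric.ball x r, (u y - u x) ∂μ)
      = fun x => (1 / r ^ 2) * (T x - u x) := by
    funext x
    congr 1
    have hIg : ∫ y in Metric.ball x r, u y ∂μ = ∫ y in Metric.ball x r, g y ∂μ :=
      integral_congr_ae (ae_restrict_of_ae hug)
    have htR : ((μ (Metric.ball x r)).toReal) ≠ 0 := ENNReal.toReal_ne_zero.mpr ⟨hb0 x, hbt x⟩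
    simp only [hT]
    rw [setAverage_eq, setAverage_eq,
      integral_sub (hint x) (integrableOn_const (hfin x r).ne), hIg,
      setIntegral_const, measureReal_def, smul_sub, smul_smul, inv_mul_cancel₀ htR, one_smul]
  -- measurability of T
  have mT : StronglyMeasurable T := by
    have h1 : StronglyMeasurable fun q : X × X =>
        {q : X × X | dist q.1 q.2 < r}.indicator (fun q : X × X => g q.2) q :=
      ((gm.comp measurable_snd).indicator hO).stronglyMeasurable
    have h2 := MeasureTheory.StronglyMeasurable.integral_prod_right' (ν := μ) h1
    have h3 : StronglyMeasurable fun x : X => ((μ (Metric.ball x r)).toReal)⁻¹ :=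
      (mball.ennreal_toReal.inv).stronglyMeasurable
    have heq : T = fun x => ((μ (Metric.ball x r)).toReal)⁻¹ •
        ∫ y, {q : X × X | dist q.1 q.2 < r}.indicator (fun q : X × X => g q.2) (x, y) ∂μ := by
      funext x
      simp only [hT]
      rw [setAverage_eq]
      congr 1
      have h4 : (fun y => {q : X × X | dist q.1 q.2 < r}.indicator
          (fun q : X × X => g q.2) (x, y)) = (Metric.ball x r).indicator g := by
        funext y
        by_cases h : dist y x < r <;>
          simp [Set.indicator_apply, Metric.mem_ball, dist_comm x y, h]
      rw [h4, integral_indicator measurableSet_ball]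
    rw [heq]
    exact h3.smul h2
  -- pointwise norm bound for T
  have hTptw : ∀ x : X, (‖T x‖₊ : ℝ≥0∞) ≤
      (μ (Metric.ball x r))⁻¹ * ∫⁻ y in Metric.ball x r, (‖g y‖₊ : ℝ≥0∞) ∂μ := by
    intro x
    simp only [hT]
    rw [setAverage_eq, measureReal_def]
    have h1 : (‖((μ (Metric.ball x r)).toReal)⁻¹ • ∫ y in Metric.ball x r, g y ∂μ‖₊ : ℝ≥0∞)
        = (‖((μ (Metric.ball x r)).toReal)⁻¹‖₊ : ℝ≥0∞) *
          (‖∫ y in Metric.ball x r, g y ∂μ‖₊ : ℝ≥0∞) := by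
      rw [nnnorm_smul]; push_cast; ring
    rw [h1]
    have h2 : (‖((μ (Metric.ball x r)).toReal)⁻¹‖₊ : ℝ≥0∞) = (μ (Metric.ball x r))⁻¹ := by
      rw [← enorm_eq_nnnorm, Real.enorm_eq_ofReal (by positivity), ENNReal.ofReal_inv_of_pos
        (ENNReal.toReal_pos (hb0 x) (hbt x)), ENNReal.ofReal_toReal (hbt x)]
    rw [h2]
    exact mul_le_mul_right (enorm_integral_le_lintegral_enorm _) _
  -- key estimate: eLpNorm T p μ ≤ eLpNorm g p (μ.withDensity w)
  have hTle : eLpNorm T p μ ≤ eLpNorm g p (μ.withDensity w) := by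
    by_cases hptop : p = ∞
    · subst hptop
      rw [eLpNorm_exponent_top, eLpNorm_exponent_top]
      by_cases hCtop : eLpNormEssSup g μ = ∞
      · refine le_trans ?_ (eLpNormEssSup_mono_measure g hac2)
        rw [hCtop]; exact le_top
      have hC := enorm_ae_le_eLpNormEssSup g μ
      have hTb : ∀ x, (‖T x‖₊ : ℝ≥0∞) ≤ eLpNormEssSup g μ := by
        intro x
        refine le_trans (hTptw x) ?_
        have h3 : ∫⁻ y in Metric.ball x r, (‖g y‖₊ : ℝ≥0∞) ∂μ ≤
            eLpNormEssSup g μ * μ (Metric.ball x r) := by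
          refine le_trans (lintegral_mono_ae (ae_restrict_of_ae hC)) ?_
          rw [setLIntegral_const]
        calc (μ (Metric.ball x r))⁻¹ * ∫⁻ y in Metric.ball x r, (‖g y‖₊ : ℝ≥0∞) ∂μ
            ≤ (μ (Metric.ball x r))⁻¹ * (eLpNormEssSup g μ * μ (Metric.ball x r)) :=
              mul_le_mul_right h3 _
          _ = eLpNormEssSup g μ := by
              rw [mul_comm (eLpNormEssSup g μ), ← mul_assoc,
                ENNReal.inv_mul_cancel (hb0 x) (hbt x), one_mul]
      refine le_trans ?_ (eLpNormEssSup_mono_measure g hac2)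
      exact essSup_le_of_ae_le _ (Eventually.of_forall hTb)
    -- finite p
    have hp0 : p ≠ 0 := (lt_of_lt_of_le one_pos hp).ne'
    set t := p.toReal with ht
    have ht1 : 1 ≤ t := by
      rw [ht, ← ENNReal.toReal_one]
      exact ENNReal.toReal_mono hptop hp
    have ht0 : 0 < t := lt_of_lt_of_le one_pos ht1
    have hvq : Measurable fun y : X => (‖g y‖₊ : ℝ≥0∞) ^ t := gm.enorm.pow_const t
    have hvq_ne_top : ∀ y : X, (‖g y‖₊ : ℝ≥0∞) ^ t ≠ ∞ := fun y =>
      (ENNReal.rpow_lt_top_of_nonneg ht0.le ENNReal.coe_ne_top).ne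
    have hptw : ∀ x : X, (‖T x‖₊ : ℝ≥0∞) ^ t ≤
        (μ (Metric.ball x r))⁻¹ * ∫⁻ y in Metric.ball x r, (‖g y‖₊ : ℝ≥0∞) ^ t ∂μ := by
      intro x
      refine le_trans (ENNReal.rpow_le_rpow (hTptw x) ht0.le) ?_
      exact amv_jensen μ _ (hb0 x) (hbt x) _ gm.enorm.aemeasurable t ht1
    rw [eLpNorm_eq_lintegral_rpow_enorm_toReal hp0 hptop,
      eLpNorm_eq_lintegral_rpow_enorm_toReal hp0 hptop]
    refine ENNReal.rpow_le_rpow ?_ (by positivity)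
    set Φ : X → X → ℝ≥0∞ := fun x y => {q : X × X | dist q.1 q.2 < r}.indicator
      (fun q : X × X => (μ (Metric.ball q.1 r))⁻¹ * (‖g q.2‖₊ : ℝ≥0∞) ^ t) (x, y) with hΦ
    have hΦm : Measurable fun q : X × X => Φ q.1 q.2 := by
      simp only [hΦ]
      exact ((minv.comp measurable_fst).mul
        (hvq.comp measurable_snd)).indicator hO
    have hstep1 : ∀ x : X, ∫⁻ y, Φ x y ∂μ =
        (μ (Metric.ball x r))⁻¹ * ∫⁻ y in Metric.ball x r, (‖g y‖₊ : ℝ≥0∞) ^ t ∂μ := by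
      intro x
      have h4 : Φ x = (Metric.ball x r).indicator
          fun y => (μ (Metric.ball x r))⁻¹ * (‖g y‖₊ : ℝ≥0∞) ^ t := by
        funext y
        simp only [hΦ]
        by_cases h : dist y x < r <;>
          simp [Set.indicator_apply, Metric.mem_ball, dist_comm x y, h]
      rw [h4, lintegral_indicator measurableSet_ball,
        lintegral_const_mul' _ _ (ENNReal.inv_ne_top.mpr (hb0 x))]
    have hstep2 : ∀ y : X, ∫⁻ x, Φ x y ∂μ = w y * (‖g y‖₊ : ℝ≥0∞) ^ t := by
      intro y
      have h4 : (fun x => Φ x y) = (Metric.ball y r).indicator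
          fun x => (μ (Metric.ball x r))⁻¹ * (‖g y‖₊ : ℝ≥0∞) ^ t := by
        funext x
        simp only [hΦ]
        by_cases h : dist x y < r <;>
          simp [Set.indicator_apply, Metric.mem_ball, h]
      rw [h4, lintegral_indicator measurableSet_ball,
        lintegral_mul_const' _ _ (hvq_ne_top y), hw, mul_comm]
    calc ∫⁻ x, (‖T x‖₊ : ℝ≥0∞) ^ t ∂μ
        ≤ ∫⁻ x, (μ (Metric.ball x r))⁻¹ *
            ∫⁻ y in Metric.ball x r, (‖g y‖₊ : ℝ≥0∞) ^ t ∂μ ∂μ := lintegral_mono hptw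
      _ = ∫⁻ x, ∫⁻ y, Φ x y ∂μ ∂μ := by
          refine lintegral_congr fun x => ?_
          rw [hstep1 x]
      _ = ∫⁻ y, ∫⁻ x, Φ x y ∂μ ∂μ := lintegral_lintegral_swap hΦm.aemeasurable
      _ = ∫⁻ y, w y * (‖g y‖₊ : ℝ≥0∞) ^ t ∂μ := by
          refine lintegral_congr fun y => ?_
          rw [hstep2 y]
      _ = ∫⁻ y, (‖g y‖₊ : ℝ≥0∞) ^ t ∂(μ.withDensity w) := by
          rw [lintegral_withDensity_eq_lintegral_mul μ mw hvq]
          rfl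
  -- assemble
  have hgw : eLpNorm g p (μ.withDensity w) = eLpNorm u p (μ.withDensity w) :=
    eLpNorm_congr_ae hug'.symm
  have hTle' : eLpNorm T p μ ≤ eLpNorm u p (μ.withDensity w) := hgw ▸ hTle
  have hAE : AEStronglyMeasurable (fun x => T x - u x) μ :=
    mT.aestronglyMeasurable.sub hu.1
  have hbound : eLpNorm (fun x => (1 / r ^ 2) * (T x - u x)) p μ ≤
      ENNReal.ofReal (1 / r ^ 2) * (eLpNorm u p μ + eLpNorm u p (μ.withDensity w)) := by
    have h1 : (fun x => (1 / r ^ 2) * (T x - u x))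
        = (1 / r ^ 2 : ℝ) • fun x => T x - u x := by
      funext x; simp [smul_eq_mul]
    rw [h1, eLpNorm_const_smul]
    have h2 : eLpNorm (fun x => T x - u x) p μ ≤
        eLpNorm u p (μ.withDensity w) + eLpNorm u p μ :=
      le_trans (eLpNorm_sub_le mT.aestronglyMeasurable hu.1 hp) (add_le_add hTle' le_rfl)
    have h3 : ((‖(1 / r ^ 2 : ℝ)‖₊ : ℝ≥0∞)) = ENNReal.ofReal (1 / r ^ 2) :=
      Real.enorm_eq_ofReal (by positivity)
    calc (‖(1 / r ^ 2 : ℝ)‖₊ : ℝ≥0∞) • eLpNorm (fun x => T x - u x) p μ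
        = ENNReal.ofReal (1 / r ^ 2) * eLpNorm (fun x => T x - u x) p μ := by
          rw [← h3]; rfl
      _ ≤ ENNReal.ofReal (1 / r ^ 2) *
            (eLpNorm u p (μ.withDensity w) + eLpNorm u p μ) := mul_le_mul_right h2 _
      _ = ENNReal.ofReal (1 / r ^ 2) *
            (eLpNorm u p μ + eLpNorm u p (μ.withDensity w)) := by rw [add_comm]
  rw [hfeq]
  refine ⟨⟨hAE.const_mul _, ?_⟩, hbound⟩
  refine lt_of_le_of_lt hbound ?_
  exact ENNReal.mul_lt_top ENNReal.ofReal_lt_top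
    (ENNReal.add_lt_top.mpr ⟨hu.2, hu'.2⟩)
end
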